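/- arXiv:2602.13883 — 3 statements merged into one kernel-verified Lean document; each statement's English description precedes it below -/
import Mathlib

section
/- Let n ≥ 1, i ∈ {1,…,n}, and U ⊆ [0,1]^n an open set (in the subspace topology) that separates the i-th opposite faces of [0,1]^n. Then there exists a compact path-connected subset S ⊆ U that separates the i-th opposite faces of [0,1]^n. -/
def unitCube (n : ℕ) : Set (Fin n → ℝ) := Set.Icc 0 1

def face (n : ℕ) (i : Fin n) (v : ℝ) : Set (Fin n → ℝ) := {x ∈ unitCube n | x i = v}

/-- `A` connects the `i`-th opposite faces of the unit cube: some connected subset of `A`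
meets both faces. -/
def Connects (n : ℕ) (i : Fin n) (A : Set (Fin n → ℝ)) : Prop :=
  ∃ S ⊆ A, IsPreconnected S ∧ (S ∩ face n i 0).Nonempty ∧ (S ∩ face n i 1).Nonempty

/-- `A` separates the `i`-th opposite faces of the unit cube. -/
def Separates (n : ℕ) (i : Fin n) (A : Set (Fin n → ℝ)) : Prop :=
  ¬ Connects n i (unitCube n \ A)

/-- `U` is open in the subspace topology of the unit cube. -/
def OpenInCube (n : ℕ) (U : Set (Fin n → ℝ)) : Prop :=
  ∃ V : Set (Fin n → ℝ), IsOpen V ∧ U = V ∩ unitCube n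

namespace Stmt11Aux

abbrev Cell (n m : ℕ) := Fin n → Fin m

def Adj {n m : ℕ} (c c' : Cell n m) : Prop :=
  ∀ t, (c t : ℕ) ≤ (c' t : ℕ) + 1 ∧ (c' t : ℕ) ≤ (c t : ℕ) + 1

lemma Adj.symm {n m : ℕ} {c c' : Cell n m} (h : Adj c c') : Adj c' c :=
  fun t => ⟨(h t).2, (h t).1⟩

lemma adj_refl {n m : ℕ} (c : Cell n m) : Adj c c :=
  fun t => ⟨Nat.le_succ _, Nat.le_succ _⟩

def gcube {n : ℕ} (m : ℕ) (c : Cell n m) : Set (Fin n → ℝ) :=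
  Set.Icc (fun t => (c t : ℕ) / (m : ℝ)) (fun t => ((c t : ℕ) + 1) / (m : ℝ))

lemma mem_gcube {n m : ℕ} {c : Cell n m} {x : Fin n → ℝ} :
    x ∈ gcube m c ↔ ∀ t, ((c t : ℕ) : ℝ) / m ≤ x t ∧ x t ≤ (((c t : ℕ) : ℝ) + 1) / m := by
  simp only [gcube, Set.mem_Icc, Pi.le_def]
  constructor
  · rintro ⟨h1, h2⟩ t; exact ⟨h1 t, h2 t⟩
  · intro h; exact ⟨fun t => (h t).1, fun t => (h t).2⟩

lemma gcube_subset_unitCube {n m : ℕ} [NeZero m] (c : Cell n m) :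
    gcube m c ⊆ Set.Icc (0 : Fin n → ℝ) 1 := by
  have hm : (0:ℝ) < m := by
    have := Nat.pos_of_ne_zero (NeZero.ne m); exact_mod_cast this
  intro x hx
  rw [mem_gcube] at hx
  constructor <;> (rw [Pi.le_def]; intro t)
  · have := (hx t).1
    have h0 : (0:ℝ) ≤ ((c t : ℕ) : ℝ) / m := by positivity
    exact le_trans h0 this
  · have := (hx t).2
    have hle : (((c t : ℕ) : ℝ) + 1) / m ≤ 1 := by
      rw [div_le_one hm]
      have : (c t : ℕ) + 1 ≤ m := (c t).2
      exact_mod_cast this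
    exact le_trans this hle

lemma exists_cell {n m : ℕ} [NeZero m] {x : Fin n → ℝ}
    (hx : x ∈ Set.Icc (0 : Fin n → ℝ) 1) : ∃ c : Cell n m, x ∈ gcube m c := by
  have hm : 0 < m := Nat.pos_of_ne_zero (NeZero.ne m)
  have hmR : (0:ℝ) < m := by exact_mod_cast hm
  have hx0 : ∀ t, 0 ≤ x t := fun t => hx.1 t
  have hx1 : ∀ t, x t ≤ 1 := fun t => hx.2 t
  refine ⟨fun t => ⟨min ⌊x t * m⌋₊ (m - 1), ?_⟩, ?_⟩
  · exact lt_of_le_of_lt (min_le_right _ _) (Nat.sub_lt hm one_pos)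
  · rw [mem_gcube]
    intro t
    simp only
    constructor
    · rw [div_le_iff₀ hmR]
      calc ((min ⌊x t * m⌋₊ (m - 1) : ℕ) : ℝ) ≤ (⌊x t * m⌋₊ : ℝ) := by
            exact_mod_cast min_le_left _ _
        _ ≤ x t * m := Nat.floor_le (mul_nonneg (hx0 t) hmR.le)
    · rw [le_div_iff₀ hmR]
      rcases le_or_gt (⌊x t * m⌋₊) (m-1) with h | h
      · have : min ⌊x t * m⌋₊ (m - 1) = ⌊x t * m⌋₊ := min_eq_left h
        rw [this]
        have := Nat.lt_succ_floor (x t * m)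
        calc x t * m ≤ (⌊x t * m⌋₊ : ℝ) + 1 := by
              have := Nat.lt_floor_add_one (x t * m); linarith
          _ = ((⌊x t * m⌋₊ : ℕ) : ℝ) + 1 := by norm_cast
      · have : min ⌊x t * m⌋₊ (m - 1) = m - 1 := min_eq_right (le_of_lt h)
        rw [this]
        have : ((m - 1 : ℕ) : ℝ) + 1 = m := by
          have : (1:ℕ) ≤ m := hm
          push_cast [Nat.cast_sub this]
          ring
        rw [this]
        calc x t * m ≤ 1 * m := by nlinarith [hx1 t]
          _ = m := one_mul _

lemma digit_eq_zero {n m : ℕ} [NeZero m] {c : Cell n m} {x : Fin n → ℝ} {t : Fin n}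
    (hx : x ∈ gcube m c) (h : x t = 0) : (c t : ℕ) = 0 := by
  have hmR : (0:ℝ) < m := by exact_mod_cast Nat.pos_of_ne_zero (NeZero.ne m)
  have := (mem_gcube.mp hx t).1
  rw [h, div_le_iff₀ hmR, zero_mul] at this
  have : ((c t : ℕ) : ℝ) = 0 := le_antisymm this (by positivity)
  exact_mod_cast this

lemma digit_eq_last {n m : ℕ} [NeZero m] {c : Cell n m} {x : Fin n → ℝ} {t : Fin n}
    (hx : x ∈ gcube m c) (h : x t = 1) : (c t : ℕ) = m - 1 := by
  have hmR : (0:ℝ) < m := by exact_mod_cast Nat.pos_of_ne_zero (NeZero.ne m)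
  have := (mem_gcube.mp hx t).2
  rw [h, le_div_iff₀ hmR, one_mul] at this
  have hle : m ≤ (c t : ℕ) + 1 := by exact_mod_cast this
  have hlt : (c t : ℕ) < m := (c t).2
  omega

lemma dist_le_of_mem_gcube {n m : ℕ} [NeZero m] {c : Cell n m} {x y : Fin n → ℝ}
    (hx : x ∈ gcube m c) (hy : y ∈ gcube m c) : dist x y ≤ 1 / m := by
  have hmR : (0:ℝ) < m := by exact_mod_cast Nat.pos_of_ne_zero (NeZero.ne m)
  refine (dist_pi_le_iff (by positivity)).2 fun t => ?_
  rw [Real.dist_eq, abs_sub_le_iff]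
  have h1 := (mem_gcube.mp hx t).1
  have h2 := (mem_gcube.mp hx t).2
  have h3 := (mem_gcube.mp hy t).1
  have h4 := (mem_gcube.mp hy t).2
  have : (((c t : ℕ) : ℝ) + 1) / m - ((c t : ℕ) : ℝ) / m = 1 / m := by
    field_simp
    ring
  constructor <;> linarith [this]

lemma adj_of_mem_inter {n m : ℕ} [NeZero m] {c c' : Cell n m} {x : Fin n → ℝ}
    (hx : x ∈ gcube m c) (hx' : x ∈ gcube m c') : Adj c c' := by
  have hmR : (0:ℝ) < m := by exact_mod_cast Nat.pos_of_ne_zero (NeZero.ne m)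
  intro t
  have h1 := (mem_gcube.mp hx t).1
  have h2 := (mem_gcube.mp hx t).2
  have h3 := (mem_gcube.mp hx' t).1
  have h4 := (mem_gcube.mp hx' t).2
  constructor
  · have h5 : ((c t : ℕ) : ℝ) / m ≤ (((c' t : ℕ) : ℝ) + 1) / m := le_trans h1 h4
    have h6 := (div_le_div_iff₀ hmR hmR).mp h5
    have h7 := le_of_mul_le_mul_right h6 hmR
    exact_mod_cast h7
  · have h5 : ((c' t : ℕ) : ℝ) / m ≤ (((c t : ℕ) : ℝ) + 1) / m := le_trans h3 h2
    have h6 := (div_le_div_iff₀ hmR hmR).mp h5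
    have h7 := le_of_mul_le_mul_right h6 hmR
    exact_mod_cast h7

lemma inter_nonempty_of_adj {n m : ℕ} [NeZero m] {c c' : Cell n m} (h : Adj c c') :
    (gcube m c ∩ gcube m c').Nonempty := by
  have hmR : (0:ℝ) < m := by exact_mod_cast Nat.pos_of_ne_zero (NeZero.ne m)
  refine ⟨fun t => ((max (c t : ℕ) (c' t : ℕ) : ℕ) : ℝ) / m, ?_, ?_⟩ <;>
    (rw [mem_gcube]; intro t; constructor)
  · gcongr
    exact_mod_cast le_max_left _ _
  · gcongr
    have h1 := (h t).1
    have h2 := (h t).2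
    have : max (c t : ℕ) (c' t : ℕ) ≤ (c t : ℕ) + 1 := by omega
    exact_mod_cast this
  · gcongr
    exact_mod_cast le_max_right _ _
  · gcongr
    have h1 := (h t).1
    have h2 := (h t).2
    have : max (c t : ℕ) (c' t : ℕ) ≤ (c' t : ℕ) + 1 := by omega
    exact_mod_cast this

lemma inter3_nonempty_of_adj {n m : ℕ} [NeZero m] {a b c : Cell n m}
    (hab : Adj a b) (hac : Adj a c) (hbc : Adj b c) :
    ∃ x, x ∈ gcube m a ∧ x ∈ gcube m b ∧ x ∈ gcube m c := by
  have hmR : (0:ℝ) < m := by exact_mod_cast Nat.pos_of_ne_zero (NeZero.ne m)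
  refine ⟨fun t => ((max (max (a t : ℕ) (b t : ℕ)) (c t : ℕ) : ℕ) : ℝ) / m, ?_, ?_, ?_⟩ <;>
    (rw [mem_gcube]; intro t; constructor) <;> gcongr
  · exact_mod_cast (le_max_left _ _).trans (le_max_left _ _)
  · have h1 := (hab t).2
    have h2 := (hac t).2
    have : max (max (a t : ℕ) (b t : ℕ)) (c t : ℕ) ≤ (a t : ℕ) + 1 := by omega
    exact_mod_cast this
  · exact_mod_cast (le_max_right _ _).trans (le_max_left _ _)
  · have h1 := (hab t).1
    have h2 := (hbc t).2
    have : max (max (a t : ℕ) (b t : ℕ)) (c t : ℕ) ≤ (b t : ℕ) + 1 := by omega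
    exact_mod_cast this
  · exact_mod_cast le_max_right _ _
  · have h1 := (hac t).1
    have h2 := (hbc t).1
    have : max (max (a t : ℕ) (b t : ℕ)) (c t : ℕ) ≤ (c t : ℕ) + 1 := by omega
    exact_mod_cast this

lemma gcube_isCompact {n m : ℕ} (c : Cell n m) : IsCompact (gcube m c) := isCompact_Icc

lemma gcube_convex {n m : ℕ} (c : Cell n m) : Convex ℝ (gcube m c) := convex_Icc _ _

lemma gcube_nonempty {n m : ℕ} [NeZero m] (c : Cell n m) : (gcube m c).Nonempty :=
  (inter_nonempty_of_adj (adj_refl c)).mono (Set.inter_subset_left)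






def cellOrd {n m : ℕ} (c : Cell n m) : ℕ := ∑ t : Fin n, (c t : ℕ) * (m+1) ^ (t : ℕ)

lemma geom_lt (m k : ℕ) :
    ∑ j ∈ Finset.range k, m * (m+1)^j < (m+1)^k := by
  induction k with
  | zero => simp
  | succ k ih =>
    rw [Finset.sum_range_succ]
    have h : (m+1)^k + m * (m+1)^k = (m+1)^(k+1) := by ring
    omega

lemma low_sum_lt {n m : ℕ} (c : Cell n m) (k : Fin n) :
    ∑ t ∈ Finset.univ.filter (fun t => t < k), (c t : ℕ) * (m+1) ^ (t : ℕ)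
      < (m+1) ^ (k : ℕ) := by
  have h1 : ∑ t ∈ Finset.univ.filter (fun t => t < k), (c t : ℕ) * (m+1) ^ (t : ℕ)
      ≤ ∑ t ∈ Finset.univ.filter (fun t => t < k), m * (m+1) ^ (t : ℕ) := by
    refine Finset.sum_le_sum fun t _ => ?_
    exact Nat.mul_le_mul_right _ (le_of_lt (c t).2)
  have h2 : ∑ t ∈ Finset.univ.filter (fun t => t < k), m * (m+1) ^ (t : ℕ)
      = ∑ j ∈ (Finset.univ.filter (fun t : Fin n => t < k)).image Fin.val,
          m * (m+1) ^ j := by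
    rw [Finset.sum_image]
    intro a _ b _ hab
    exact Fin.val_injective hab
  have h3 : (Finset.univ.filter (fun t : Fin n => t < k)).image Fin.val
      ⊆ Finset.range (k : ℕ) := by
    intro j hj
    simp only [Finset.mem_image, Finset.mem_filter] at hj
    obtain ⟨t, ⟨_, ht⟩, rfl⟩ := hj
    simpa [Finset.mem_range] using ht
  have h4 : ∑ j ∈ (Finset.univ.filter (fun t : Fin n => t < k)).image Fin.val,
      m * (m+1) ^ j ≤ ∑ j ∈ Finset.range (k : ℕ), m * (m+1) ^ j :=
    Finset.sum_le_sum_of_subset h3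
  have h5 := geom_lt m (k : ℕ)
  omega

lemma cellOrd_split {n m : ℕ} (c : Cell n m) (k : Fin n) :
    cellOrd c = (∑ t ∈ Finset.univ.filter (fun t => t < k), (c t : ℕ) * (m+1) ^ (t : ℕ))
      + ((c k : ℕ) * (m+1) ^ (k : ℕ)
      + ∑ t ∈ Finset.univ.filter (fun t => k < t), (c t : ℕ) * (m+1) ^ (t : ℕ)) := by
  classical
  rw [cellOrd, ← Finset.sum_filter_add_sum_filter_not Finset.univ (fun t => t < k)]
  congr 1
  have : Finset.univ.filter (fun t : Fin n => ¬ t < k)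
      = insert k (Finset.univ.filter (fun t : Fin n => k < t)) := by
    ext t
    simp only [Finset.mem_filter, Finset.mem_insert, Finset.mem_univ, true_and]
    constructor
    · intro h
      rcases lt_or_eq_of_le (le_of_not_gt h) with h' | h'
      · exact Or.inr h'
      · exact Or.inl h'.symm
    · rintro (rfl | h)
      · exact lt_irrefl _
      · exact not_lt_of_gt h
  rw [this, Finset.sum_insert (by simp)]

lemma cellOrd_lt {n m : ℕ} {v x : Cell n m} (k : Fin n)
    (hk : (v k : ℕ) < (x k : ℕ)) (htop : ∀ t, k < t → x t = v t) :
    cellOrd v < cellOrd x := by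
  rw [cellOrd_split v k, cellOrd_split x k]
  have htops : ∑ t ∈ Finset.univ.filter (fun t => k < t), (x t : ℕ) * (m+1) ^ (t : ℕ)
      = ∑ t ∈ Finset.univ.filter (fun t => k < t), (v t : ℕ) * (m+1) ^ (t : ℕ) := by
    refine Finset.sum_congr rfl fun t ht => ?_
    rw [htop t (Finset.mem_filter.mp ht).2]
  rw [htops]
  have h1 := low_sum_lt v k
  have h2 : ((v k : ℕ) + 1) * (m+1) ^ (k : ℕ) ≤ (x k : ℕ) * (m+1) ^ (k : ℕ) :=
    Nat.mul_le_mul_right _ hk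
  rw [Nat.add_mul, one_mul] at h2
  omega

lemma cellOrd_injective {n m : ℕ} {x v : Cell n m} (h : cellOrd x = cellOrd v) : x = v := by
  classical
  by_contra hne
  have hD : (Finset.univ.filter (fun t => x t ≠ v t)).Nonempty := by
    rcases Function.ne_iff.mp hne with ⟨t, ht⟩
    exact ⟨t, by simp [ht]⟩
  set k := (Finset.univ.filter (fun t => x t ≠ v t)).max' hD with hk
  have hkmem : x k ≠ v k := by
    have := (Finset.univ.filter (fun t => x t ≠ v t)).max'_mem hD
    simpa using this
  have htop : ∀ t, k < t → x t = v t := by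
    intro t ht
    by_contra hne'
    have : t ∈ Finset.univ.filter (fun t => x t ≠ v t) := by simp [hne']
    exact absurd (Finset.le_max' _ _ this) (not_le_of_gt ht)
  rcases lt_or_gt_of_ne (fun hc : (x k : ℕ) = (v k : ℕ) => hkmem (Fin.ext hc)) with h' | h'
  · exact absurd h (ne_of_lt (cellOrd_lt k h' (fun t ht => (htop t ht).symm)))
  · exact absurd h (ne_of_gt (cellOrd_lt k h' htop))





section Stair
variable {n m : ℕ} [NeZero m]

def maxnz (v : Cell n m) (hv : v ≠ 0) : Fin n :=
  (Finset.univ.filter (fun t => v t ≠ 0)).max' (by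
    rcases Function.ne_iff.mp hv with ⟨t, ht⟩
    exact ⟨t, by simpa using ht⟩)

lemma maxnz_ne_zero (v : Cell n m) (hv : v ≠ 0) : v (maxnz v hv) ≠ 0 := by
  have := (Finset.univ.filter (fun t => v t ≠ 0)).max'_mem (by
    rcases Function.ne_iff.mp hv with ⟨t, ht⟩
    exact ⟨t, by simpa using ht⟩)
  simpa [maxnz] using this

lemma maxnz_top (v : Cell n m) (hv : v ≠ 0) {t : Fin n} (ht : maxnz v hv < t) : v t = 0 := by
  by_contra h
  have hmem : t ∈ Finset.univ.filter (fun t => v t ≠ 0) := by simp [h]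
  exact absurd (Finset.le_max' _ _ hmem) (not_le_of_gt ht)

def stairU (v : Cell n m) : Cell n m :=
  if h : v = 0 then v
  else Function.update v (maxnz v h) ⟨(v (maxnz v h) : ℕ) - 1, by
    have := (v (maxnz v h)).2; omega⟩

lemma stairU_at (v : Cell n m) (hv : v ≠ 0) :
    (stairU v (maxnz v hv) : ℕ) = (v (maxnz v hv) : ℕ) - 1 := by
  rw [stairU, dif_neg hv, Function.update_self]

lemma stairU_ne (v : Cell n m) (hv : v ≠ 0) {t : Fin n} (ht : t ≠ maxnz v hv) :
    stairU v t = v t := by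
  rw [stairU, dif_neg hv, Function.update_of_ne ht]

lemma adj_stairU (v : Cell n m) : Adj (stairU v) v := by
  by_cases hv : v = 0
  · subst hv; simp only [stairU, dif_pos]; exact fun t => ⟨Nat.le_succ _, Nat.le_succ _⟩
  · intro t
    by_cases ht : t = maxnz v hv
    · subst ht
      rw [stairU_at v hv]
      omega
    · rw [stairU_ne v hv ht]
      omega

lemma cellOrd_stairU_lt (v : Cell n m) (hv : v ≠ 0) : cellOrd (stairU v) < cellOrd v := by
  have h1 : (v (maxnz v hv) : ℕ) ≠ 0 := by
    have := maxnz_ne_zero v hv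
    intro h; exact this (Fin.ext (by rw [h]; simp))
  refine cellOrd_lt (maxnz v hv) ?_ ?_
  · rw [stairU_at v hv]; omega
  · intro t ht
    exact (stairU_ne v hv (ne_of_gt ht)).symm

lemma cellOrd_zero : cellOrd (0 : Cell n m) = 0 := by
  simp [cellOrd]

lemma stairU_dominates {x v : Cell n m} (hv : v ≠ 0) (hadj : Adj x v)
    (hord : cellOrd x < cellOrd v) : Adj x (stairU v) := by
  set j := maxnz v hv with hj
  have hxj : (x j : ℕ) ≤ (v j : ℕ) := by
    by_contra hgt
    have hx1 : (x j : ℕ) = (v j : ℕ) + 1 := by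
      have := (hadj j).1; omega
    by_cases hcase : ∀ t, j < t → x t = v t
    · exact absurd hord (not_lt_of_gt (cellOrd_lt j (by omega) hcase))
    · push_neg at hcase
      obtain ⟨t₀, ht₀, hne₀⟩ := hcase
      have hD : (Finset.univ.filter (fun t => j < t ∧ x t ≠ v t)).Nonempty :=
        ⟨t₀, by simp [ht₀, hne₀]⟩
      set k := (Finset.univ.filter (fun t => j < t ∧ x t ≠ v t)).max' hD with hkdef
      have hkmem : j < k ∧ x k ≠ v k := by
        have := (Finset.univ.filter (fun t => j < t ∧ x t ≠ v t)).max'_mem hD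
        simpa using this
      have hvk : v k = 0 := maxnz_top v hv hkmem.1
      have hxk : (v k : ℕ) < (x k : ℕ) := by
        have h0 : (v k : ℕ) = 0 := by simp [hvk]
        have : (x k : ℕ) ≠ 0 := by
          intro hc
          exact hkmem.2 (Fin.ext (by omega))
        omega
      have htop : ∀ t, k < t → x t = v t := by
        intro t ht
        by_contra hne'
        have hjt : j < t := lt_trans hkmem.1 ht
        have : t ∈ Finset.univ.filter (fun t => j < t ∧ x t ≠ v t) := by simp [hjt, hne']
        exact absurd (Finset.le_max' _ _ this) (not_le_of_gt ht)
      exact absurd hord (not_lt_of_gt (cellOrd_lt k hxk htop))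
  intro t
  by_cases ht : t = j
  · rw [ht, stairU_at v hv]
    have h5 := (hadj j).2
    have h6 := hxj
    have h7 : (v (maxnz v hv) : ℕ) = (v j : ℕ) := rfl
    omega
  · rw [stairU_ne v hv ht]
    exact hadj t

noncomputable def stairPhi (w : Cell n m → Cell n m → ℤ) (v : Cell n m) : ℤ :=
  if h : v = 0 then 0 else stairPhi w (stairU v) + w (stairU v) v
termination_by cellOrd v
decreasing_by exact cellOrd_stairU_lt v h

theorem stairPhi_adj (w : Cell n m → Cell n m → ℤ)
    (hanti : ∀ a b, w b a = - w a b)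
    (htri : ∀ a b c, Adj a b → Adj b c → Adj a c → w a b + w b c = w a c)
    {x v : Cell n m} (h : Adj x v) : stairPhi w v - stairPhi w x = w x v := by
  have key : ∀ N : ℕ, ∀ v x : Cell n m, cellOrd v ≤ N → Adj x v → cellOrd x < cellOrd v →
      stairPhi w v - stairPhi w x = w x v := by
    intro N
    induction N with
    | zero => intro v x hN _ hlt; omega
    | succ N ih =>
      intro v x hN hadj hlt
      have hv : v ≠ 0 := by
        intro hc; subst hc; rw [cellOrd_zero] at hlt; omega
      have hphi : stairPhi w v = stairPhi w (stairU v) + w (stairU v) v := by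
        rw [stairPhi, dif_neg hv]
      set u := stairU v with hu
      have huv : cellOrd u < cellOrd v := cellOrd_stairU_lt v hv
      have huN : cellOrd u ≤ N := by omega
      have hadju : Adj u v := adj_stairU v
      by_cases hxu : x = u
      · subst hxu; rw [hphi]; ring
      · have hadjxu : Adj x u := stairU_dominates hv hadj hlt
        have hordne : cellOrd x ≠ cellOrd u := fun hc => hxu (cellOrd_injective hc)
        rcases lt_or_gt_of_ne hordne with hc | hc
        · have h1 := ih u x huN hadjxu hc
          have h2 := htri x u v hadjxu hadju hadj
          rw [hphi]
          linarith
        · have hxN : cellOrd x ≤ N := by omega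
          have h1 := ih x u hxN hadjxu.symm hc
          have h2 := htri x u v hadjxu hadju hadj
          have h3 := hanti u x
          rw [hphi]
          linarith
  rcases lt_trichotomy (cellOrd x) (cellOrd v) with hc | hc | hc
  · exact key (cellOrd v) v x le_rfl h hc
  · have hxv : x = v := cellOrd_injective hc
    subst hxv
    have := hanti x x
    omega
  · have := key (cellOrd x) x v le_rfl h.symm hc
    have h3 := hanti v x
    omega
end Stair



section Paths
variable {n m : ℕ} [NeZero m]

open Relation

lemma rtg_convert {α : Type*} {r r' : α → α → Prop} (P : α → Prop)
    (hpres : ∀ a b, r a b → P a → P b)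
    (hconv : ∀ a b, r a b → P a → P b → r' a b) :
    ∀ {a b}, ReflTransGen r a b → P a → P b ∧ ReflTransGen r' a b := by
  intro a b h
  induction h with
  | refl => exact fun hP => ⟨hP, .refl⟩
  | tail hab hbc ih =>
    intro hP
    obtain ⟨hPb, hr'⟩ := ih hP
    exact ⟨hpres _ _ hbc hPb, hr'.tail (hconv _ _ hbc hPb (hpres _ _ hbc hPb))⟩

lemma grid_path_aux (c' : Cell n m) : ∀ D : ℕ, ∀ c : Cell n m,
    (∑ t, (max (c t : ℕ) (c' t : ℕ) - min (c t : ℕ) (c' t : ℕ))) ≤ D →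
    ReflTransGen (fun a b : Cell n m => Adj a b ∧
        ∀ t, min (c t : ℕ) (c' t : ℕ) ≤ (b t : ℕ) ∧ (b t : ℕ) ≤ max (c t : ℕ) (c' t : ℕ)) c c' := by
  intro D
  induction D with
  | zero =>
    intro c hD
    have : c = c' := by
      funext t
      have h1 : max (c t : ℕ) (c' t : ℕ) - min (c t : ℕ) (c' t : ℕ) = 0 := by
        have := Finset.sum_eq_zero_iff.mp (Nat.le_zero.mp hD) t (Finset.mem_univ t)
        exact this
      exact Fin.ext (by omega)
    subst this
    exact .refl
  | succ D ih =>
    intro c hD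
    by_cases hcc : c = c'
    · subst hcc; exact .refl
    · obtain ⟨t₀, ht₀⟩ := Function.ne_iff.mp hcc
      have ht₀' : (c t₀ : ℕ) ≠ (c' t₀ : ℕ) := fun h => ht₀ (Fin.ext h)
      set newv : Fin m := if h : (c t₀ : ℕ) < (c' t₀ : ℕ)
        then ⟨(c t₀ : ℕ) + 1, by have := (c' t₀).2; omega⟩
        else ⟨(c t₀ : ℕ) - 1, by have := (c t₀).2; omega⟩ with hnewv
      set d : Cell n m := Function.update c t₀ newv with hd
      have hdt₀ : (d t₀ : ℕ) = if (c t₀ : ℕ) < (c' t₀ : ℕ) then (c t₀ : ℕ) + 1 else (c t₀ : ℕ) - 1 := by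
        rw [hd, Function.update_self, hnewv]
        split_ifs with h <;> rfl
      have hdne : ∀ t, t ≠ t₀ → d t = c t := fun t ht => Function.update_of_ne ht _ _
      have hadj : Adj c d := by
        intro t
        by_cases ht : t = t₀
        · subst ht; rw [hdt₀]; split_ifs with h <;> omega
        · rw [hdne t ht]; omega
      have hbox : ∀ t, min (c t : ℕ) (c' t : ℕ) ≤ (d t : ℕ) ∧ (d t : ℕ) ≤ max (c t : ℕ) (c' t : ℕ) := by
        intro t
        by_cases ht : t = t₀
        · subst ht; rw [hdt₀]; split_ifs with h <;> omega
        · rw [hdne t ht]; omega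
      have hgap : ∀ t, t ≠ t₀ →
          max (d t : ℕ) (c' t : ℕ) - min (d t : ℕ) (c' t : ℕ)
            = max (c t : ℕ) (c' t : ℕ) - min (c t : ℕ) (c' t : ℕ) := by
        intro t ht; rw [hdne t ht]
      have hgap₀ : max (d t₀ : ℕ) (c' t₀ : ℕ) - min (d t₀ : ℕ) (c' t₀ : ℕ) + 1
          = max (c t₀ : ℕ) (c' t₀ : ℕ) - min (c t₀ : ℕ) (c' t₀ : ℕ) := by
        rw [hdt₀]; split_ifs with h <;> omega
      have hsum : (∑ t, (max (d t : ℕ) (c' t : ℕ) - min (d t : ℕ) (c' t : ℕ))) ≤ D := by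
        have e1 := Finset.sum_erase_add Finset.univ
          (fun t => max (d t : ℕ) (c' t : ℕ) - min (d t : ℕ) (c' t : ℕ)) (Finset.mem_univ t₀)
        have e2 := Finset.sum_erase_add Finset.univ
          (fun t => max (c t : ℕ) (c' t : ℕ) - min (c t : ℕ) (c' t : ℕ)) (Finset.mem_univ t₀)
        have e3 : ∑ t ∈ Finset.univ.erase t₀, (max (d t : ℕ) (c' t : ℕ) - min (d t : ℕ) (c' t : ℕ))
            = ∑ t ∈ Finset.univ.erase t₀, (max (c t : ℕ) (c' t : ℕ) - min (c t : ℕ) (c' t : ℕ)) := by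
          refine Finset.sum_congr rfl fun t ht => hgap t (Finset.ne_of_mem_erase ht)
        omega
      have hchain := ih d hsum
      have hmono : ∀ a b : Cell n m, (Adj a b ∧
          ∀ t, min (d t : ℕ) (c' t : ℕ) ≤ (b t : ℕ) ∧ (b t : ℕ) ≤ max (d t : ℕ) (c' t : ℕ)) →
          (Adj a b ∧
          ∀ t, min (c t : ℕ) (c' t : ℕ) ≤ (b t : ℕ) ∧ (b t : ℕ) ≤ max (c t : ℕ) (c' t : ℕ)) := by
        rintro a b ⟨h1, h2⟩
        refine ⟨h1, fun t => ?_⟩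
        have h3 := h2 t
        have h4 := (hbox t).1
        have h5 := (hbox t).2
        omega
      exact .head ⟨hadj, hbox⟩ (ReflTransGen.mono hmono _ _ hchain)

lemma grid_path (c c' : Cell n m) : ReflTransGen (fun a b : Cell n m => Adj a b) c c' := by
  have := grid_path_aux c' _ c le_rfl
  exact ReflTransGen.mono (p := fun a b => Adj a b) (fun a b h => h.1) _ _ this

lemma grid_path_slab {t₁ : Fin n} {K : ℕ} (c c' : Cell n m)
    (hc : (c t₁ : ℕ) = K) (hc' : (c' t₁ : ℕ) = K) :
    ReflTransGen (fun a b : Cell n m => Adj a b ∧ (b t₁ : ℕ) = K) c c' := by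
  have := grid_path_aux c' _ c le_rfl
  refine ReflTransGen.mono ?_ _ _ this
  rintro a b ⟨h1, h2⟩
  refine ⟨h1, ?_⟩
  have := h2 t₁
  omega

lemma adj_closed_eq_univ {S : Set (Cell n m)} {c : Cell n m} (hc : c ∈ S)
    (hclosed : ∀ a b, a ∈ S → Adj a b → b ∈ S) : ∀ d, d ∈ S := by
  intro d
  have := grid_path c d
  induction this with
  | refl => exact hc
  | tail hab hbc ih => exact hclosed _ _ ih hbc

end Paths

section Interface
variable {n m : ℕ} [NeZero m]

noncomputable def qFun {α : Type*} (R : α → Prop) (p : α) : ℤ :=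
  open Classical in if R p then 0 else 1

noncomputable def wFun (C : Set (Cell n m)) (R : Cell n m × Cell n m → Prop) :
    Cell n m → Cell n m → ℤ :=
  open Classical in
  fun a b =>
    if a ∈ C then (if b ∈ C then 0 else -(1 + qFun R (a, b)))
    else (if b ∈ C then 1 + qFun R (b, a) else 0)

lemma wFun_both {C : Set (Cell n m)} {R} {a b : Cell n m} (ha : a ∈ C) (hb : b ∈ C) :
    wFun C R a b = 0 := by simp [wFun, ha, hb]

lemma wFun_neither {C : Set (Cell n m)} {R} {a b : Cell n m} (ha : a ∉ C) (hb : b ∉ C) :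
    wFun C R a b = 0 := by simp [wFun, ha, hb]

lemma wFun_cross {C : Set (Cell n m)} {R} {a b : Cell n m} (ha : a ∈ C) (hb : b ∉ C) :
    wFun C R a b = -(1 + qFun R (a, b)) := by simp [wFun, ha, hb]

lemma wFun_cross' {C : Set (Cell n m)} {R} {a b : Cell n m} (ha : a ∉ C) (hb : b ∈ C) :
    wFun C R a b = 1 + qFun R (b, a) := by simp [wFun, ha, hb]

lemma wFun_anti (C : Set (Cell n m)) (R) : ∀ a b : Cell n m, wFun C R b a = - wFun C R a b := by
  intro a b
  by_cases ha : a ∈ C <;> by_cases hb : b ∈ C <;>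
    simp [wFun_both, wFun_neither, wFun_cross, wFun_cross', ha, hb]

def CrossingP (C : Set (Cell n m)) (p : Cell n m × Cell n m) : Prop :=
  p.1 ∈ C ∧ p.2 ∉ C ∧ Adj p.1 p.2

def fcP (m : ℕ) {n : ℕ} (p : Cell n m × Cell n m) : Set (Fin n → ℝ) :=
  gcube m p.1 ∩ gcube m p.2

def TSP (C : Set (Cell n m)) (p q : Cell n m × Cell n m) : Prop :=
  CrossingP C q ∧ (fcP m p ∩ fcP m q).Nonempty

theorem interface_pathConnected (C : Set (Cell n m)) (zC zD : Cell n m)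
    (hzC : zC ∈ C) (hzD : zD ∉ C)
    (hCconn : ∀ c ∈ C, Relation.ReflTransGen (fun a b => Adj a b ∧ a ∈ C ∧ b ∈ C) zC c)
    (hDconn : ∀ c ∉ C, Relation.ReflTransGen (fun a b => Adj a b ∧ a ∉ C ∧ b ∉ C) zD c) :
    IsPathConnected ((⋃ c ∈ C, gcube m c) ∩ (⋃ c ∈ Cᶜ, gcube m c)) := by
  classical
  set Γ := (⋃ c ∈ C, gcube m c) ∩ (⋃ c ∈ Cᶜ, gcube m c) with hΓ
  have hfcΓ : ∀ p, CrossingP C p → fcP m p ⊆ Γ := by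
    rintro ⟨a, b⟩ ⟨ha, hb, _⟩ x ⟨hx1, hx2⟩
    exact ⟨Set.mem_biUnion ha hx1, Set.mem_biUnion hb hx2⟩
  have hfc_conv : ∀ p : Cell n m × Cell n m, Convex ℝ (fcP m p) :=
    fun p => (gcube_convex p.1).inter (gcube_convex p.2)
  have hexists : ∃ p, CrossingP C p := by
    have hgen : ∀ a b : Cell n m, Relation.ReflTransGen (fun a b => Adj a b) a b →
        a ∈ C → b ∉ C → ∃ p, CrossingP C p := by
      intro a b h
      induction h with
      | refl => exact fun h1 h2 => absurd h1 h2
      | @tail b₂ c₂ hab hbc ih =>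
        intro ha hc
        by_cases hb : b₂ ∈ C
        · exact ⟨(b₂, c₂), hb, hc, hbc⟩
        · exact ih ha hb
    exact hgen zC zD (grid_path zC zD) hzC hzD
  obtain ⟨p₀, hp₀⟩ := hexists
  have key : ∀ p, CrossingP C p → Relation.ReflTransGen (TSP C) p₀ p := by
    by_contra hkey
    push_neg at hkey
    obtain ⟨p₁, hp₁, hp₁r⟩ := hkey
    set R : Cell n m × Cell n m → Prop := Relation.ReflTransGen (TSP C) p₀ with hR
    set w := wFun C R with hw
    have q_eq : ∀ p p', CrossingP C p → CrossingP C p' → (fcP m p ∩ fcP m p').Nonempty →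
        qFun R p = qFun R p' := by
      intro p p' hp hp' hint
      have himp : ∀ {x y : Cell n m × Cell n m}, CrossingP C y → (fcP m x ∩ fcP m y).Nonempty →
          R x → R y := fun hy hxy hx => hx.tail ⟨hy, hxy⟩
      have hiff : R p ↔ R p' :=
        ⟨fun h => himp hp' hint h, fun h => himp hp (by rwa [Set.inter_comm]) h⟩
      simp only [qFun]
      by_cases hRp : R p
      · rw [if_pos hRp, if_pos (hiff.mp hRp)]
      · rw [if_neg hRp, if_neg (fun hc => hRp (hiff.mpr hc))]
    have htri : ∀ a b c : Cell n m, Adj a b → Adj b c → Adj a c → w a b + w b c = w a c := by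
      intro a b c hab hbc hac
      obtain ⟨z, hza, hzb, hzc⟩ := inter3_nonempty_of_adj hab hac hbc
      by_cases ha : a ∈ C <;> by_cases hb : b ∈ C <;> by_cases hc : c ∈ C
      · rw [hw, wFun_both ha hb, wFun_both hb hc, wFun_both ha hc]; ring
      · have hq := q_eq (b, c) (a, c) ⟨hb, hc, hbc⟩ ⟨ha, hc, hac⟩ ⟨z, ⟨hzb, hzc⟩, ⟨hza, hzc⟩⟩
        rw [hw, wFun_both ha hb, wFun_cross hb hc, wFun_cross ha hc, hq]
        ring
      · have hq := q_eq (a, b) (c, b) ⟨ha, hb, hab⟩ ⟨hc, hb, hbc.symm⟩ ⟨z, ⟨hza, hzb⟩, ⟨hzc, hzb⟩⟩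
        rw [hw, wFun_cross ha hb, wFun_cross' hb hc, wFun_both ha hc, hq]
        ring
      · have hq := q_eq (a, b) (a, c) ⟨ha, hb, hab⟩ ⟨ha, hc, hac⟩ ⟨z, ⟨hza, hzb⟩, ⟨hza, hzc⟩⟩
        rw [hw, wFun_cross ha hb, wFun_neither hb hc, wFun_cross ha hc, hq]
        ring
      · have hq := q_eq (b, a) (c, a) ⟨hb, ha, hab.symm⟩ ⟨hc, ha, hac.symm⟩
          ⟨z, ⟨hzb, hza⟩, ⟨hzc, hza⟩⟩
        rw [hw, wFun_cross' ha hb, wFun_both hb hc, wFun_cross' ha hc, hq]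
        ring
      · have hq := q_eq (b, a) (b, c) ⟨hb, ha, hab.symm⟩ ⟨hb, hc, hbc⟩
          ⟨z, ⟨hzb, hza⟩, ⟨hzb, hzc⟩⟩
        rw [hw, wFun_cross' ha hb, wFun_cross hb hc, wFun_neither ha hc, hq]
        ring
      · have hq := q_eq (c, b) (c, a) ⟨hc, hb, hbc.symm⟩ ⟨hc, ha, hac.symm⟩
          ⟨z, ⟨hzc, hzb⟩, ⟨hzc, hza⟩⟩
        rw [hw, wFun_neither ha hb, wFun_cross' hb hc, wFun_cross' ha hc, hq]
        ring
      · rw [hw, wFun_neither ha hb, wFun_neither hb hc, wFun_neither ha hc]; ring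
    set φ := stairPhi w with hφ
    have hpot : ∀ {x v : Cell n m}, Adj x v → φ v - φ x = w x v :=
      fun h => stairPhi_adj w (wFun_anti C R) htri h
    have hconstC : ∀ c ∈ C, φ zC = φ c := by
      intro c hc
      have hchain := hCconn c hc
      clear hc
      induction hchain with
      | refl => rfl
      | @tail b₂ c₂ hab hbc ih =>
        have h1 := hpot hbc.1
        rw [hw, wFun_both hbc.2.1 hbc.2.2] at h1
        omega
    have hconstD : ∀ c ∉ C, φ zD = φ c := by
      intro c hc
      have hchain := hDconn c hc
      clear hc
      induction hchain with
      | refl => rfl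
      | @tail b₂ c₂ hab hbc ih =>
        have h1 := hpot hbc.1
        rw [hw, wFun_neither hbc.2.1 hbc.2.2] at h1
        omega
    have hcrossval : ∀ p, CrossingP C p → φ zD - φ zC = -(1 + qFun R p) := by
      rintro ⟨a, b⟩ ⟨ha, hb, hadj⟩
      have h1 := hpot hadj
      rw [hw, wFun_cross ha hb] at h1
      have h2 := hconstC a ha
      have h3 := hconstD b hb
      linarith [h1, h2, h3]
    have hv0 := hcrossval p₀ hp₀
    have hv1 := hcrossval p₁ hp₁
    have hq0 : qFun R p₀ = 0 := by
      simp only [qFun]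
      rw [if_pos (show R p₀ from Relation.ReflTransGen.refl)]
    have hq1 : qFun R p₁ = 1 := by
      simp only [qFun]
      rw [if_neg hp₁r]
    omega
  obtain ⟨x₀, hx₀⟩ := inter_nonempty_of_adj hp₀.2.2
  have hx₀' : x₀ ∈ fcP m p₀ := hx₀
  have hjoin : ∀ p, Relation.ReflTransGen (TSP C) p₀ p → ∀ z ∈ fcP m p, JoinedIn Γ x₀ z := by
    intro p hp
    induction hp with
    | refl =>
      intro z hz
      exact (((hfc_conv p₀).isPathConnected ⟨x₀, hx₀'⟩).joinedIn x₀ hx₀' z hz).mono (hfcΓ p₀ hp₀)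
    | @tail b₂ c₂ hab hbc ih =>
      intro z hz
      obtain ⟨t, htb, htc⟩ := hbc.2
      have h1 := ih t htb
      have h2 : JoinedIn (fcP m c₂) t z :=
        ((hfc_conv c₂).isPathConnected ⟨t, htc⟩).joinedIn t htc z hz
      exact h1.trans (h2.mono (hfcΓ c₂ hbc.1))
  refine ⟨x₀, hfcΓ p₀ hp₀ hx₀', ?_⟩
  intro y hy
  obtain ⟨hy1, hy2⟩ := hy
  obtain ⟨c₁, hc₁, hyc₁⟩ := Set.mem_iUnion₂.mp hy1
  obtain ⟨c₂, hc₂, hyc₂⟩ := Set.mem_iUnion₂.mp hy2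
  have hcr : CrossingP C (c₁, c₂) := ⟨hc₁, hc₂, adj_of_mem_inter hyc₁ hyc₂⟩
  exact hjoin _ (key _ hcr) y ⟨hyc₁, hyc₂⟩

end Interface

section Reach
variable {n : ℕ} {m : ℕ} [NeZero m] {i : Fin n} {L0 L1 : Set (Fin n → ℝ)}

def GoodC {n : ℕ} (m : ℕ) (L1 : Set (Fin n → ℝ)) (c : Cell n m) : Prop :=
  ∀ y ∈ gcube m c, y ∉ L1

def GAdjR {n : ℕ} (m : ℕ) (L1 : Set (Fin n → ℝ)) (a b : Cell n m) : Prop :=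
  Adj a b ∧ GoodC m L1 a ∧ GoodC m L1 b

def BsetD {n : ℕ} (m : ℕ) (i : Fin n) (L1 : Set (Fin n → ℝ)) : Set (Cell n m) :=
  {c | GoodC m L1 c ∧ ∃ s, (s i : ℕ) = 0 ∧ Relation.ReflTransGen (GAdjR m L1) s c}

def NBR {n : ℕ} (m : ℕ) (i : Fin n) (L1 : Set (Fin n → ℝ)) (a b : Cell n m) : Prop :=
  Adj a b ∧ a ∉ BsetD m i L1 ∧ b ∉ BsetD m i L1

def CsetD {n : ℕ} (m : ℕ) (i : Fin n) (L1 : Set (Fin n → ℝ)) : Set (Cell n m) :=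
  {c | c ∉ BsetD m i L1 ∧ ∃ s, (s i : ℕ) = m - 1 ∧ Relation.ReflTransGen (NBR m i L1) s c}

-- a canonical point of the lower face of a cell
lemma lower_point_mem {c : Cell n m} :
    (fun t => ((c t : ℕ) : ℝ) / m) ∈ gcube m c := by
  rw [mem_gcube]
  intro t
  refine ⟨le_rfl, ?_⟩
  have hmR : (0:ℝ) < m := by exact_mod_cast Nat.pos_of_ne_zero (NeZero.ne m)
  exact (div_le_div_iff₀ hmR hmR).mpr (by nlinarith [Nat.cast_nonneg (α := ℝ) (c t : ℕ)])

lemma lower_point_face0 {c : Cell n m} (hc : (c i : ℕ) = 0) :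
    (fun t => ((c t : ℕ) : ℝ) / m) ∈ face n i 0 := by
  refine ⟨gcube_subset_unitCube c lower_point_mem, ?_⟩
  simp [hc]

lemma upper_point_mem {c : Cell n m} :
    (fun t => (((c t : ℕ) : ℝ) + 1) / m) ∈ gcube m c := by
  rw [mem_gcube]
  intro t
  refine ⟨?_, le_rfl⟩
  have hmR : (0:ℝ) < m := by exact_mod_cast Nat.pos_of_ne_zero (NeZero.ne m)
  exact (div_le_div_iff₀ hmR hmR).mpr (by nlinarith [Nat.cast_nonneg (α := ℝ) (c t : ℕ)])

lemma upper_point_face1 {c : Cell n m} (hc : (c i : ℕ) = m - 1) :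
    (fun t => (((c t : ℕ) : ℝ) + 1) / m) ∈ face n i 1 := by
  have hm : 0 < m := Nat.pos_of_ne_zero (NeZero.ne m)
  refine ⟨gcube_subset_unitCube c upper_point_mem, ?_⟩
  have hmR : ((m : ℝ)) ≠ 0 := by positivity
  show (((c i : ℕ) : ℝ) + 1) / m = 1
  rw [hc]
  rw [div_eq_one_iff_eq hmR]
  have : ((m - 1 : ℕ) : ℝ) = (m : ℝ) - 1 := by
    push_cast [Nat.cast_sub hm]
    ring
  rw [this]
  ring

variable (hface0 : face n i 0 ⊆ L0) (hface1 : face n i 1 ⊆ L1)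
  (hGL0 : ∀ c : Cell n m, (∃ p ∈ gcube m c, p ∈ L0) → GoodC m L1 c)

include hface0 hGL0 in
lemma start0_good {c : Cell n m} (hc : (c i : ℕ) = 0) : GoodC m L1 c :=
  hGL0 c ⟨_, lower_point_mem, hface0 (lower_point_face0 hc)⟩

include hface0 hGL0 in
lemma start0_B {c : Cell n m} (hc : (c i : ℕ) = 0) : c ∈ BsetD m i L1 :=
  ⟨start0_good hface0 hGL0 hc, c, hc, Relation.ReflTransGen.refl⟩

include hface1 in
lemma start1_notGood {c : Cell n m} (hc : (c i : ℕ) = m - 1) : ¬ GoodC m L1 c :=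
  fun hg => hg _ upper_point_mem (hface1 (upper_point_face1 hc))

include hface1 in
lemma start1_notB {c : Cell n m} (hc : (c i : ℕ) = m - 1) : c ∉ BsetD m i L1 :=
  fun hB => start1_notGood hface1 hc hB.1

include hface1 in
lemma start1_C {c : Cell n m} (hc : (c i : ℕ) = m - 1) : c ∈ CsetD m i L1 :=
  ⟨start1_notB hface1 hc, c, hc, Relation.ReflTransGen.refl⟩

lemma B_not_C {c : Cell n m} (hc : c ∈ BsetD m i L1) : c ∉ CsetD m i L1 :=
  fun hC => hC.1 hc

lemma C_ext {c c' : Cell n m} (hc : c ∈ CsetD m i L1) (hc' : c' ∉ BsetD m i L1)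
    (hadj : Adj c c') : c' ∈ CsetD m i L1 := by
  obtain ⟨hcB, s, hs, hchain⟩ := hc
  exact ⟨hc', s, hs, hchain.tail ⟨hadj, hcB, hc'⟩⟩

lemma B_ext {c c' : Cell n m} (hc' : c' ∈ BsetD m i L1) (hg : GoodC m L1 c)
    (hadj : Adj c c') : c ∈ BsetD m i L1 := by
  obtain ⟨hcg, s, hs, hchain⟩ := hc'
  exact ⟨hg, s, hs, hchain.tail ⟨hadj.symm, hcg, hg⟩⟩

include hface0 hGL0 in
lemma B_nodes {s c : Cell n m} (hs : (s i : ℕ) = 0)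
    (h : Relation.ReflTransGen (GAdjR m L1) s c) : c ∈ BsetD m i L1 := by
  induction h with
  | refl => exact start0_B hface0 hGL0 hs
  | @tail b₂ c₂ hab hbc ih => exact ⟨hbc.2.2, s, hs, hab.tail hbc⟩

include hface1 in
lemma C_nodes {s c : Cell n m} (hs : (s i : ℕ) = m - 1)
    (h : Relation.ReflTransGen (NBR m i L1) s c) : c ∈ CsetD m i L1 := by
  induction h with
  | refl => exact start1_C hface1 hs
  | @tail b₂ c₂ hab hbc ih => exact ⟨hbc.2.2, s, hs, hab.tail hbc⟩

include hface0 hface1 hGL0 in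
lemma Cconn (hm2 : 2 ≤ m) : ∀ c ∈ CsetD m i L1,
    Relation.ReflTransGen
      (fun a b : Cell n m => Adj a b ∧ a ∈ CsetD m i L1 ∧ b ∈ CsetD m i L1)
      (fun t => if t = i then ⟨m-1, by omega⟩ else ⟨0, by omega⟩) c := by
  intro c hc
  set zC : Cell n m := fun t => if t = i then ⟨m-1, by omega⟩ else ⟨0, by omega⟩ with hzC
  have hzCi : (zC i : ℕ) = m - 1 := by rw [hzC]; simp
  obtain ⟨hcB, s, hs, hchain⟩ := hc
  have part1 : Relation.ReflTransGen
      (fun a b : Cell n m => Adj a b ∧ a ∈ CsetD m i L1 ∧ b ∈ CsetD m i L1) zC s := by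
    have hslab := grid_path_slab (t₁ := i) (K := m - 1) zC s hzCi hs
    have := rtg_convert (r := fun a b : Cell n m => Adj a b ∧ (b i : ℕ) = m - 1)
      (r' := fun a b : Cell n m => Adj a b ∧ a ∈ CsetD m i L1 ∧ b ∈ CsetD m i L1)
      (fun d => d ∈ CsetD m i L1)
      (fun a b hr ha => start1_C hface1 hr.2)
      (fun a b hr ha hb => ⟨hr.1, ha, hb⟩) hslab (start1_C hface1 hzCi)
    exact this.2
  have part2 : Relation.ReflTransGen
      (fun a b : Cell n m => Adj a b ∧ a ∈ CsetD m i L1 ∧ b ∈ CsetD m i L1) s c := by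
    have := rtg_convert (r := NBR m i L1)
      (r' := fun a b : Cell n m => Adj a b ∧ a ∈ CsetD m i L1 ∧ b ∈ CsetD m i L1)
      (fun d => d ∈ CsetD m i L1)
      (fun a b hr ha => C_ext ha hr.2.2 hr.1)
      (fun a b hr ha hb => ⟨hr.1, ha, hb⟩) hchain (start1_C hface1 hs)
    exact this.2
  exact part1.trans part2

include hface0 hface1 hGL0 in
lemma Dconn (hm2 : 2 ≤ m) : ∀ c ∉ CsetD m i L1,
    Relation.ReflTransGen
      (fun a b : Cell n m => Adj a b ∧ a ∉ CsetD m i L1 ∧ b ∉ CsetD m i L1)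
      (fun _ => ⟨0, by omega⟩) c := by
  set RD := fun a b : Cell n m => Adj a b ∧ a ∉ CsetD m i L1 ∧ b ∉ CsetD m i L1 with hRD
  set zD : Cell n m := fun _ => ⟨0, by omega⟩ with hzD
  have hzDi : (zD i : ℕ) = 0 := by rw [hzD]
  have hzDB : zD ∈ BsetD m i L1 := start0_B hface0 hGL0 hzDi
  have hRDsymm : Symmetric RD := by
    rintro a b ⟨h1, h2, h3⟩; exact ⟨h1.symm, h3, h2⟩
  have hfromB : ∀ c ∈ BsetD m i L1, Relation.ReflTransGen RD zD c := by
    intro c hcB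
    obtain ⟨hcg, s, hs, hchain⟩ := hcB
    have hsB : s ∈ BsetD m i L1 := start0_B hface0 hGL0 hs
    have part1 : Relation.ReflTransGen RD zD s := by
      have hslab := grid_path_slab (t₁ := i) (K := 0) zD s hzDi hs
      have := rtg_convert (r := fun a b : Cell n m => Adj a b ∧ (b i : ℕ) = 0)
        (r' := RD) (fun d => d ∈ BsetD m i L1)
        (fun a b hr ha => start0_B hface0 hGL0 hr.2)
        (fun a b hr ha hb => ⟨hr.1, B_not_C ha, B_not_C hb⟩) hslab hzDB
      exact this.2
    have part2 : Relation.ReflTransGen RD s c := by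
      have := rtg_convert (r := GAdjR m L1) (r' := RD) (fun d => d ∈ BsetD m i L1)
        (fun a b hr ha => ⟨hr.2.2, ha.2.choose, ha.2.choose_spec.1,
          ha.2.choose_spec.2.tail hr⟩)
        (fun a b hr ha hb => ⟨hr.1, B_not_C ha, B_not_C hb⟩) hchain hsB
      exact this.2
    exact part1.trans part2
  intro c hcC
  by_cases hcB : c ∈ BsetD m i L1
  · exact hfromB c hcB
  · -- reachability set from c within the complement of C
    set Rc : Set (Cell n m) := {d | Relation.ReflTransGen RD c d} with hRc
    have hnode : ∀ d ∈ Rc, d ∉ CsetD m i L1 := by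
      intro d hd
      rw [hRc] at hd
      induction hd with
      | refl => exact hcC
      | @tail b₂ c₂ hab hbc ih => exact hbc.2.2
    by_cases hRB : ∃ d ∈ Rc, d ∈ BsetD m i L1
    · obtain ⟨d, hdR, hdB⟩ := hRB
      have h1 : Relation.ReflTransGen RD zD d := hfromB d hdB
      have h2 : Relation.ReflTransGen RD d c :=
        by haveI : Std.Symm RD := ⟨fun a b h => hRDsymm h⟩; exact Std.Symm.symm _ _ hdR
      exact h1.trans h2
    · push_neg at hRB
      exfalso
      have hclosed : ∀ a b : Cell n m, a ∈ Rc → Adj a b → b ∈ Rc := by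
        intro a b ha hadj
        by_cases hbC : b ∈ CsetD m i L1
        · exact absurd (C_ext hbC (hRB a ha) hadj.symm) (hnode a ha)
        · exact Relation.ReflTransGen.tail ha ⟨hadj, hnode a ha, hbC⟩
      have hzDR : zD ∈ Rc := adj_closed_eq_univ (Relation.ReflTransGen.refl) hclosed zD
      exact hRB zD hzDR hzDB

end Reach


end Stmt11Aux

open Stmt11Aux in
lemma clopen_partition {n : ℕ} (i : Fin n) (X : Set (Fin n → ℝ))
    (hXcomp : IsCompact X) (hnc : ¬ Connects n i X) :
    ∃ K0 K1 : Set (Fin n → ℝ), IsCompact K0 ∧ IsCompact K1 ∧ K0 ∪ K1 = X ∧ K0 ∩ K1 = ∅ ∧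
      X ∩ face n i 0 ⊆ K0 ∧ K0 ∩ face n i 1 = ∅ := by
  classical
  haveI : CompactSpace X := isCompact_iff_compactSpace.mp hXcomp
  have hfc : ∀ v : ℝ, IsClosed (face n i v) := by
    intro v
    have hfeq : face n i v = unitCube n ∩ {x | x i = v} := by
      ext x
      simp only [face, Set.mem_inter_iff, Set.mem_setOf_eq]
    rw [hfeq]
    have h1 : IsClosed (unitCube n) := isClosed_Icc
    exact h1.inter (isClosed_eq (continuous_apply i) continuous_const)
  set A0 : Set ↥X := Subtype.val ⁻¹' (face n i 0) with hA0
  set A1 : Set ↥X := Subtype.val ⁻¹' (face n i 1) with hA1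
  have hA0closed : IsClosed A0 := (hfc 0).preimage continuous_subtype_val
  have hA1closed : IsClosed A1 := (hfc 1).preimage continuous_subtype_val
  have hA0comp : IsCompact A0 := hA0closed.isCompact
  have hA1comp : IsCompact A1 := hA1closed.isCompact
  have hZ : ∀ x : ↥X, x ∈ A0 → ∃ Z : Set ↥X, IsClopen Z ∧ x ∈ Z ∧ Z ∩ A1 = ∅ := by
    intro x hx
    have hcomp_empty : connectedComponent x ∩ A1 = ∅ := by
      by_contra hne
      obtain ⟨y, hy1, hy2⟩ := Set.nonempty_iff_ne_empty.mpr hne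
      refine hnc ⟨Subtype.val '' connectedComponent x, ?_, ?_, ⟨x.val, ?_, hx⟩,
        ⟨y.val, ?_, hy2⟩⟩
      · rintro _ ⟨w, hw, rfl⟩; exact w.2
      · exact (isPreconnected_connectedComponent).image _ continuous_subtype_val.continuousOn
      · exact ⟨x, mem_connectedComponent, rfl⟩
      · exact ⟨y, hy1, rfl⟩
    rw [connectedComponent_eq_iInter_isClopen x, Set.inter_comm] at hcomp_empty
    have hdir : Directed (· ⊇ ·)
        (fun Z : {Z : Set ↥X // IsClopen Z ∧ x ∈ Z} => (Z : Set ↥X)) := by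
      intro Z₁ Z₂
      exact ⟨⟨Z₁.1 ∩ Z₂.1, Z₁.2.1.inter Z₂.2.1, Z₁.2.2, Z₂.2.2⟩,
        Set.inter_subset_left, Set.inter_subset_right⟩
    haveI : Nonempty {Z : Set ↥X // IsClopen Z ∧ x ∈ Z} :=
      ⟨⟨Set.univ, isClopen_univ, Set.mem_univ x⟩⟩
    obtain ⟨Z, hZe⟩ := hA1comp.elim_directed_family_closed _
      (fun Z => Z.2.1.isClosed) hcomp_empty hdir
    exact ⟨Z.1, Z.2.1, Z.2.2, by rw [Set.inter_comm]; exact hZe⟩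
  choose! Z hZclopen hZmem hZempty using hZ
  have hcover : A0 ⊆ ⋃ x : {x : ↥X // x ∈ A0}, Z x.1 :=
    fun w hw => Set.mem_iUnion.mpr ⟨⟨w, hw⟩, hZmem w hw⟩
  obtain ⟨F, hF⟩ := hA0comp.elim_finite_subcover _
    (fun x : {x : ↥X // x ∈ A0} => (hZclopen x.1 x.2).isOpen) hcover
  set Q : Set ↥X := ⋃ x ∈ F, Z x.1 with hQ
  have hQclopen : IsClopen Q := isClopen_biUnion_finset (fun x _ => hZclopen x.1 x.2)
  have hQA1 : Q ∩ A1 = ∅ := by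
    apply Set.eq_empty_iff_forall_notMem.mpr
    rintro w ⟨hwQ, hwA1⟩
    obtain ⟨x, hxF, hwZ⟩ := Set.mem_iUnion₂.mp hwQ
    exact Set.eq_empty_iff_forall_notMem.mp (hZempty x.1 x.2) w ⟨hwZ, hwA1⟩
  refine ⟨Subtype.val '' Q, Subtype.val '' Qᶜ, ?_, ?_, ?_, ?_, ?_, ?_⟩
  · exact (hQclopen.isClosed.isCompact).image continuous_subtype_val
  · exact (hQclopen.compl.isClosed.isCompact).image continuous_subtype_val
  · rw [← Set.image_union, Set.union_compl_self, Set.image_univ, Subtype.range_coe]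
  · rw [← Set.image_inter Subtype.val_injective, Set.inter_compl_self, Set.image_empty]
  · rintro w ⟨hwX, hwf⟩
    have hmem : (⟨w, hwX⟩ : ↥X) ∈ A0 := hwf
    have := hF hmem
    obtain ⟨x, hxF, hwZ⟩ := Set.mem_iUnion₂.mp this
    exact ⟨⟨w, hwX⟩, Set.mem_biUnion hxF hwZ, rfl⟩
  · apply Set.eq_empty_iff_forall_notMem.mpr
    rintro w ⟨⟨wx, hwxQ, rfl⟩, hwf⟩
    exact Set.eq_empty_iff_forall_notMem.mp hQA1 wx ⟨hwxQ, hwf⟩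


open Stmt11Aux in
theorem stmt11 {n : ℕ} (i : Fin n) (U : Set (Fin n → ℝ))
    (hU : OpenInCube n U) (hsep : Separates n i U) :
    ∃ S ⊆ U, IsCompact S ∧ IsPathConnected S ∧ Separates n i S := by
  classical
  obtain ⟨V, hVopen, hUV⟩ := hU
  have hUsub : U ⊆ unitCube n := by rw [hUV]; exact Set.inter_subset_right
  set X : Set (Fin n → ℝ) := unitCube n \ U with hX
  have hcubeclosed : IsClosed (unitCube n) := isClosed_Icc
  have hcubecomp : IsCompact (unitCube n) := isCompact_Icc
  have hXeq : X = unitCube n \ V := by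
    rw [hX, hUV]
    ext x
    simp only [Set.mem_diff, Set.mem_inter_iff]
    tauto
  have hXclosed : IsClosed X := by rw [hXeq]; exact hcubeclosed.sdiff hVopen
  have hXsub : X ⊆ unitCube n := Set.diff_subset
  have hXcomp : IsCompact X := hcubecomp.of_isClosed_subset hXclosed hXsub
  have hfc : ∀ v : ℝ, IsClosed (face n i v) := by
    intro v
    have hfeq : face n i v = unitCube n ∩ {x | x i = v} := by
      ext x
      simp only [face, Set.mem_inter_iff, Set.mem_setOf_eq]
    rw [hfeq]
    exact hcubeclosed.inter (isClosed_eq (continuous_apply i) continuous_const)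
  have hfcomp : ∀ v : ℝ, IsCompact (face n i v) :=
    fun v => hcubecomp.of_isClosed_subset (hfc v) (fun x hx => hx.1)
  obtain ⟨K0, K1, hK0c, hK1c, hK01, hK0K1, hXF0, hK0F1⟩ :=
    clopen_partition i X hXcomp (by rw [hX]; exact hsep)
  have hK0X : K0 ⊆ X := by rw [← hK01]; exact Set.subset_union_left
  have hK1X : K1 ⊆ X := by rw [← hK01]; exact Set.subset_union_right
  set L0 : Set (Fin n → ℝ) := K0 ∪ face n i 0 with hL0
  set L1 : Set (Fin n → ℝ) := K1 ∪ face n i 1 with hL1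
  have hL0comp : IsCompact L0 := hK0c.union (hfcomp 0)
  have hL1comp : IsCompact L1 := hK1c.union (hfcomp 1)
  have hK1F0 : K1 ∩ face n i 0 = ∅ := by
    apply Set.eq_empty_iff_forall_notMem.mpr
    rintro w ⟨hw1, hw0⟩
    have hwK0 : w ∈ K0 := hXF0 ⟨hK1X hw1, hw0⟩
    exact Set.eq_empty_iff_forall_notMem.mp hK0K1 w ⟨hwK0, hw1⟩
  have hdisj : ∀ p ∈ L0, ∀ q ∈ L1, p ≠ q := by
    rintro p (hp | hp) q (hq | hq) rfl
    · exact Set.eq_empty_iff_forall_notMem.mp hK0K1 p ⟨hp, hq⟩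
    · exact Set.eq_empty_iff_forall_notMem.mp hK0F1 p ⟨hp, hq⟩
    · exact Set.eq_empty_iff_forall_notMem.mp hK1F0 p ⟨hq, hp⟩
    · have h0 : p i = 0 := hp.2
      have h1 : p i = 1 := hq.2
      rw [h0] at h1
      norm_num at h1
  have hL0ne : L0.Nonempty := ⟨(0 : Fin n → ℝ), Or.inr ⟨⟨le_rfl, zero_le_one⟩, rfl⟩⟩
  have hL1ne : L1.Nonempty := ⟨(1 : Fin n → ℝ), Or.inr ⟨⟨zero_le_one, le_rfl⟩, rfl⟩⟩
  have hprodcomp : IsCompact (L0 ×ˢ L1) := hL0comp.prod hL1comp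
  have hprodne : (L0 ×ˢ L1).Nonempty := hL0ne.prod hL1ne
  obtain ⟨p₀, hp₀mem, hp₀min⟩ := hprodcomp.exists_isMinOn hprodne
    (continuous_dist.continuousOn (s := L0 ×ˢ L1))
  set δ : ℝ := dist p₀.1 p₀.2 with hδdef
  have hp₀1 : p₀.1 ∈ L0 := (Set.mem_prod.mp hp₀mem).1
  have hp₀2 : p₀.2 ∈ L1 := (Set.mem_prod.mp hp₀mem).2
  have hδpos : 0 < δ := dist_pos.mpr (hdisj _ hp₀1 _ hp₀2)
  have hδle : ∀ p ∈ L0, ∀ q ∈ L1, δ ≤ dist p q :=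
    fun p hp q hq => isMinOn_iff.mp hp₀min (p, q) (Set.mk_mem_prod hp hq)
  obtain ⟨M, hM⟩ := exists_nat_gt (2 / δ)
  set m : ℕ := M + 2 with hm
  haveI : NeZero m := ⟨by omega⟩
  have hm2 : 2 ≤ m := by omega
  have hmR : (0:ℝ) < m := by exact_mod_cast (by omega : 0 < m)
  have h1m : 1 / (m:ℝ) < δ := by
    have h2 : (2:ℝ) / δ < m := lt_of_lt_of_le hM (by exact_mod_cast (by omega : M ≤ m))
    rw [div_lt_iff₀ hδpos] at h2
    rw [div_lt_iff₀ hmR]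
    nlinarith
  have hface0L0 : face n i 0 ⊆ L0 := Set.subset_union_right
  have hface1L1 : face n i 1 ⊆ L1 := Set.subset_union_right
  have hGL0 : ∀ c : Cell n m, (∃ p ∈ gcube m c, p ∈ L0) → GoodC m L1 c := by
    rintro c ⟨p, hp, hpL0⟩ y hy hyL1
    have h1 := hδle p hpL0 y hyL1
    have h2 := dist_le_of_mem_gcube hp hy
    linarith
  set Cs : Set (Cell n m) := CsetD m i L1 with hCs
  set NC : Set (Fin n → ℝ) := ⋃ c ∈ Cs, gcube m c with hNC
  set ND : Set (Fin n → ℝ) := ⋃ c ∈ Csᶜ, gcube m c with hND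
  have hNCclosed : IsClosed NC :=
    Set.Finite.isClosed_biUnion (Set.toFinite _) (fun c _ => isClosed_Icc)
  have hNDclosed : IsClosed ND :=
    Set.Finite.isClosed_biUnion (Set.toFinite _) (fun c _ => isClosed_Icc)
  have hNCsub : NC ⊆ unitCube n := Set.iUnion₂_subset fun c _ => gcube_subset_unitCube c
  set Γ : Set (Fin n → ℝ) := NC ∩ ND with hΓ
  have hcover : ∀ x ∈ unitCube n, x ∈ NC ∪ ND := by
    intro x hx
    obtain ⟨c, hc⟩ := exists_cell (m := m) hx
    by_cases hcC : c ∈ Cs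
    · exact Or.inl (Set.mem_biUnion hcC hc)
    · exact Or.inr (Set.mem_biUnion hcC hc)
  have hΓX : ∀ x ∈ Γ, x ∉ X := by
    rintro x ⟨hxNC, hxND⟩ hxX
    obtain ⟨c, hcC, hxc⟩ := Set.mem_iUnion₂.mp hxNC
    obtain ⟨c', hc'C, hxc'⟩ := Set.mem_iUnion₂.mp hxND
    have hadj : Adj c c' := adj_of_mem_inter hxc hxc'
    have hx01 : x ∈ K0 ∪ K1 := by rw [hK01]; exact hxX
    have hcCB : c ∉ BsetD m i L1 := hcC.1
    rcases hx01 with hx0 | hx1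
    · have hgc : GoodC m L1 c := hGL0 c ⟨x, hxc, Or.inl hx0⟩
      by_cases hc'B : c' ∈ BsetD m i L1
      · exact hcCB (B_ext hc'B hgc hadj)
      · exact hc'C (C_ext hcC hc'B hadj)
    · have hc'B : c' ∉ BsetD m i L1 := by
        intro hB
        exact hB.1 x hxc' (Or.inl hx1)
      exact hc'C (C_ext hcC hc'B hadj)
  have hΓU : Γ ⊆ U := by
    intro x hx
    have hxcube : x ∈ unitCube n := hNCsub hx.1
    have hxX := hΓX x hx
    rw [hX] at hxX
    by_contra hxU
    exact hxX ⟨hxcube, hxU⟩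
  have hΓcomp : IsCompact Γ :=
    hcubecomp.of_isClosed_subset (hNCclosed.inter hNDclosed) (fun x hx => hNCsub hx.1)
  have hsepΓ : Separates n i Γ := by
    rintro ⟨T, hTsub, hTpre, ⟨y, hyT, hy0⟩, ⟨z, hzT, hz1⟩⟩
    have hTcube : ∀ x ∈ T, x ∈ unitCube n := fun x hx => (hTsub hx).1
    have hTΓ : ∀ x ∈ T, x ∉ Γ := fun x hx => (hTsub hx).2
    have hyNC : y ∉ NC := by
      intro hyNC
      obtain ⟨c, hcC, hyc⟩ := Set.mem_iUnion₂.mp hyNC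
      have hdig : (c i : ℕ) = 0 := digit_eq_zero hyc hy0.2
      exact hcC.1 (start0_B hface0L0 hGL0 hdig)
    have hzND : z ∉ ND := by
      intro hzND
      obtain ⟨c, hcC, hzc⟩ := Set.mem_iUnion₂.mp hzND
      have hdig : (c i : ℕ) = m - 1 := digit_eq_last hzc hz1.2
      exact hcC (start1_C hface1L1 hdig)
    have hsub : T ⊆ NDᶜ ∪ NCᶜ := by
      intro x hx
      have hxΓ := hTΓ x hx
      rw [hΓ] at hxΓ
      by_cases hxND : x ∈ ND
      · exact Or.inr (fun hxNC => hxΓ ⟨hxNC, hxND⟩)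
      · exact Or.inl hxND
    have hres := hTpre NDᶜ NCᶜ hNDclosed.isOpen_compl hNCclosed.isOpen_compl hsub
      ⟨z, hzT, hzND⟩ ⟨y, hyT, hyNC⟩
    obtain ⟨x, hxT, hx1, hx2⟩ := hres
    rcases hcover x (hTcube x hxT) with h | h
    exacts [hx2 h, hx1 h]
  set zC : Cell n m := fun t => if t = i then ⟨m-1, by omega⟩ else ⟨0, by omega⟩ with hzCdef
  have hzCi : (zC i : ℕ) = m - 1 := by rw [hzCdef]; simp
  have hzC : zC ∈ Cs := start1_C hface1L1 hzCi
  set zD : Cell n m := fun _ => ⟨0, by omega⟩ with hzDdef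
  have hzDB : zD ∈ BsetD m i L1 := start0_B hface0L0 hGL0 (by rw [hzDdef])
  have hzD : zD ∉ Cs := B_not_C hzDB
  have hpc : IsPathConnected Γ := by
    rw [hΓ, hNC, hND]
    exact interface_pathConnected Cs zC zD hzC hzD
      (Cconn hface0L0 hface1L1 hGL0 hm2) (Dconn hface0L0 hface1L1 hGL0 hm2)
  exact ⟨Γ, hΓU, hΓcomp, hpc, hsepΓ⟩
end

section
/- Let n ≥ 1 and i ∈ {1,…,n}. For each j ≠ i, let A_j ⊆ [0,1]^n be a set, each either compact or open in [0,1]^n, which separates the j-th opposite faces of [0,1]^n. Then ⋂_{j ≠ i} A_j connects the i-th opposite faces of [0,1]^n; in particular, if also A_i separates the i-th opposite faces, then ⋂_{j=1}^n A_j ≠ ∅. -/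
open Finset
open scoped Classical

def FullL (n : ℕ) (L : Fin (n+1) → ℕ) : Prop := ∀ m ≤ n, ∃ k, L k = m

lemma doorCount (n : ℕ) (L : Fin (n+1) → ℕ) (hL : ∀ k, L k ≤ n) :
    ((Finset.univ.filter (fun k : Fin (n+1) => ∀ m < n, ∃ k' ≠ k, L k' = m)).card : ZMod 2)
      = if FullL n L then 1 else 0 := by
  classical
  by_cases hful : FullL n L
  · rw [if_pos hful]
    set L' : Fin (n+1) → Fin (n+1) := fun k => ⟨L k, Nat.lt_succ_of_le (hL k)⟩ with hL'def
    have hsurj : Function.Surjective L' := by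
      intro m
      obtain ⟨k, hk⟩ := hful m (Nat.lt_succ_iff.mp m.isLt)
      exact ⟨k, by simp [hL'def, Fin.ext_iff, hk]⟩
    have hinj : Function.Injective L' := Finite.injective_iff_surjective.mpr hsurj
    obtain ⟨kn, hkn⟩ := hsurj (Fin.last n)
    have heq : (Finset.univ.filter (fun k : Fin (n+1) => ∀ m < n, ∃ k' ≠ k, L k' = m)) = {kn} := by
      ext k
      simp only [mem_filter, mem_univ, true_and, mem_singleton]
      constructor
      · intro hdoor
        by_contra hne
        have hkln : L k < n := by
          rcases lt_or_eq_of_le (hL k) with h | h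
          · exact h
          · exact absurd (hinj (show L' k = L' kn by
              have h2 : L kn = n := congrArg Fin.val hkn
              simp [hL'def, Fin.ext_iff, h, h2])) hne
        obtain ⟨k', hk'ne, hk'⟩ := hdoor (L k) hkln
        exact hk'ne (hinj (show L' k' = L' k by simp [hL'def, Fin.ext_iff, hk']))
      · rintro rfl m hm
        obtain ⟨k', hk'⟩ := hsurj ⟨m, hm.trans (Nat.lt_succ_self n)⟩
        refine ⟨k', ?_, ?_⟩
        · rintro rfl
          rw [hkn] at hk'
          have := congrArg Fin.val hk'
          simp [Fin.val_last] at this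
          omega
        · exact congrArg Fin.val hk'
    rw [heq, card_singleton]; norm_num
  · rw [if_neg hful]
    by_cases hmiss : ∃ m0 < n, ∀ k, L k ≠ m0
    · obtain ⟨m0, hm0, hmz⟩ := hmiss
      have : (Finset.univ.filter (fun k : Fin (n+1) => ∀ m < n, ∃ k' ≠ k, L k' = m)) = ∅ := by
        ext k
        simp only [mem_filter, mem_univ, true_and, Finset.notMem_empty, iff_false]
        intro hdoor
        obtain ⟨k', _, hk'⟩ := hdoor m0 hm0
        exact hmz k' hk'
      rw [this]; simp
    · push_neg at hmiss
      have hcov : ∀ m < n, ∃ k, L k = m := fun m hm => by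
        obtain ⟨k, hk⟩ := hmiss m hm; exact ⟨k, hk⟩
      have hnot_n : ∀ k, L k ≠ n := by
        intro k hk
        apply hful
        intro m hm
        rcases lt_or_eq_of_le hm with h | h
        · exact hcov m h
        · exact ⟨k, by rw [hk, h]⟩
      have hlt : ∀ k, L k < n := fun k => lt_of_le_of_ne (hL k) (hnot_n k)
      set L'' : Fin (n+1) → Fin n := fun k => ⟨L k, hlt k⟩ with hL''def
      obtain ⟨k1, k2, hk12, hdup⟩ := Fintype.exists_ne_map_eq_of_card_lt L'' (by simp)
      have hinj1 : Set.InjOn L'' (Finset.univ.erase k1 : Finset (Fin (n+1))) := by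
        rw [← Finset.card_image_iff]
        have himg : (Finset.univ.erase k1).image L'' = Finset.univ := by
          apply Finset.eq_univ_of_forall
          intro m
          rw [Finset.mem_image]
          obtain ⟨k, hk⟩ := hcov m.1 m.2
          by_cases hkk1 : k = k1
          · exact ⟨k2, by simp [hk12.symm], by subst hkk1; rw [← hdup]; simp [hL''def, Fin.ext_iff, hk]⟩
          · exact ⟨k, by simp [hkk1], by simp [hL''def, Fin.ext_iff, hk]⟩
        rw [himg, card_univ, Finset.card_erase_of_mem (mem_univ _), card_univ]
        simp
      have heq : (Finset.univ.filter (fun k : Fin (n+1) => ∀ m < n, ∃ k' ≠ k, L k' = m)) = {k1, k2} := by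
        ext k
        simp only [mem_filter, mem_univ, true_and, mem_insert, mem_singleton]
        constructor
        · intro hdoor
          by_contra hnk
          push_neg at hnk
          obtain ⟨k', hk'ne, hk'⟩ := hdoor (L k) (hlt k)
          by_cases hk'k1 : k' = k1
          · subst hk'k1
            have : L'' k = L'' k2 := by
              simp [hL''def, Fin.ext_iff, hk'.symm]
              have := congrArg Fin.val hdup; simp [hL''def] at this
              omega
            exact hnk.2 (hinj1 (by simp [hnk.1]) (by simp [hk12.symm]) this)
          · have : L'' k' = L'' k := by simp [hL''def, Fin.ext_iff, hk']
            exact hk'ne (hinj1 (by simp [hk'k1]) (by simp [hnk.1]) this)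
        · intro hk m hm
          obtain ⟨km, hkm⟩ := hcov m hm
          by_cases hkmk : km = k
          · rcases hk with rfl | rfl
            · refine ⟨k2, hk12.symm, ?_⟩
              have := congrArg Fin.val hdup; simp [hL''def] at this
              subst hkmk; omega
            · refine ⟨k1, hk12, ?_⟩
              have := congrArg Fin.val hdup; simp [hL''def] at this
              subst hkmk; omega
          · exact ⟨km, hkmk, hkm⟩
      rw [heq, Finset.card_pair hk12]
      decide

def vtx {n : ℕ} (b : Fin n → ℕ) (π : Equiv.Perm (Fin n)) (k : Fin (n+1)) : Fin n → ℕ :=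
  fun j => b j + if ((π.symm j : ℕ) < (k : ℕ)) then 1 else 0

def SF (n M : ℕ) : Finset ((Fin n → ℕ) × Equiv.Perm (Fin n)) :=
  (Fintype.piFinset fun _ => Finset.range M) ×ˢ Finset.univ

lemma mem_SF {n M : ℕ} {s : (Fin n → ℕ) × Equiv.Perm (Fin n)} :
    s ∈ SF n M ↔ ∀ j, s.1 j < M := by
  simp [SF, Fintype.mem_piFinset]

def IsFullS (n : ℕ) (ℓ : (Fin n → ℕ) → ℕ) (s : (Fin n → ℕ) × Equiv.Perm (Fin n)) : Prop :=
  ∀ m ≤ n, ∃ k : Fin (n+1), ℓ (vtx s.1 s.2 k) = m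

def DoorAtS (n : ℕ) (ℓ : (Fin n → ℕ) → ℕ) (s : (Fin n → ℕ) × Equiv.Perm (Fin n))
    (k : Fin (n+1)) : Prop :=
  ∀ m < n, ∃ k' ≠ k, ℓ (vtx s.1 s.2 k') = m

lemma vtx_le {n : ℕ} (b : Fin n → ℕ) (π : Equiv.Perm (Fin n)) (k : Fin (n+1)) (j : Fin n) :
    vtx b π k j ≤ b j + 1 := by
  unfold vtx; split <;> omega

lemma vtx_bound {n M : ℕ} {b : Fin n → ℕ} (hb : ∀ j, b j < M) (π : Equiv.Perm (Fin n))
    (k : Fin (n+1)) (j : Fin n) : vtx b π k j ≤ M :=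
  le_trans (vtx_le b π k j) (hb j)

lemma finRotate_val {m : ℕ} (y : Fin (m+1)) :
    ((finRotate (m+1)) y : ℕ) = if (y : ℕ) = m then 0 else (y : ℕ) + 1 := by
  rw [finRotate_succ_apply, Fin.val_add_one]
  by_cases h : y = Fin.last m
  · simp [h, Fin.val_last]
  · rw [if_neg h, if_neg (by simpa [Fin.ext_iff, Fin.val_last] using h)]

lemma perm_mul_symm {n : ℕ} (π σ : Equiv.Perm (Fin n)) (j : Fin n) :
    (π * σ).symm j = σ.symm (π.symm j) := rfl

lemma vtx_swap {m : ℕ} (b : Fin (m+1) → ℕ) (π : Equiv.Perm (Fin (m+1))) (t : ℕ) (ht : t + 1 < m + 1)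
    (k' : Fin (m+2)) (hk' : (k' : ℕ) ≠ t + 1) :
    vtx b (π * Equiv.swap ⟨t, by omega⟩ ⟨t+1, ht⟩) k' = vtx b π k' := by
  funext j
  unfold vtx
  rw [perm_mul_symm, Equiv.symm_swap]
  set x := π.symm j with hx
  rcases eq_or_ne x ⟨t, by omega⟩ with h | h
  · rw [h, Equiv.swap_apply_left]
    have h1 : ((⟨t+1, ht⟩ : Fin (m+1)) : ℕ) = t + 1 := rfl
    have h2 : ((⟨t, by omega⟩ : Fin (m+1)) : ℕ) = t := rfl
    rw [h1, h2]
    congr 1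
    have : (t + 1 < (k' : ℕ)) ↔ (t < (k' : ℕ)) := by omega
    simp [this]
  · rcases eq_or_ne x ⟨t+1, ht⟩ with h2 | h2
    · rw [h2, Equiv.swap_apply_right]
      have h1 : ((⟨t+1, ht⟩ : Fin (m+1)) : ℕ) = t + 1 := rfl
      have h3 : ((⟨t, by omega⟩ : Fin (m+1)) : ℕ) = t := rfl
      rw [h1, h3]
      congr 1
      have : (t + 1 < (k' : ℕ)) ↔ (t < (k' : ℕ)) := by omega
      simp [this]
    · rw [Equiv.swap_apply_of_ne_of_ne h h2]

lemma vtx_rot {m : ℕ} (b : Fin (m+1) → ℕ) (π : Equiv.Perm (Fin (m+1)))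
    (k : ℕ) (hk : k ≤ m) :
    vtx (fun j => b j + if j = π 0 then 1 else 0) (π * finRotate (m+1)) ⟨k, by omega⟩
      = vtx b π ⟨k+1, by omega⟩ := by
  funext j
  unfold vtx
  rw [perm_mul_symm]
  set y := (finRotate (m+1)).symm (π.symm j) with hy
  have hry : π.symm j = finRotate (m+1) y := by rw [hy, Equiv.apply_symm_apply]
  have hval : ((π.symm j : Fin (m+1)) : ℕ) = if (y : ℕ) = m then 0 else (y : ℕ) + 1 := by
    rw [hry, finRotate_val]
  show (b j + if j = π 0 then 1 else 0) + (if (y:ℕ) < k then 1 else 0)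
      = b j + (if ((π.symm j : Fin (m+1)) : ℕ) < k + 1 then 1 else 0)
  by_cases hym : (y : ℕ) = m
  · have hj : j = π 0 := by
      have : π.symm j = 0 := by
        apply Fin.ext; rw [hval, if_pos hym]; rfl
      rw [← this, Equiv.apply_symm_apply]
    rw [if_pos hj, hval, if_pos hym, hym]
    rw [if_neg (by omega : ¬ (m < k)), if_pos (by omega : (0:ℕ) < k + 1)]
  · have hj : j ≠ π 0 := by
      intro hc
      have : π.symm j = 0 := by rw [hc, Equiv.symm_apply_apply]
      rw [this] at hval
      simp [if_neg hym] at hval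
    rw [if_neg hj, hval, if_neg hym]
    rcases lt_or_ge ((y:ℕ)) k with h | h
    · rw [if_pos h, if_pos (by omega)]
    · rw [if_neg (by omega), if_neg (by omega)]

def permUp {m : ℕ} (ρ : Equiv.Perm (Fin m)) : Equiv.Perm (Fin (m+1)) :=
  ((finSuccEquiv m).trans (Equiv.optionCongr ρ)).trans finSuccEquivLast.symm

lemma permUp_zero {m : ℕ} (ρ : Equiv.Perm (Fin m)) : permUp ρ 0 = Fin.last m := by
  simp [permUp]

lemma permUp_succ {m : ℕ} (ρ : Equiv.Perm (Fin m)) (i : Fin m) :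
    permUp ρ i.succ = (ρ i).castSucc := by
  simp [permUp]

lemma permUp_symm_last {m : ℕ} (ρ : Equiv.Perm (Fin m)) :
    (permUp ρ).symm (Fin.last m) = 0 := by
  rw [Equiv.symm_apply_eq, permUp_zero]

lemma permUp_symm_castSucc {m : ℕ} (ρ : Equiv.Perm (Fin m)) (j : Fin m) :
    (permUp ρ).symm j.castSucc = (ρ.symm j).succ := by
  rw [Equiv.symm_apply_eq, permUp_succ, Equiv.apply_symm_apply]

lemma vtx_snoc {m M : ℕ} (hM : 0 < M) (b' : Fin m → ℕ) (ρ : Equiv.Perm (Fin m)) (k : Fin (m+1)) :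
    vtx (Fin.snoc b' (M-1)) (permUp ρ) k.succ = Fin.snoc (vtx b' ρ k) M := by
  funext j
  refine Fin.lastCases ?_ ?_ j
  · rw [Fin.snoc_last]
    unfold vtx
    rw [Fin.snoc_last, permUp_symm_last]
    have : ((0 : Fin (m+1)) : ℕ) < (k.succ : ℕ) := by simp [Fin.val_succ]
    rw [if_pos this]
    omega
  · intro j'
    rw [Fin.snoc_castSucc]
    unfold vtx
    rw [Fin.snoc_castSucc, permUp_symm_castSucc]
    congr 1
    have h1 : ((ρ.symm j').succ : ℕ) = (ρ.symm j' : ℕ) + 1 := Fin.val_succ _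
    have h2 : (k.succ : ℕ) = (k : ℕ) + 1 := Fin.val_succ _
    rw [h1, h2]
    have : ((ρ.symm j' : ℕ) + 1 < (k:ℕ) + 1) ↔ ((ρ.symm j' : ℕ) < (k:ℕ)) := by omega
    simp [this]

def iot {m : ℕ} (p : ((Fin (m+1) → ℕ) × Equiv.Perm (Fin (m+1))) × Fin (m+2)) :
    ((Fin (m+1) → ℕ) × Equiv.Perm (Fin (m+1))) × Fin (m+2) :=
  if h0 : (p.2 : ℕ) = 0 then
    ((fun j => p.1.1 j + if j = p.1.2 0 then 1 else 0, p.1.2 * finRotate (m+1)), Fin.last (m+1))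
  else if h1 : (p.2 : ℕ) = m+1 then
    ((fun j => p.1.1 j - if j = p.1.2 (Fin.last m) then 1 else 0, p.1.2 * (finRotate (m+1))⁻¹), 0)
  else
    ((p.1.1, p.1.2 * Equiv.swap ⟨(p.2:ℕ)-1, by have := p.2.isLt; omega⟩
        ⟨(p.2:ℕ), by have := p.2.isLt; omega⟩), p.2)

lemma finRotate_last_eq {m : ℕ} : (finRotate (m+1)) (Fin.last m) = 0 := by
  rw [finRotate_succ_apply, Fin.last_add_one]

lemma finRotate_symm_zero {m : ℕ} : (finRotate (m+1)).symm 0 = Fin.last m := by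
  rw [Equiv.symm_apply_eq, finRotate_last_eq]

-- door transfer for the rotation case
lemma door_rot {m M : ℕ} (ℓ : (Fin (m+1) → ℕ) → ℕ) (b : Fin (m+1) → ℕ)
    (π : Equiv.Perm (Fin (m+1))) :
    DoorAtS (m+1) ℓ (b, π) 0 ↔
      DoorAtS (m+1) ℓ (fun j => b j + if j = π 0 then 1 else 0, π * finRotate (m+1))
        (Fin.last (m+1)) := by
  constructor
  · intro hd m' hm'
    obtain ⟨k', hk'ne, hk'⟩ := hd m' hm'
    have hk'0 : (k' : ℕ) ≠ 0 := fun h => hk'ne (Fin.ext h)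
    have hk'lt : (k' : ℕ) < m + 2 := k'.isLt
    refine ⟨⟨(k' : ℕ) - 1, by omega⟩, ?_, ?_⟩
    · intro h
      have := congrArg Fin.val h
      simp [Fin.val_last] at this
      omega
    · show ℓ (vtx _ (π * finRotate (m+1)) ⟨(k':ℕ)-1, _⟩) = m'
      have h1 : vtx (fun j => b j + if j = π 0 then 1 else 0) (π * finRotate (m+1))
          ⟨(k':ℕ)-1, by omega⟩ = vtx b π ⟨((k':ℕ)-1)+1, by omega⟩ := vtx_rot b π _ (by omega)
      rw [h1]
      have h2 : (⟨((k':ℕ)-1)+1, by omega⟩ : Fin (m+2)) = k' := by apply Fin.ext; simp; omega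
      rw [h2]; exact hk'
  · intro hd m' hm'
    obtain ⟨k'', hk''ne, hk''⟩ := hd m' hm'
    have hk''lt : (k'' : ℕ) < m + 2 := k''.isLt
    have hk''le : (k'' : ℕ) ≤ m := by
      rcases lt_or_eq_of_le (Nat.lt_succ_iff.mp hk''lt) with h | h
      · exact Nat.lt_succ_iff.mp h
      · exact absurd (Fin.ext (by simp [Fin.val_last, h]) : k'' = Fin.last (m+1)) hk''ne
    refine ⟨⟨(k'':ℕ)+1, by omega⟩, ?_, ?_⟩
    · intro h
      have := congrArg Fin.val h
      simp at this
    · have h0 : (⟨(k'':ℕ), by omega⟩ : Fin (m+2)) = k'' := Fin.ext rfl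
      have h1 := vtx_rot (m := m) b π (k'':ℕ) hk''le
      rw [h0] at h1
      show ℓ (vtx b π ⟨(k'':ℕ)+1, _⟩) = m'
      rw [← h1]; exact hk''

-- door transfer for the swap case
lemma door_swap {m : ℕ} (ℓ : (Fin (m+1) → ℕ) → ℕ) (b : Fin (m+1) → ℕ)
    (π : Equiv.Perm (Fin (m+1))) (t : ℕ) (ht : t + 1 < m + 1) (k : Fin (m+2))
    (hk : (k : ℕ) = t + 1) :
    DoorAtS (m+1) ℓ (b, π) k ↔
      DoorAtS (m+1) ℓ (b, π * Equiv.swap ⟨t, by omega⟩ ⟨t+1, ht⟩) k := by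
  have key : ∀ k' : Fin (m+2), k' ≠ k →
      vtx b (π * Equiv.swap ⟨t, by omega⟩ ⟨t+1, ht⟩) k' = vtx b π k' := by
    intro k' hk'
    exact vtx_swap b π t ht k' (fun h => hk' (Fin.ext (h.trans hk.symm)))
  constructor
  · intro hd m' hm'
    obtain ⟨k', hk'ne, hk'⟩ := hd m' hm'
    exact ⟨k', hk'ne, by rw [key k' hk'ne]; exact hk'⟩
  · intro hd m' hm'
    obtain ⟨k', hk'ne, hk'⟩ := hd m' hm'
    exact ⟨k', hk'ne, by rw [← key k' hk'ne]; exact hk'⟩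

lemma last_pos {m M : ℕ} (ℓ : (Fin (m+1) → ℕ) → ℕ) (b : Fin (m+1) → ℕ)
    (π : Equiv.Perm (Fin (m+1))) (hb : ∀ j, b j < M)
    (h0 : ∀ v (j : Fin (m+1)), (∀ j', v j' ≤ M) → v j = 0 → ℓ v ≠ (j:ℕ))
    (hd : DoorAtS (m+1) ℓ (b, π) (Fin.last (m+1))) :
    0 < b (π (Fin.last m)) := by
  by_contra h
  push_neg at h
  have hb0 : b (π (Fin.last m)) = 0 := by omega
  obtain ⟨k', hk'ne, hk'⟩ := hd (π (Fin.last m) : ℕ) (Fin.isLt _)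
  have hvb : ∀ j', vtx b π k' j' ≤ M := vtx_bound hb π k'
  have hv0 : vtx b π k' (π (Fin.last m)) = 0 := by
    unfold vtx
    rw [Equiv.symm_apply_apply]
    have hne : (k' : ℕ) ≠ m + 1 := by
      intro hc
      exact hk'ne (Fin.ext (by rw [hc]; rfl))
    have hlt := k'.isLt
    rw [if_neg (by rw [Fin.val_last]; omega)]
    omega
  exact h0 _ (π (Fin.last m)) hvb hv0 hk'

lemma top_dir {m M : ℕ} (hM : 0 < M) (ℓ : (Fin (m+1) → ℕ) → ℕ) (b : Fin (m+1) → ℕ)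
    (π : Equiv.Perm (Fin (m+1))) (hb : ∀ j, b j < M)
    (hN : ∀ v (j : Fin (m+1)), (∀ j', v j' ≤ M) → v j = M → ℓ v ≤ (j:ℕ))
    (hd : DoorAtS (m+1) ℓ (b, π) 0) (htop : b (π 0) + 1 = M) :
    π 0 = Fin.last m := by
  obtain ⟨k', hk'ne, hk'⟩ := hd m (by omega)
  have hvb : ∀ j', vtx b π k' j' ≤ M := vtx_bound hb π k'
  have hvM : vtx b π k' (π 0) = M := by
    unfold vtx
    rw [Equiv.symm_apply_apply]
    have hk'0 : (k' : ℕ) ≠ 0 := by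
      intro hc; exact hk'ne (Fin.ext hc)
    rw [if_pos (show ((0 : Fin (m+1)) : ℕ) < (k' : ℕ) from Nat.pos_of_ne_zero hk'0)]
    omega
  have hle := hN _ (π 0) hvb hvM
  rw [hk'] at hle
  have := (π 0).isLt
  apply Fin.ext
  rw [Fin.val_last]
  omega

section IotLemmas
variable {m : ℕ} (p : ((Fin (m+1) → ℕ) × Equiv.Perm (Fin (m+1))) × Fin (m+2))

lemma iot_eq0 (h0 : (p.2 : ℕ) = 0) :
    iot p = ((fun j => p.1.1 j + if j = p.1.2 0 then 1 else 0,
      p.1.2 * finRotate (m+1)), Fin.last (m+1)) := by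
  unfold iot; rw [dif_pos h0]

lemma iot_eqtop (h1 : (p.2 : ℕ) = m+1) :
    iot p = ((fun j => p.1.1 j - if j = p.1.2 (Fin.last m) then 1 else 0,
      p.1.2 * (finRotate (m+1))⁻¹), 0) := by
  unfold iot; rw [dif_neg (by omega), dif_pos h1]

lemma iot_eqmid (h0 : (p.2 : ℕ) ≠ 0) (h1 : (p.2 : ℕ) ≠ m+1) :
    iot p = ((p.1.1, p.1.2 * Equiv.swap ⟨(p.2:ℕ)-1, by have := p.2.isLt; omega⟩
        ⟨(p.2:ℕ), by have := p.2.isLt; omega⟩), p.2) := by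
  unfold iot; rw [dif_neg h0, dif_neg h1]

lemma iot_ne : iot p ≠ p := by
  rcases eq_or_ne ((p.2 : ℕ)) 0 with h0 | h0
  · rw [iot_eq0 p h0]
    intro hc
    have := congrArg (fun q => ((q.2 : Fin (m+2)) : ℕ)) hc
    simp [Fin.val_last] at this
    omega
  · rcases eq_or_ne ((p.2 : ℕ)) (m+1) with h1 | h1
    · rw [iot_eqtop p h1]
      intro hc
      have := congrArg (fun q => ((q.2 : Fin (m+2)) : ℕ)) hc
      simp at this
      omega
    · rw [iot_eqmid p h0 h1]
      intro hc
      have hπ := congrArg (fun q => q.1.2) hc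
      simp only at hπ
      have happ := DFunLike.congr_fun hπ (⟨(p.2:ℕ)-1, by have := p.2.isLt; omega⟩ : Fin (m+1))
      rw [Equiv.Perm.mul_apply, Equiv.swap_apply_left] at happ
      have := congrArg Fin.val (p.1.2.injective happ)
      simp at this
      omega

end IotLemmas

section IotMain
variable {m M : ℕ}

def goodP (M : ℕ) (ℓ : (Fin (m+1) → ℕ) → ℕ)
    (p : ((Fin (m+1) → ℕ) × Equiv.Perm (Fin (m+1))) × Fin (m+2)) : Prop :=
  (∀ j, p.1.1 j < M) ∧ DoorAtS (m+1) ℓ p.1 p.2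

def bdP (M : ℕ) (p : ((Fin (m+1) → ℕ) × Equiv.Perm (Fin (m+1))) × Fin (m+2)) : Prop :=
  (p.2 : ℕ) = 0 ∧ p.1.1 (p.1.2 0) + 1 = M

lemma rot_inv_zero {m : ℕ} (π : Equiv.Perm (Fin (m+1))) :
    (π * (finRotate (m+1))⁻¹) 0 = π (Fin.last m) := by
  rw [Equiv.Perm.mul_apply]; congr 1

lemma rot_last {m : ℕ} (π : Equiv.Perm (Fin (m+1))) :
    (π * finRotate (m+1)) (Fin.last m) = π 0 := by
  rw [Equiv.Perm.mul_apply, finRotate_succ_apply, Fin.last_add_one]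

variable (ℓ : (Fin (m+1) → ℕ) → ℕ)

lemma iot_good
    (h0 : ∀ v (j : Fin (m+1)), (∀ j', v j' ≤ M) → v j = 0 → ℓ v ≠ (j:ℕ))
    (p : ((Fin (m+1) → ℕ) × Equiv.Perm (Fin (m+1))) × Fin (m+2))
    (hp : goodP M ℓ p) (hb : ¬ bdP M p) :
    goodP M ℓ (iot p) ∧ ¬ bdP M (iot p) := by
  obtain ⟨hbnd, hdoor⟩ := hp
  rcases eq_or_ne ((p.2 : ℕ)) 0 with hk0 | hk0
  · -- k = 0 case
    have hp2 : p.2 = 0 := Fin.ext hk0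
    have hbM : p.1.1 (p.1.2 0) + 1 ≠ M := fun hc => hb ⟨hk0, hc⟩
    rw [iot_eq0 p hk0]
    have hd0 : DoorAtS (m+1) ℓ (p.1.1, p.1.2) 0 := by rw [← hp2]; exact hdoor
    refine ⟨⟨?_, ?_⟩, ?_⟩
    · intro j
      show p.1.1 j + (if j = p.1.2 0 then 1 else 0) < M
      by_cases hj : j = p.1.2 0
      · rw [if_pos hj, hj]
        have := hbnd (p.1.2 0); omega
      · rw [if_neg hj]
        have := hbnd j; omega
    · exact (door_rot (M := M) ℓ p.1.1 p.1.2).mp hd0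
    · intro hc
      obtain ⟨hc1, _⟩ := hc
      rw [Fin.val_last] at hc1; omega
  · rcases eq_or_ne ((p.2 : ℕ)) (m+1) with hk1 | hk1
    · -- k = last case
      have hp2 : p.2 = Fin.last (m+1) := Fin.ext (by rw [Fin.val_last]; exact hk1)
      have hdl : DoorAtS (m+1) ℓ (p.1.1, p.1.2) (Fin.last (m+1)) := by
        rw [← hp2]; exact hdoor
      have hpos : 0 < p.1.1 (p.1.2 (Fin.last m)) := last_pos ℓ p.1.1 p.1.2 hbnd h0 hdl
      rw [iot_eqtop p hk1]
      set c : Fin (m+1) → ℕ :=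
        fun j => p.1.1 j - if j = p.1.2 (Fin.last m) then 1 else 0 with hc_def
      set τ : Equiv.Perm (Fin (m+1)) := p.1.2 * (finRotate (m+1))⁻¹ with hτ_def
      have hτ0 : τ 0 = p.1.2 (Fin.last m) := by rw [hτ_def]; exact rot_inv_zero _
      have hτR : τ * finRotate (m+1) = p.1.2 := by rw [hτ_def]; exact inv_mul_cancel_right _ _
      have heq : (fun j => c j + if j = τ 0 then 1 else 0) = p.1.1 := by
        funext j
        rw [hτ0, hc_def]
        show (p.1.1 j - if j = p.1.2 (Fin.last m) then 1 else 0)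
            + (if j = p.1.2 (Fin.last m) then 1 else 0) = p.1.1 j
        by_cases hj : j = p.1.2 (Fin.last m) <;> simp [hj] <;> omega
      refine ⟨⟨?_, ?_⟩, ?_⟩
      · intro j
        show p.1.1 j - (if j = p.1.2 (Fin.last m) then 1 else 0) < M
        have := hbnd j; split <;> omega
      · exact (door_rot (M := M) ℓ c τ).mpr (by rw [heq, hτR]; exact hdl)
      · intro hcbd
        obtain ⟨_, hc2⟩ := hcbd
        have hcv : c (τ 0) + 1 = p.1.1 (p.1.2 (Fin.last m)) := by
          rw [hτ0, hc_def]
          show (p.1.1 (p.1.2 (Fin.last m))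
              - if p.1.2 (Fin.last m) = p.1.2 (Fin.last m) then 1 else 0) + 1
              = p.1.1 (p.1.2 (Fin.last m))
          rw [if_pos rfl]
          omega
        have hc2' : c (τ 0) + 1 = M := hc2
        have hlt2 := hbnd (p.1.2 (Fin.last m))
        omega
    · -- interior case
      have hlt := p.2.isLt
      rw [iot_eqmid p hk0 hk1]
      have hiff := door_swap ℓ p.1.1 p.1.2 ((p.2:ℕ)-1) (by omega) p.2 (by omega)
      have hfin : (⟨(p.2:ℕ)-1+1, by omega⟩ : Fin (m+1)) = ⟨(p.2:ℕ), by omega⟩ :=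
        Fin.ext (by simp; omega)
      rw [hfin] at hiff
      refine ⟨⟨hbnd, ?_⟩, ?_⟩
      · exact hiff.mp hdoor
      · intro hcbd
        exact hk0 hcbd.1

lemma iot_invol
    (h0 : ∀ v (j : Fin (m+1)), (∀ j', v j' ≤ M) → v j = 0 → ℓ v ≠ (j:ℕ))
    (p : ((Fin (m+1) → ℕ) × Equiv.Perm (Fin (m+1))) × Fin (m+2))
    (hp : goodP M ℓ p) : iot (iot p) = p := by
  obtain ⟨hbnd, hdoor⟩ := hp
  rcases eq_or_ne ((p.2 : ℕ)) 0 with hk0 | hk0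
  · rw [iot_eq0 p hk0]
    rw [iot_eqtop ((fun j => p.1.1 j + if j = p.1.2 0 then 1 else 0,
      p.1.2 * finRotate (m+1)), Fin.last (m+1)) (by rw [Fin.val_last])]
    refine Prod.ext (Prod.ext ?_ ?_) ?_
    · show (fun j => (p.1.1 j + if j = p.1.2 0 then 1 else 0)
        - if j = (p.1.2 * finRotate (m+1)) (Fin.last m) then 1 else 0) = p.1.1
      funext j
      rw [rot_last]
      show (p.1.1 j + if j = p.1.2 0 then 1 else 0) - (if j = p.1.2 0 then 1 else 0) = p.1.1 j
      split <;> omega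
    · show p.1.2 * finRotate (m+1) * (finRotate (m+1))⁻¹ = p.1.2
      exact mul_inv_cancel_right _ _
    · show (0 : Fin (m+2)) = p.2
      exact Fin.ext (by simp [hk0])
  · rcases eq_or_ne ((p.2 : ℕ)) (m+1) with hk1 | hk1
    · have hp2 : p.2 = Fin.last (m+1) := Fin.ext (by rw [Fin.val_last]; exact hk1)
      have hdl : DoorAtS (m+1) ℓ (p.1.1, p.1.2) (Fin.last (m+1)) := by
        rw [← hp2]; exact hdoor
      have hpos : 0 < p.1.1 (p.1.2 (Fin.last m)) := last_pos ℓ p.1.1 p.1.2 hbnd h0 hdl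
      rw [iot_eqtop p hk1]
      rw [iot_eq0 ((fun j => p.1.1 j - if j = p.1.2 (Fin.last m) then 1 else 0,
        p.1.2 * (finRotate (m+1))⁻¹), 0) rfl]
      refine Prod.ext (Prod.ext ?_ ?_) ?_
      · show (fun j => (p.1.1 j - if j = p.1.2 (Fin.last m) then 1 else 0)
          + if j = (p.1.2 * (finRotate (m+1))⁻¹) 0 then 1 else 0) = p.1.1
        funext j
        rw [rot_inv_zero]
        show (p.1.1 j - if j = p.1.2 (Fin.last m) then 1 else 0)
            + (if j = p.1.2 (Fin.last m) then 1 else 0) = p.1.1 j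
        by_cases hj : j = p.1.2 (Fin.last m) <;> simp [hj] <;> omega
      · show p.1.2 * (finRotate (m+1))⁻¹ * finRotate (m+1) = p.1.2
        exact inv_mul_cancel_right _ _
      · show Fin.last (m+1) = p.2
        exact Fin.ext (by rw [Fin.val_last, hk1])
    · have hlt := p.2.isLt
      rw [iot_eqmid p hk0 hk1]
      simp only [iot]
      rw [dif_neg (show ¬((p.2:ℕ) = 0) from hk0), dif_neg (show ¬((p.2:ℕ) = m+1) from hk1)]
      refine Prod.ext (Prod.ext rfl ?_) rfl
      rw [mul_assoc, Equiv.swap_mul_self, mul_one]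

lemma permUp_exists {m : ℕ} (π : Equiv.Perm (Fin (m+1))) (hπ : π 0 = Fin.last m) :
    ∃ ρ : Equiv.Perm (Fin m), permUp ρ = π := by
  have hne : ∀ i : Fin m, π i.succ ≠ Fin.last m := by
    intro i hc
    rw [← hπ] at hc
    exact (Fin.succ_ne_zero i) (π.injective hc)
  set f : Fin m → Fin m := fun i => (π i.succ).castPred (hne i) with hf
  have hinj : Function.Injective f := by
    intro i1 i2 h
    have : π i1.succ = π i2.succ := by
      rw [← Fin.castSucc_castPred (π i1.succ) (hne i1), ← Fin.castSucc_castPred (π i2.succ) (hne i2)]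
      rw [hf] at h
      simp only at h
      rw [h]
    exact Fin.succ_injective _ (π.injective this)
  refine ⟨Equiv.ofBijective f (Finite.injective_iff_bijective.mp hinj), ?_⟩
  apply Equiv.ext
  intro k
  refine Fin.cases ?_ ?_ k
  · rw [permUp_zero, hπ]
  · intro i
    rw [permUp_succ]
    show ((Equiv.ofBijective f _) i).castSucc = π i.succ
    rw [Equiv.ofBijective_apply, hf]
    simp only [Fin.castSucc_castPred]

end IotMain

theorem kuhn : ∀ (n M : ℕ), 0 < M → ∀ ℓ : (Fin n → ℕ) → ℕ,
    (∀ v, (∀ j, v j ≤ M) → ℓ v ≤ n) →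
    (∀ v (j : Fin n), (∀ j', v j' ≤ M) → v j = 0 → ℓ v ≠ (j:ℕ)) →
    (∀ v (j : Fin n), (∀ j', v j' ≤ M) → v j = M → ℓ v ≤ (j:ℕ)) →
    (((SF n M).filter (fun s => IsFullS n ℓ s)).card : ZMod 2) = 1 := by
  intro n
  induction n with
  | zero =>
    intro M hM ℓ hl h0 hN
    have hfull : ∀ s ∈ SF 0 M, IsFullS 0 ℓ s := by
      intro s _ m' hm'
      have hm0 : m' = 0 := by omega
      subst hm0
      refine ⟨0, ?_⟩
      have := hl (vtx s.1 s.2 0) (fun j => j.elim0)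
      omega
    rw [Finset.filter_true_of_mem hfull]
    have hcard : (SF 0 M).card = 1 := by
      rw [SF, Finset.card_product, Finset.card_univ]
      rw [Fintype.card_piFinset]
      simp [Fintype.card_perm]
    rw [hcard]; norm_num
  | succ m ih =>
    intro M hM ℓ hl h0 hN
    classical
    set P := (SF (m+1) M ×ˢ (Finset.univ : Finset (Fin (m+2)))).filter
      (fun p => DoorAtS (m+1) ℓ p.1 p.2) with hPdef
    have memP : ∀ p, p ∈ P ↔ ((∀ j, p.1.1 j < M) ∧ DoorAtS (m+1) ℓ p.1 p.2) := by
      intro p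
      rw [hPdef, Finset.mem_filter, Finset.mem_product]
      constructor
      · rintro ⟨⟨h1, _⟩, h2⟩
        exact ⟨mem_SF.mp h1, h2⟩
      · rintro ⟨h1, h2⟩
        exact ⟨⟨mem_SF.mpr h1, Finset.mem_univ _⟩, h2⟩
    -- Step A : full count = door-pair count
    have stepA : (((SF (m+1) M).filter (fun s => IsFullS (m+1) ℓ s)).card : ZMod 2)
        = (P.card : ZMod 2) := by
      rw [hPdef, card_filter, card_filter, Finset.sum_product]
      push_cast
      refine Finset.sum_congr rfl ?_
      intro s hs
      have hLb : ∀ k : Fin (m+2), ℓ (vtx s.1 s.2 k) ≤ m + 1 :=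
        fun k => hl _ (fun j => vtx_bound (mem_SF.mp hs) s.2 k j)
      have hdc := doorCount (m+1) (fun k => ℓ (vtx s.1 s.2 k)) hLb
      rw [card_filter] at hdc
      push_cast at hdc
      simp only [DoorAtS, IsFullS]
      simp only [FullL] at hdc
      convert hdc.symm using 4
      all_goals congr 1
    -- Step B/C : door-pair count = boundary count
    have hsplit := Finset.card_filter_add_card_filter_not
      (s := P) (p := fun p => bdP M p)
    have stepC : ((P.filter (fun p => ¬ bdP M p)).card : ZMod 2) = 0 := by
      rw [Finset.card_eq_sum_ones]
      push_cast
      refine Finset.sum_involution (fun p _ => iot p) (fun _ _ => by decide)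
        (fun p hp h1 => iot_ne p) ?_ ?_
      · intro p hp
        rw [Finset.mem_filter] at hp ⊢
        obtain ⟨hpP, hpb⟩ := hp
        have hgood := iot_good ℓ h0 p ((memP p).mp hpP) hpb
        exact ⟨(memP _).mpr hgood.1, hgood.2⟩
      · intro p hp
        rw [Finset.mem_filter] at hp
        exact iot_invol ℓ h0 p ((memP p).mp hp.1)
    -- Step D : boundary count = lower-dim full count
    set ℓ' : (Fin m → ℕ) → ℕ := fun w => ℓ (Fin.snoc w M) with hℓ'def
    have stepD : (P.filter (fun p => bdP M p)).card
        = ((SF m M).filter (fun a => IsFullS m ℓ' a)).card := by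
      symm
      refine Finset.card_nbij
        (i := fun a => ((Fin.snoc a.1 (M-1), permUp a.2), (0 : Fin (m+2)))) ?_ ?_ ?_
      · -- maps to
        intro a ha
        rw [Finset.mem_coe, Finset.mem_filter] at ha
        obtain ⟨haSF, hafull⟩ := ha
        have hab := mem_SF.mp haSF
        rw [Finset.mem_coe, Finset.mem_filter]
        have hbnd : ∀ j, (Fin.snoc a.1 (M-1) : Fin (m+1) → ℕ) j < M := by
          intro j
          refine Fin.lastCases ?_ ?_ j
          · rw [Fin.snoc_last]; omega
          · intro j'; rw [Fin.snoc_castSucc]; exact hab j'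
        have hdoor : DoorAtS (m+1) ℓ (Fin.snoc a.1 (M-1), permUp a.2) 0 := by
          intro m' hm'
          obtain ⟨k, hk⟩ := hafull m' (by omega)
          refine ⟨k.succ, Fin.succ_ne_zero k, ?_⟩
          show ℓ (vtx (Fin.snoc a.1 (M-1)) (permUp a.2) k.succ) = m'
          rw [vtx_snoc hM]
          exact hk
        refine ⟨(memP _).mpr ⟨hbnd, hdoor⟩, rfl, ?_⟩
        show (Fin.snoc a.1 (M-1) : Fin (m+1) → ℕ) (permUp a.2 0) + 1 = M
        rw [permUp_zero, Fin.snoc_last]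
        omega
      · -- injective
        intro a1 h1 a2 h2 heq
        simp only [Prod.mk.injEq] at heq
        obtain ⟨⟨hb, hperm⟩, _⟩ := heq
        have hb' : a1.1 = a2.1 := by
          funext j
          have := congrFun hb j.castSucc
          rwa [Fin.snoc_castSucc, Fin.snoc_castSucc] at this
        have hρ : a1.2 = a2.2 := by
          apply Equiv.ext
          intro i
          have := DFunLike.congr_fun hperm i.succ
          rw [permUp_succ, permUp_succ] at this
          exact Fin.castSucc_injective m this
        exact Prod.ext hb' hρ
      · -- surjective
        intro p hp
        rw [Finset.mem_coe, Finset.mem_filter] at hp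
        obtain ⟨hpP, hk0, htop⟩ := hp
        obtain ⟨hbnd, hdoor⟩ := (memP p).mp hpP
        have hp2 : p.2 = 0 := Fin.ext hk0
        have hd0 : DoorAtS (m+1) ℓ (p.1.1, p.1.2) 0 := by rw [← hp2]; exact hdoor
        have hπ0 : p.1.2 0 = Fin.last m := top_dir hM ℓ p.1.1 p.1.2 hbnd hN hd0 htop
        obtain ⟨ρ, hρ⟩ := permUp_exists p.1.2 hπ0
        set b' : Fin m → ℕ := fun j => p.1.1 j.castSucc with hb'def
        have hsnoc : (Fin.snoc b' (M-1) : Fin (m+1) → ℕ) = p.1.1 := by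
          funext j
          refine Fin.lastCases ?_ ?_ j
          · rw [Fin.snoc_last]
            have : p.1.1 (p.1.2 0) + 1 = M := htop
            rw [hπ0] at this
            omega
          · intro j'; rw [Fin.snoc_castSucc]
        refine ⟨(b', ρ), ?_, ?_⟩
        · rw [Finset.mem_coe, Finset.mem_filter]
          constructor
          · rw [mem_SF]
            intro j
            exact hbnd j.castSucc
          · intro m' hm'
            obtain ⟨k', hk'0, hk'⟩ := hd0 m' (by omega)
            have hk'0' : k' ≠ 0 := hk'0
            refine ⟨k'.pred hk'0', ?_⟩
            show ℓ' (vtx b' ρ (k'.pred hk'0')) = m'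
            rw [hℓ'def]
            simp only []
            rw [← vtx_snoc hM b' ρ (k'.pred hk'0'), hsnoc, hρ, Fin.succ_pred]
            exact hk'
        · show ((Fin.snoc b' (M-1), permUp ρ), (0 : Fin (m+2))) = p
          refine Prod.ext (Prod.ext ?_ ?_) ?_
          · exact hsnoc
          · exact hρ
          · exact hp2.symm
    -- combine
    rw [stepA]
    have : (P.card : ZMod 2) = ((P.filter (fun p => bdP M p)).card : ZMod 2)
        + ((P.filter (fun p => ¬ bdP M p)).card : ZMod 2) := by
      rw [← Nat.cast_add, hsplit]
    rw [this, stepC, add_zero, stepD]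
    refine ih M hM ℓ' ?_ ?_ ?_
    · intro w hw
      have hsb : ∀ j', (Fin.snoc w M : Fin (m+1) → ℕ) j' ≤ M := by
        intro j'
        refine Fin.lastCases ?_ ?_ j'
        · rw [Fin.snoc_last]
        · intro j''; rw [Fin.snoc_castSucc]; exact hw j''
      have := hN (Fin.snoc w M) (Fin.last m) hsb (Fin.snoc_last _ _)
      rw [Fin.val_last] at this
      exact this
    · intro w j hw hwj
      have hsb : ∀ j', (Fin.snoc w M : Fin (m+1) → ℕ) j' ≤ M := by
        intro j'
        refine Fin.lastCases ?_ ?_ j'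
        · rw [Fin.snoc_last]
        · intro j''; rw [Fin.snoc_castSucc]; exact hw j''
      have := h0 (Fin.snoc w M) j.castSucc hsb (by rw [Fin.snoc_castSucc]; exact hwj)
      rwa [Fin.coe_castSucc] at this
    · intro w j hw hwj
      have hsb : ∀ j', (Fin.snoc w M : Fin (m+1) → ℕ) j' ≤ M := by
        intro j'
        refine Fin.lastCases ?_ ?_ j'
        · rw [Fin.snoc_last]
        · intro j''; rw [Fin.snoc_castSucc]; exact hw j''
      have := hN (Fin.snoc w M) j.castSucc hsb (by rw [Fin.snoc_castSucc]; exact hwj)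
      rwa [Fin.coe_castSucc] at this


section Miranda
variable {n : ℕ}

lemma mem_unitCube {x : Fin n → ℝ} : x ∈ unitCube n ↔ ∀ j, 0 ≤ x j ∧ x j ≤ 1 := by
  constructor
  · rintro ⟨h1, h2⟩ j
    exact ⟨h1 j, h2 j⟩
  · intro h
    exact ⟨fun j => (h j).1, fun j => (h j).2⟩

lemma isCompact_unitCube : IsCompact (unitCube n) := isCompact_Icc

theorem miranda_strict (τ : Fin n → (Fin n → ℝ) → ℝ)
    (hc : ∀ j, Continuous (τ j))
    (hpos : ∀ (j : Fin n) x, x ∈ unitCube n → x j = 0 → 0 < τ j x)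
    (hneg : ∀ (j : Fin n) x, x ∈ unitCube n → x j = 1 → τ j x < 0) :
    ∃ x ∈ unitCube n, ∀ j, τ j x = 0 := by
  classical
  have key : ∀ N : ℕ, ∃ (x : Fin n → ℝ) (y : Fin n → (Fin n → ℝ)) (z : Fin n → ℝ),
      x ∈ unitCube n ∧
      (∀ j, y j ∈ unitCube n ∧ τ j (y j) ≤ 0 ∧ dist (y j) x ≤ 1/(N+1)) ∧
      (z ∈ unitCube n ∧ (∀ j, 0 ≤ τ j z) ∧ dist z x ≤ 1/(N+1)) := by
    intro N
    set M := N + 1 with hMdef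
    have hM : 0 < M := by omega
    set pt : (Fin n → ℕ) → (Fin n → ℝ) := fun v j => (v j : ℝ) / M with hpt
    set S : (Fin n → ℕ) → Set ℕ :=
      fun v => {mm | ∃ j : Fin n, (j:ℕ) = mm ∧ τ j (pt v) ≤ 0} with hS
    set lab : (Fin n → ℕ) → ℕ := fun v => if h : (S v).Nonempty then sInf (S v) else n with hlab
    have hpt_mem : ∀ v : Fin n → ℕ, (∀ j, v j ≤ M) → pt v ∈ unitCube n := by
      intro v hv
      rw [mem_unitCube]
      intro j
      constructor
      · rw [hpt]; positivity
      · rw [hpt]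
        simp only []
        rw [div_le_one (by positivity)]
        exact_mod_cast hv j
    have hl1 : ∀ v, (∀ j, v j ≤ M) → lab v ≤ n := by
      intro v _
      show (if h : (S v).Nonempty then sInf (S v) else n) ≤ n
      split
      · next h =>
          obtain ⟨j, hj, _⟩ := Nat.sInf_mem h
          have := j.isLt
          omega
      · exact le_refl n
    have hl0 : ∀ v (j : Fin n), (∀ j', v j' ≤ M) → v j = 0 → lab v ≠ (j:ℕ) := by
      intro v j hv hvj
      show (if h : (S v).Nonempty then sInf (S v) else n) ≠ (j:ℕ)
      split
      · next h =>
          intro hcon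
          obtain ⟨j'', hj'', hτ⟩ := Nat.sInf_mem h
          rw [hcon] at hj''
          have hjj : j'' = j := Fin.ext hj''
          subst hjj
          have hx0 : pt v j'' = 0 := by rw [hpt]; simp [hvj]
          exact absurd hτ (not_le.mpr (hpos j'' (pt v) (hpt_mem v hv) hx0))
      · intro hcon
        have := j.isLt
        omega
    have hlN : ∀ v (j : Fin n), (∀ j', v j' ≤ M) → v j = M → lab v ≤ (j:ℕ) := by
      intro v j hv hvj
      have hx1 : pt v j = 1 := by
        rw [hpt]
        simp only [hvj]
        rw [div_self (by positivity)]
      have hτ : τ j (pt v) ≤ 0 := le_of_lt (hneg j (pt v) (hpt_mem v hv) hx1)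
      have hjS : (j:ℕ) ∈ S v := ⟨j, rfl, hτ⟩
      show (if h : (S v).Nonempty then sInf (S v) else n) ≤ (j:ℕ)
      rw [dif_pos ⟨_, hjS⟩]
      exact Nat.sInf_le hjS
    have hcard := kuhn n M hM lab hl1 hl0 hlN
    have hne : ((SF n M).filter fun s => IsFullS n lab s).Nonempty := by
      rw [← Finset.card_pos]
      rcases Nat.eq_zero_or_pos ((SF n M).filter fun s => IsFullS n lab s).card with h | h
      · rw [h] at hcard
        norm_num at hcard
      · exact h
    obtain ⟨s, hsmem⟩ := hne
    rw [Finset.mem_filter] at hsmem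
    obtain ⟨hsSF, hsfull⟩ := hsmem
    have hbnd : ∀ j, s.1 j < M := mem_SF.mp hsSF
    have hvb : ∀ (k : Fin (n+1)) j, vtx s.1 s.2 k j ≤ M := fun k => vtx_bound hbnd s.2 k
    have hdist : ∀ k : Fin (n+1), dist (pt (vtx s.1 s.2 k)) (pt s.1) ≤ 1/(N+1) := by
      intro k
      rw [dist_pi_le_iff (by positivity)]
      intro j
      rw [Real.dist_eq, hpt]
      simp only []
      have : vtx s.1 s.2 k j = s.1 j ∨ vtx s.1 s.2 k j = s.1 j + 1 := by
        unfold vtx; split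
        · right; rfl
        · left; rfl
      rcases this with h | h <;> rw [h]
      · simp
        positivity
      · push_cast
        rw [show ((s.1 j : ℝ) + 1) / (M:ℝ) - (s.1 j : ℝ) / (M:ℝ)
          = 1 / ((N:ℝ)+1) by rw [hMdef]; push_cast; ring]
        rw [abs_of_nonneg (by positivity)]
    -- the z vertex: label n
    obtain ⟨kz, hkz⟩ := hsfull n (le_refl n)
    have hzpos : ∀ j, 0 < τ j (pt (vtx s.1 s.2 kz)) := by
      intro j
      by_contra hcon
      push_neg at hcon
      have hSne : (S (vtx s.1 s.2 kz)).Nonempty := ⟨(j:ℕ), ⟨j, rfl, hcon⟩⟩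
      have hkz' : (if h : (S (vtx s.1 s.2 kz)).Nonempty
          then sInf (S (vtx s.1 s.2 kz)) else n) = n := hkz
      rw [dif_pos hSne] at hkz'
      obtain ⟨j'', hj'', _⟩ := Nat.sInf_mem hSne
      rw [hkz'] at hj''
      have := j''.isLt
      omega
    -- the y vertices
    have hy : ∀ j : Fin n, ∃ k : Fin (n+1), τ j (pt (vtx s.1 s.2 k)) ≤ 0 := by
      intro j
      obtain ⟨k, hk⟩ := hsfull (j:ℕ) (le_of_lt j.isLt)
      refine ⟨k, ?_⟩
      have hk' : (if h : (S (vtx s.1 s.2 k)).Nonempty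
          then sInf (S (vtx s.1 s.2 k)) else n) = (j:ℕ) := hk
      have hSne : (S (vtx s.1 s.2 k)).Nonempty := by
        by_contra hcon
        rw [dif_neg hcon] at hk'
        have := j.isLt
        omega
      rw [dif_pos hSne] at hk'
      obtain ⟨j'', hj'', hτ⟩ := Nat.sInf_mem hSne
      rw [hk'] at hj''
      have hjj : j'' = j := Fin.ext hj''
      subst hjj
      exact hτ
    choose ky hky using hy
    refine ⟨pt s.1, fun j => pt (vtx s.1 s.2 (ky j)), pt (vtx s.1 s.2 kz), ?_, ?_, ?_, ?_, ?_⟩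
    · exact hpt_mem s.1 (fun j => le_of_lt (hbnd j))
    · intro j
      exact ⟨hpt_mem _ (hvb (ky j)), hky j, hdist (ky j)⟩
    · exact hpt_mem _ (hvb kz)
    · intro j
      exact le_of_lt (hzpos j)
    · exact hdist kz
  -- step 2: pass to the limit
  choose xf yf zf hprop using key
  have hxmem : ∀ N, xf N ∈ unitCube n := fun N => (hprop N).1
  obtain ⟨a, ha, φ, hφ, hconv⟩ := isCompact_unitCube.tendsto_subseq hxmem
  have hdx : Filter.Tendsto (fun N => dist (xf (φ N)) a) Filter.atTop (nhds 0) := by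
    rw [← tendsto_iff_dist_tendsto_zero]
    exact hconv
  have hrate : Filter.Tendsto (fun N : ℕ => (1:ℝ)/(φ N + 1)) Filter.atTop (nhds 0) := by
    refine squeeze_zero (g := fun N : ℕ => 1/((N:ℝ)+1)) (fun N => by positivity)
      (fun N => ?_) tendsto_one_div_add_atTop_nhds_zero_nat
    have h1 : (N : ℝ) + 1 ≤ (φ N : ℝ) + 1 := by
      have h2 : (N:ℝ) ≤ (φ N : ℝ) := Nat.cast_le.mpr hφ.le_apply
      linarith
    exact div_le_div_of_nonneg_left (by norm_num) (by positivity) h1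
  refine ⟨a, ha, fun j => ?_⟩
  have hyconv : Filter.Tendsto (fun N => yf (φ N) j) Filter.atTop (nhds a) := by
    rw [tendsto_iff_dist_tendsto_zero]
    refine squeeze_zero (g := fun N => 1/((φ N : ℝ)+1) + dist (xf (φ N)) a)
      (fun N => dist_nonneg) (fun N => ?_) (by simpa using hrate.add hdx)
    calc dist (yf (φ N) j) a ≤ dist (yf (φ N) j) (xf (φ N)) + dist (xf (φ N)) a :=
          dist_triangle _ _ _
      _ ≤ 1/(φ N + 1) + dist (xf (φ N)) a := by
          have := ((hprop (φ N)).2.1 j).2.2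
          linarith
  have hzconv : Filter.Tendsto (fun N => zf (φ N)) Filter.atTop (nhds a) := by
    rw [tendsto_iff_dist_tendsto_zero]
    refine squeeze_zero (g := fun N => 1/((φ N : ℝ)+1) + dist (xf (φ N)) a)
      (fun N => dist_nonneg) (fun N => ?_) (by simpa using hrate.add hdx)
    calc dist (zf (φ N)) a ≤ dist (zf (φ N)) (xf (φ N)) + dist (xf (φ N)) a :=
          dist_triangle _ _ _
      _ ≤ 1/(φ N + 1) + dist (xf (φ N)) a := by
          have := (hprop (φ N)).2.2.2.2
          linarith
  have hle : τ j a ≤ 0 := by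
    have htt : Filter.Tendsto (fun N => τ j (yf (φ N) j)) Filter.atTop (nhds (τ j a)) :=
      ((hc j).tendsto a).comp hyconv
    exact le_of_tendsto htt (Filter.Eventually.of_forall fun N => ((hprop (φ N)).2.1 j).2.1)
  have hge : 0 ≤ τ j a := by
    have htt : Filter.Tendsto (fun N => τ j (zf (φ N))) Filter.atTop (nhds (τ j a)) :=
      ((hc j).tendsto a).comp hzconv
    exact ge_of_tendsto htt (Filter.Eventually.of_forall fun N => (hprop (φ N)).2.2.2.1 j)
  linarith

theorem miranda (σ : Fin n → (Fin n → ℝ) → ℝ) (hc : ∀ j, Continuous (σ j))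
    (hpos : ∀ (j : Fin n) x, x ∈ face n j 0 → 0 ≤ σ j x)
    (hneg : ∀ (j : Fin n) x, x ∈ face n j 1 → σ j x ≤ 0) :
    ∃ x ∈ unitCube n, ∀ j, σ j x = 0 := by
  classical
  have key : ∀ m : ℕ, ∃ x ∈ unitCube n, ∀ j, |σ j x| ≤ 1/(m+1) := by
    intro m
    set η : ℝ := 1/(m+1) with hη
    have hηpos : 0 < η := by rw [hη]; positivity
    set τ : Fin n → (Fin n → ℝ) → ℝ := fun j x => σ j x + η * (1 - 2 * x j) with hτ
    have hτc : ∀ j, Continuous (τ j) := by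
      intro j
      apply ((hc j).add (continuous_const.mul (continuous_const.sub
        (continuous_const.mul (continuous_apply j)))))
    obtain ⟨x, hx, hxz⟩ := miranda_strict τ hτc
      (by intro j x hx hx0
          have h1 : 0 ≤ σ j x := hpos j x ⟨hx, hx0⟩
          show 0 < σ j x + η * (1 - 2 * x j)
          rw [hx0]; nlinarith)
      (by intro j x hx hx1
          have h1 : σ j x ≤ 0 := hneg j x ⟨hx, hx1⟩
          show σ j x + η * (1 - 2 * x j) < 0
          rw [hx1]; nlinarith)
    refine ⟨x, hx, fun j => ?_⟩
    have h2 : σ j x + η * (1 - 2 * x j) = 0 := hxz j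
    have hxj := (mem_unitCube.mp hx) j
    rw [abs_le]
    constructor <;> nlinarith [hxj.1, hxj.2, hηpos]
  choose xf hxf hsf using key
  obtain ⟨a, ha, φ, hφ, hconv⟩ := isCompact_unitCube.tendsto_subseq hxf
  refine ⟨a, ha, fun j => ?_⟩
  have htt : Filter.Tendsto (fun m => σ j (xf (φ m))) Filter.atTop (nhds (σ j a)) :=
    ((hc j).tendsto a).comp hconv
  have habs : Filter.Tendsto (fun m => σ j (xf (φ m))) Filter.atTop (nhds 0) := by
    refine squeeze_zero_norm (a := fun m : ℕ => 1/((m:ℝ)+1)) (fun m => ?_)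
      tendsto_one_div_add_atTop_nhds_zero_nat
    have h1 := hsf (φ m) j
    have h2 : (1:ℝ)/(φ m + 1) ≤ 1/(m+1) := by
      have h3 : (m : ℝ) + 1 ≤ (φ m : ℝ) + 1 := by
        have h4 : (m:ℝ) ≤ (φ m : ℝ) := Nat.cast_le.mpr hφ.le_apply
        linarith
      apply div_le_div_of_nonneg_left (by norm_num) (by positivity) h3
    calc ‖σ j (xf (φ m))‖ = |σ j (xf (φ m))| := rfl
      _ ≤ 1/(φ m + 1) := h1
      _ ≤ 1/(m+1) := h2
  exact tendsto_nhds_unique htt habs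

end Miranda


section Topo
variable {n : ℕ}

lemma isClosed_unitCube : IsClosed (unitCube n) := isClosed_Icc

lemma isClosed_face (i : Fin n) (v : ℝ) : IsClosed (face n i v) :=
  isClosed_unitCube.inter (isClosed_singleton.preimage (continuous_apply i))

lemma isCompact_face (i : Fin n) (v : ℝ) : IsCompact (face n i v) :=
  isCompact_unitCube.of_isClosed_subset (isClosed_face i v) (fun _ hx => hx.1)

lemma face_nonempty_zero (i : Fin n) : (face n i 0).Nonempty :=
  ⟨fun _ => 0, ⟨mem_unitCube.mpr fun _ => ⟨le_refl _, zero_le_one⟩, rfl⟩⟩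

lemma face_nonempty_one (i : Fin n) : (face n i 1).Nonempty :=
  ⟨fun _ => 1, ⟨mem_unitCube.mpr fun _ => ⟨zero_le_one, le_refl _⟩, rfl⟩⟩

lemma face_disjoint (i : Fin n) : Disjoint (face n i 0) (face n i 1) := by
  rw [Set.disjoint_left]
  rintro x ⟨_, h0⟩ ⟨_, h1⟩
  rw [h0] at h1
  norm_num at h1

lemma convex_unitCube : Convex ℝ (unitCube n) := convex_Icc _ _

/-- Clopen separation in a compact set. -/
lemma compact_separation {K F0 F1 : Set (Fin n → ℝ)} (hK : IsCompact K)
    (hF0 : IsClosed F0) (hF1 : IsClosed F1) (hF0K : F0 ⊆ K) (hF1K : F1 ⊆ K)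
    (hsep : ∀ S : Set (Fin n → ℝ), S ⊆ K → IsPreconnected S → (S ∩ F0).Nonempty →
      (S ∩ F1).Nonempty → False) :
    ∃ K0 K1 : Set (Fin n → ℝ), IsCompact K0 ∧ IsCompact K1 ∧ K = K0 ∪ K1 ∧
      Disjoint K0 K1 ∧ F0 ⊆ K0 ∧ F1 ⊆ K1 := by
  classical
  haveI : CompactSpace K := isCompact_iff_compactSpace.mp hK
  set F0' : Set K := {x : K | (x : Fin n → ℝ) ∈ F0} with hF0'def
  set F1' : Set K := {x : K | (x : Fin n → ℝ) ∈ F1} with hF1'def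
  have hF0'c : IsClosed F0' := hF0.preimage continuous_subtype_val
  have hF1'c : IsClosed F1' := hF1.preimage continuous_subtype_val
  -- every point of F0' has a clopen neighborhood missing F1'
  have hQ : ∀ x : K, (x : Fin n → ℝ) ∈ F0 →
      ∃ Q : Set K, IsClopen Q ∧ x ∈ Q ∧ Q ∩ F1' = ∅ := by
    intro x hx
    have hcomp : connectedComponent x ∩ F1' = ∅ := by
      rw [Set.eq_empty_iff_forall_notMem]
      rintro y ⟨hy1, hy2⟩
      refine hsep (Subtype.val '' connectedComponent x) ?_ ?_ ⟨x, ?_, hx⟩ ⟨y, ?_, hy2⟩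
      · rintro z ⟨w, _, rfl⟩; exact w.2
      · exact isPreconnected_connectedComponent.image _ continuous_subtype_val.continuousOn
      · exact ⟨x, mem_connectedComponent, rfl⟩
      · exact ⟨y, hy1, rfl⟩
    rw [connectedComponent_eq_iInter_isClopen] at hcomp
    have hF1'comp : IsCompact F1' := hF1'c.isCompact
    have := hF1'comp.elim_finite_subfamily_closed
      (fun Z : {Z : Set K // IsClopen Z ∧ x ∈ Z} => (Z : Set K))
      (fun Z => Z.2.1.isClosed) (by rw [← hcomp, Set.inter_comm])
    obtain ⟨u, hu⟩ := this
    refine ⟨⋂ Z ∈ u, (Z : Set K), ?_, ?_, ?_⟩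
    · exact isClopen_biInter_finset (fun Z _ => Z.2.1)
    · exact Set.mem_iInter₂.mpr (fun Z _ => Z.2.2)
    · rw [Set.inter_comm]; exact hu
  choose Qf hQf using fun x : {y : K // (y : Fin n → ℝ) ∈ F0} => hQ x.1 x.2
  have hF0'comp : IsCompact F0' := hF0'c.isCompact
  have hcover : F0' ⊆ ⋃ x : {y : K // (y : Fin n → ℝ) ∈ F0}, Qf x := by
    intro y hy
    exact Set.mem_iUnion.mpr ⟨⟨y, hy⟩, (hQf ⟨y, hy⟩).2.1⟩
  obtain ⟨t, ht⟩ := hF0'comp.elim_finite_subcover Qf (fun x => (hQf x).1.2) hcover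
  set K0T : Set K := ⋃ x ∈ t, Qf x with hK0T
  have hK0Tclopen : IsClopen K0T := isClopen_biUnion_finset (fun x _ => (hQf x).1)
  have hK0TF1 : K0T ∩ F1' = ∅ := by
    rw [Set.eq_empty_iff_forall_notMem]
    rintro y ⟨hy1, hy2⟩
    obtain ⟨x, _, hyx⟩ := Set.mem_iUnion₂.mp hy1
    have := (hQf x).2.2
    rw [Set.eq_empty_iff_forall_notMem] at this
    exact this y ⟨hyx, hy2⟩
  refine ⟨Subtype.val '' K0T, Subtype.val '' K0Tᶜ, ?_, ?_, ?_, ?_, ?_, ?_⟩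
  · exact (hK0Tclopen.isClosed.isCompact).image continuous_subtype_val
  · exact (hK0Tclopen.compl.isClosed.isCompact).image continuous_subtype_val
  · rw [← Set.image_union, Set.union_compl_self, Set.image_univ, Subtype.range_coe]
  · rw [Set.disjoint_iff_inter_eq_empty, ← Set.image_inter Subtype.val_injective,
      Set.inter_compl_self, Set.image_empty]
  · intro x hx
    exact ⟨⟨x, hF0K hx⟩, ht hx, rfl⟩
  · intro x hx
    refine ⟨⟨x, hF1K hx⟩, ?_, rfl⟩
    intro hmem
    rw [Set.eq_empty_iff_forall_notMem] at hK0TF1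
    exact hK0TF1 ⟨x, hF1K hx⟩ ⟨hmem, hx⟩
end Topo

section Sig
variable {n : ℕ}

/-- Construct a sign function from exact separation data. -/
lemma goodSig_construct (j : Fin n) (B U0 U1 : Set (Fin n → ℝ))
    (hU0c : U0 ⊆ unitCube n) (hU1c : U1 ⊆ unitCube n)
    (hcover : unitCube n ⊆ B ∪ U0 ∪ U1)
    (hdB0 : Disjoint B U0) (hdB1 : Disjoint B U1) (hd01 : Disjoint U0 U1)
    (hopen0 : ∀ x ∈ U0, ∃ ε > 0, ∀ y ∈ unitCube n, dist y x < ε → y ∈ U0)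
    (hopen1 : ∀ x ∈ U1, ∃ ε > 0, ∀ y ∈ unitCube n, dist y x < ε → y ∈ U1)
    (hBc : B ⊆ unitCube n)
    (hface0 : face n j 0 ⊆ B ∪ U0) (hface1 : face n j 1 ⊆ B ∪ U1) :
    ∃ σ : (Fin n → ℝ) → ℝ, Continuous σ ∧ (∀ x ∈ face n j 0, 0 ≤ σ x) ∧
      (∀ x ∈ face n j 1, σ x ≤ 0) ∧ (∀ x ∈ unitCube n, σ x = 0 → x ∈ B) := by
  classical
  set σ : (Fin n → ℝ) → ℝ :=
    fun x => Metric.infDist x (B ∪ U1) - Metric.infDist x (B ∪ U0) with hσ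
  have hne1 : (B ∪ U1).Nonempty := by
    obtain ⟨x, hx⟩ := face_nonempty_one j
    exact ⟨x, hface1 hx⟩
  have hne0 : (B ∪ U0).Nonempty := by
    obtain ⟨x, hx⟩ := face_nonempty_zero j
    exact ⟨x, hface0 hx⟩
  refine ⟨σ, ?_, ?_, ?_, ?_⟩
  · exact (Metric.continuous_infDist_pt _).sub (Metric.continuous_infDist_pt _)
  · intro x hx
    have h1 : Metric.infDist x (B ∪ U0) = 0 := Metric.infDist_zero_of_mem (hface0 hx)
    have h2 : 0 ≤ Metric.infDist x (B ∪ U1) := Metric.infDist_nonneg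
    show 0 ≤ Metric.infDist x (B ∪ U1) - Metric.infDist x (B ∪ U0)
    rw [h1]; linarith
  · intro x hx
    have h1 : Metric.infDist x (B ∪ U1) = 0 := Metric.infDist_zero_of_mem (hface1 hx)
    have h2 : 0 ≤ Metric.infDist x (B ∪ U0) := Metric.infDist_nonneg
    show Metric.infDist x (B ∪ U1) - Metric.infDist x (B ∪ U0) ≤ 0
    rw [h1]; linarith
  · intro x hx hzero
    rcases hcover hx with (hB | h0) | h1
    · exact hB
    · exfalso
      obtain ⟨ε, hε, hball⟩ := hopen0 x h0
      have hd1 : ε ≤ Metric.infDist x (B ∪ U1) := by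
        by_contra hcon
        push_neg at hcon
        obtain ⟨y, hy, hdy⟩ := (Metric.infDist_lt_iff hne1).mp hcon
        have hyU0 : y ∈ U0 := hball y
          (by rcases hy with h | h; exacts [hBc h, hU1c h]) (by rw [dist_comm]; exact hdy)
        rcases hy with h | h
        · exact (Set.disjoint_left.mp hdB0) h hyU0
        · exact (Set.disjoint_left.mp hd01) hyU0 h
      have hd0 : Metric.infDist x (B ∪ U0) = 0 :=
        Metric.infDist_zero_of_mem (Or.inr h0)
      have : σ x = Metric.infDist x (B ∪ U1) - 0 := by rw [hσ]; simp [hd0]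
      rw [hzero] at this
      linarith
    · exfalso
      obtain ⟨ε, hε, hball⟩ := hopen1 x h1
      have hd1 : ε ≤ Metric.infDist x (B ∪ U0) := by
        by_contra hcon
        push_neg at hcon
        obtain ⟨y, hy, hdy⟩ := (Metric.infDist_lt_iff hne0).mp hcon
        have hyU1 : y ∈ U1 := hball y
          (by rcases hy with h | h; exacts [hBc h, hU0c h]) (by rw [dist_comm]; exact hdy)
        rcases hy with h | h
        · exact (Set.disjoint_left.mp hdB1) h hyU1
        · exact (Set.disjoint_left.mp hd01) h hyU1
      have hd0 : Metric.infDist x (B ∪ U1) = 0 :=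
        Metric.infDist_zero_of_mem (Or.inr h1)
      have : σ x = 0 - Metric.infDist x (B ∪ U0) := by rw [hσ]; simp [hd0]
      rw [hzero] at this
      linarith

end Sig

section Extract
variable {n : ℕ}

lemma exists_sig_of_separates (j : Fin n) (A : Set (Fin n → ℝ)) (hsub : A ⊆ unitCube n)
    (hco : IsCompact A ∨ OpenInCube n A) (hsep : Separates n j A) :
    ∃ (B : Set (Fin n → ℝ)) (σ : (Fin n → ℝ) → ℝ), B ⊆ A ∧ IsClosed B ∧
      Continuous σ ∧ (∀ x ∈ face n j 0, 0 ≤ σ x) ∧ (∀ x ∈ face n j 1, σ x ≤ 0) ∧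
      (∀ x ∈ unitCube n, σ x = 0 → x ∈ B) := by
  classical
  rcases hco with hA | hA
  · -- compact case
    have hAc : IsClosed A := hA.isClosed
    set U1 : Set (Fin n → ℝ) := {x | x ∈ unitCube n \ A ∧ ∃ S, S ⊆ unitCube n \ A ∧
      IsPreconnected S ∧ x ∈ S ∧ (S ∩ face n j 1).Nonempty} with hU1def
    set U0 : Set (Fin n → ℝ) := (unitCube n \ A) \ U1 with hU0def
    have hball : ∀ x ∈ unitCube n \ A, ∃ ε > 0, Metric.ball x ε ⊆ Aᶜ := by
      intro x hx
      exact Metric.isOpen_iff.mp hAc.isOpen_compl x hx.2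
    have hU1open : ∀ x ∈ U1, ∃ ε > 0, ∀ y ∈ unitCube n, dist y x < ε → y ∈ U1 := by
      rintro x ⟨hx, S, hS, hSpre, hxS, hSf⟩
      obtain ⟨ε, hε, hb⟩ := hball x hx
      refine ⟨ε, hε, ?_⟩
      intro y hy hdy
      have hyC : y ∈ Metric.ball x ε ∩ unitCube n := ⟨Metric.mem_ball.mpr hdy, hy⟩
      have hxC : x ∈ Metric.ball x ε ∩ unitCube n := ⟨Metric.mem_ball_self hε, hx.1⟩
      have hCpre : IsPreconnected (Metric.ball x ε ∩ unitCube n) :=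
        ((convex_ball x ε).inter convex_unitCube).isPreconnected
      refine ⟨⟨hy, fun hyA => hb hyC.1 hyA⟩, S ∪ (Metric.ball x ε ∩ unitCube n),
        ?_, IsPreconnected.union x hxS hxC hSpre hCpre, Or.inr hyC, ?_⟩
      · rintro z (hz | ⟨hz1, hz2⟩)
        · exact hS hz
        · exact ⟨hz2, fun hzA => hb hz1 hzA⟩
      · obtain ⟨w, hw1, hw2⟩ := hSf
        exact ⟨w, Or.inl hw1, hw2⟩
    have hU0open : ∀ x ∈ U0, ∃ ε > 0, ∀ y ∈ unitCube n, dist y x < ε → y ∈ U0 := by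
      rintro x ⟨hx, hxn⟩
      obtain ⟨ε, hε, hb⟩ := hball x hx
      refine ⟨ε, hε, ?_⟩
      intro y hy hdy
      refine ⟨⟨hy, fun hyA => hb (Metric.mem_ball.mpr hdy) hyA⟩, ?_⟩
      rintro ⟨hy', S, hS, hSpre, hyS, hSf⟩
      apply hxn
      have hxC : x ∈ Metric.ball x ε ∩ unitCube n := ⟨Metric.mem_ball_self hε, hx.1⟩
      have hyC : y ∈ Metric.ball x ε ∩ unitCube n := ⟨Metric.mem_ball.mpr hdy, hy⟩
      have hCpre : IsPreconnected (Metric.ball x ε ∩ unitCube n) :=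
        ((convex_ball x ε).inter convex_unitCube).isPreconnected
      refine ⟨hx, S ∪ (Metric.ball x ε ∩ unitCube n), ?_,
        IsPreconnected.union y hyS hyC hSpre hCpre, Or.inr hxC, ?_⟩
      · rintro z (hz | ⟨hz1, hz2⟩)
        · exact hS hz
        · exact ⟨hz2, fun hzA => hb hz1 hzA⟩
      · obtain ⟨w, hw1, hw2⟩ := hSf
        exact ⟨w, Or.inl hw1, hw2⟩
    obtain ⟨σ, hσc, hσ0, hσ1, hσz⟩ := goodSig_construct j A U0 U1
      (fun x hx => hx.1.1) (fun x hx => hx.1.1)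
      (by
        intro x hx
        by_cases hxA : x ∈ A
        · exact Or.inl (Or.inl hxA)
        · by_cases hxU : x ∈ U1
          · exact Or.inr hxU
          · exact Or.inl (Or.inr ⟨⟨hx, hxA⟩, hxU⟩))
      (by rw [Set.disjoint_left]; intro x hx hx0; exact hx0.1.2 hx)
      (by rw [Set.disjoint_left]; intro x hx hx1; exact hx1.1.2 hx)
      (by rw [Set.disjoint_left]; intro x hx0 hx1; exact hx0.2 hx1)
      hU0open hU1open hsub
      (by
        intro x hx
        by_cases hxA : x ∈ A
        · exact Or.inl hxA
        · refine Or.inr ⟨⟨hx.1, hxA⟩, ?_⟩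
          rintro ⟨hx', S, hS, hSpre, hxS, hSf⟩
          exact hsep ⟨S, hS, hSpre, ⟨x, hxS, hx⟩, hSf⟩)
      (by
        intro x hx
        by_cases hxA : x ∈ A
        · exact Or.inl hxA
        · exact Or.inr ⟨⟨hx.1, hxA⟩, {x}, Set.singleton_subset_iff.mpr ⟨hx.1, hxA⟩,
            isPreconnected_singleton, rfl, ⟨x, rfl, hx⟩⟩)
    exact ⟨A, σ, le_refl A, hAc, hσc, hσ0, hσ1, hσz⟩
  · -- open case
    obtain ⟨V, hV, hAV⟩ := hA
    set D : Set (Fin n → ℝ) := unitCube n \ A with hDdef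
    have hDclosed : IsClosed D := by
      have : D = unitCube n ∩ Vᶜ := by
        ext x
        rw [hDdef, hAV]
        simp only [Set.mem_diff, Set.mem_inter_iff, Set.mem_compl_iff]
        tauto
      rw [this]
      exact isClosed_unitCube.inter hV.isClosed_compl
    have hDcomp : IsCompact D :=
      isCompact_unitCube.of_isClosed_subset hDclosed Set.diff_subset
    have hsep' : ∀ S : Set (Fin n → ℝ), S ⊆ D → IsPreconnected S →
        (S ∩ (D ∩ face n j 0)).Nonempty → (S ∩ (D ∩ face n j 1)).Nonempty → False := by
      intro S hS hSpre h0 h1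
      refine hsep ⟨S, hS, hSpre, ?_, ?_⟩
      · obtain ⟨x, hx1, hx2⟩ := h0; exact ⟨x, hx1, hx2.2⟩
      · obtain ⟨x, hx1, hx2⟩ := h1; exact ⟨x, hx1, hx2.2⟩
    obtain ⟨D0, D1, hD0c, hD1c, hDun, hDd, hF0D0, hF1D1⟩ :=
      compact_separation hDcomp (hDclosed.inter (isClosed_face j 0))
        (hDclosed.inter (isClosed_face j 1)) Set.inter_subset_left Set.inter_subset_left hsep'
    have hD0D : D0 ⊆ D := by rw [hDun]; exact Set.subset_union_left
    have hD1D : D1 ⊆ D := by rw [hDun]; exact Set.subset_union_right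
    have hdisj : Disjoint (D0 ∪ face n j 0) (D1 ∪ face n j 1) := by
      rw [Set.disjoint_union_left, Set.disjoint_union_right, Set.disjoint_union_right]
      refine ⟨⟨hDd, ?_⟩, ⟨?_, face_disjoint j⟩⟩
      · rw [Set.disjoint_left]
        intro x hx0 hxf
        exact Set.disjoint_left.mp hDd hx0 (hF1D1 ⟨hD0D hx0, hxf⟩)
      · rw [Set.disjoint_left]
        intro x hxf hx1
        exact Set.disjoint_left.mp hDd (hF0D0 ⟨hD1D hx1, hxf⟩) hx1
    obtain ⟨W0, W1, hW0, hW1, h0W, h1W, hWd⟩ :=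
      SeparatedNhds.of_isCompact_isCompact (hD0c.union (isCompact_face j 0))
        (hD1c.union (isCompact_face j 1)) hdisj
    obtain ⟨σ, hσc, hσ0, hσ1, hσz⟩ := goodSig_construct j (unitCube n \ (W0 ∪ W1))
      (W0 ∩ unitCube n) (W1 ∩ unitCube n)
      Set.inter_subset_right Set.inter_subset_right
      (by
        intro x hx
        by_cases hxW : x ∈ W0 ∪ W1
        · rcases hxW with h | h
          · exact Or.inl (Or.inr ⟨h, hx⟩)
          · exact Or.inr ⟨h, hx⟩
        · exact Or.inl (Or.inl ⟨hx, hxW⟩))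
      (by rw [Set.disjoint_left]; rintro x ⟨_, hx2⟩ ⟨h, _⟩; exact hx2 (Or.inl h))
      (by rw [Set.disjoint_left]; rintro x ⟨_, hx2⟩ ⟨h, _⟩; exact hx2 (Or.inr h))
      (by rw [Set.disjoint_left]; rintro x ⟨h0, _⟩ ⟨h1, _⟩;
          exact Set.disjoint_left.mp hWd h0 h1)
      (by
        rintro x ⟨hxW, hxc⟩
        obtain ⟨ε, hε, hb⟩ := Metric.isOpen_iff.mp hW0 x hxW
        exact ⟨ε, hε, fun y hy hdy => ⟨hb (Metric.mem_ball.mpr hdy), hy⟩⟩)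
      (by
        rintro x ⟨hxW, hxc⟩
        obtain ⟨ε, hε, hb⟩ := Metric.isOpen_iff.mp hW1 x hxW
        exact ⟨ε, hε, fun y hy hdy => ⟨hb (Metric.mem_ball.mpr hdy), hy⟩⟩)
      Set.diff_subset
      (fun x hx => Or.inr ⟨h0W (Or.inr hx), hx.1⟩)
      (fun x hx => Or.inr ⟨h1W (Or.inr hx), hx.1⟩)
    refine ⟨unitCube n \ (W0 ∪ W1), σ, ?_, isClosed_unitCube.sdiff (hW0.union hW1),
      hσc, hσ0, hσ1, hσz⟩
    rintro x ⟨hxc, hxW⟩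
    by_contra hxA
    have hxD : x ∈ D := ⟨hxc, hxA⟩
    rw [hDun] at hxD
    rcases hxD with h | h
    · exact hxW (Or.inl (h0W (Or.inl h)))
    · exact hxW (Or.inr (h1W (Or.inl h)))

end Extract

section Main
variable {n : ℕ}

lemma main_strong (i : Fin n) (A : Fin n → Set (Fin n → ℝ))
    (hsub : ∀ j, j ≠ i → A j ⊆ unitCube n)
    (hco : ∀ j, j ≠ i → (IsCompact (A j) ∨ OpenInCube n (A j)))
    (hsep : ∀ j, j ≠ i → Separates n j (A j)) :
    ∃ S, S ⊆ unitCube n ∧ (∀ j (h : j ≠ i), S ⊆ A j) ∧ IsPreconnected S ∧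
      (S ∩ face n i 0).Nonempty ∧ (S ∩ face n i 1).Nonempty := by
  classical
  have hex : ∀ j : Fin n, j ≠ i → ∃ (B : Set (Fin n → ℝ)) (σ : (Fin n → ℝ) → ℝ),
      B ⊆ A j ∧ IsClosed B ∧ Continuous σ ∧ (∀ x ∈ face n j 0, 0 ≤ σ x) ∧
      (∀ x ∈ face n j 1, σ x ≤ 0) ∧ (∀ x ∈ unitCube n, σ x = 0 → x ∈ B) :=
    fun j h => exists_sig_of_separates j (A j) (hsub j h) (hco j h) (hsep j h)
  choose B σf hBA hBcl hσc hσ0 hσ1 hσz using hex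
  by_contra hcon
  set K : Set (Fin n → ℝ) := unitCube n ∩ ⋂ j, ⋂ h : j ≠ i, B j h with hKdef
  have hKcomp : IsCompact K :=
    isCompact_unitCube.inter_right
      (isClosed_iInter fun j => isClosed_iInter fun h => hBcl j h)
  have hKclosed : IsClosed K := hKcomp.isClosed
  have hsep' : ∀ S : Set (Fin n → ℝ), S ⊆ K → IsPreconnected S →
      (S ∩ (K ∩ face n i 0)).Nonempty → (S ∩ (K ∩ face n i 1)).Nonempty → False := by
    intro S hSK hSpre h0 h1
    apply hcon
    refine ⟨S, fun x hx => (hSK hx).1, ?_, hSpre, ?_, ?_⟩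
    · intro j h x hx
      have h2 := (hSK hx).2
      rw [Set.mem_iInter] at h2
      have h3 := h2 j
      rw [Set.mem_iInter] at h3
      exact hBA j h (h3 h)
    · obtain ⟨x, hx1, hx2⟩ := h0; exact ⟨x, hx1, hx2.2⟩
    · obtain ⟨x, hx1, hx2⟩ := h1; exact ⟨x, hx1, hx2.2⟩
  obtain ⟨K0, K1, hK0c, hK1c, hKun, hKd, hF0K0, hF1K1⟩ :=
    compact_separation hKcomp (hKclosed.inter (isClosed_face i 0))
      (hKclosed.inter (isClosed_face i 1)) Set.inter_subset_left Set.inter_subset_left hsep'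
  have hK0K : K0 ⊆ K := by rw [hKun]; exact Set.subset_union_left
  have hK1K : K1 ⊆ K := by rw [hKun]; exact Set.subset_union_right
  have hdisj : Disjoint (K0 ∪ face n i 0) (K1 ∪ face n i 1) := by
    rw [Set.disjoint_union_left, Set.disjoint_union_right, Set.disjoint_union_right]
    refine ⟨⟨hKd, ?_⟩, ⟨?_, face_disjoint i⟩⟩
    · rw [Set.disjoint_left]
      intro x hx0 hxf
      exact Set.disjoint_left.mp hKd hx0 (hF1K1 ⟨hK0K hx0, hxf⟩)
    · rw [Set.disjoint_left]
      intro x hxf hx1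
      exact Set.disjoint_left.mp hKd (hF0K0 ⟨hK1K hx1, hxf⟩) hx1
  obtain ⟨W0, W1, hW0, hW1, h0W, h1W, hWd⟩ :=
    SeparatedNhds.of_isCompact_isCompact (hK0c.union (isCompact_face i 0))
      (hK1c.union (isCompact_face i 1)) hdisj
  obtain ⟨σi, hσic, hσi0, hσi1, hσiz⟩ := goodSig_construct i (unitCube n \ (W0 ∪ W1))
    (W0 ∩ unitCube n) (W1 ∩ unitCube n)
    Set.inter_subset_right Set.inter_subset_right
    (by
      intro x hx
      by_cases hxW : x ∈ W0 ∪ W1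
      · rcases hxW with h | h
        · exact Or.inl (Or.inr ⟨h, hx⟩)
        · exact Or.inr ⟨h, hx⟩
      · exact Or.inl (Or.inl ⟨hx, hxW⟩))
    (by rw [Set.disjoint_left]; rintro x ⟨_, hx2⟩ ⟨h, _⟩; exact hx2 (Or.inl h))
    (by rw [Set.disjoint_left]; rintro x ⟨_, hx2⟩ ⟨h, _⟩; exact hx2 (Or.inr h))
    (by rw [Set.disjoint_left]; rintro x ⟨h0, _⟩ ⟨h1, _⟩;
        exact Set.disjoint_left.mp hWd h0 h1)
    (by
      rintro x ⟨hxW, hxc⟩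
      obtain ⟨ε, hε, hb⟩ := Metric.isOpen_iff.mp hW0 x hxW
      exact ⟨ε, hε, fun y hy hdy => ⟨hb (Metric.mem_ball.mpr hdy), hy⟩⟩)
    (by
      rintro x ⟨hxW, hxc⟩
      obtain ⟨ε, hε, hb⟩ := Metric.isOpen_iff.mp hW1 x hxW
      exact ⟨ε, hε, fun y hy hdy => ⟨hb (Metric.mem_ball.mpr hdy), hy⟩⟩)
    Set.diff_subset
    (fun x hx => Or.inr ⟨h0W (Or.inr hx), hx.1⟩)
    (fun x hx => Or.inr ⟨h1W (Or.inr hx), hx.1⟩)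
  -- apply Miranda to the family
  set σfam : Fin n → (Fin n → ℝ) → ℝ := fun j => if h : j = i then σi else σf j h
    with hσfam
  obtain ⟨x, hx, hz⟩ := miranda σfam
    (by
      intro j
      by_cases h : j = i
      · rw [hσfam]; simp only [dif_pos h]; exact hσic
      · rw [hσfam]; simp only [dif_neg h]; exact hσc j h)
    (by
      intro j x hx
      by_cases h : j = i
      · subst h; rw [hσfam]; simp only [dif_pos]; exact hσi0 x hx
      · rw [hσfam]; simp only [dif_neg h]; exact hσ0 j h x hx)
    (by
      intro j x hx
      by_cases h : j = i
      · subst h; rw [hσfam]; simp only [dif_pos]; exact hσi1 x hx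
      · rw [hσfam]; simp only [dif_neg h]; exact hσ1 j h x hx)
  have hxK : x ∈ K := by
    refine ⟨hx, Set.mem_iInter.mpr fun j => Set.mem_iInter.mpr fun h => ?_⟩
    have h2 := hz j
    rw [hσfam] at h2
    simp only [dif_neg h] at h2
    exact hσz j h x hx h2
  have hxB : x ∈ unitCube n \ (W0 ∪ W1) := by
    have h2 := hz i
    rw [hσfam] at h2
    simp only [dif_pos] at h2
    exact hσiz x hx h2
  have hxW : x ∈ W0 ∪ W1 := by
    have hxK01 : x ∈ K0 ∪ K1 := by rw [← hKun]; exact hxK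
    rcases hxK01 with h | h
    · exact Or.inl (h0W (Or.inl h))
    · exact Or.inr (h1W (Or.inl h))
  exact hxB.2 hxW

theorem stmt12 {n : ℕ} (i : Fin n) (A : Fin n → Set (Fin n → ℝ))
    (hsub : ∀ j, j ≠ i → A j ⊆ unitCube n)
    (hco : ∀ j, j ≠ i → (IsCompact (A j) ∨ OpenInCube n (A j)))
    (hsep : ∀ j, j ≠ i → Separates n j (A j)) :
    Connects n i (⋂ j ∈ {j : Fin n | j ≠ i}, A j) ∧
      (Separates n i (A i) → (⋂ j, A j).Nonempty) := by
  obtain ⟨S, hScube, hSA, hSpre, hS0, hS1⟩ := main_strong i A hsub hco hsep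
  constructor
  · refine ⟨S, ?_, hSpre, hS0, hS1⟩
    intro x hx
    rw [Set.mem_iInter₂]
    intro j hj
    exact hSA j hj hx
  · intro hsepi
    have hSAi : (S ∩ A i).Nonempty := by
      by_contra hcon
      rw [Set.not_nonempty_iff_eq_empty] at hcon
      apply hsepi
      refine ⟨S, ?_, hSpre, hS0, hS1⟩
      intro x hx
      refine ⟨hScube hx, ?_⟩
      intro hxA
      rw [Set.eq_empty_iff_forall_notMem] at hcon
      exact hcon x ⟨hx, hxA⟩
    obtain ⟨x, hxS, hxA⟩ := hSAi
    refine ⟨x, Set.mem_iInter.mpr fun j => ?_⟩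
    by_cases h : j = i
    · subst h; exact hxA
    · exact hSA j h hxS

end Main
end

section
/- Let γ₁, γ₂ : [0,1] → [0,1]² be arcs such that γ₁ joins a point of the face {x : x₁ = 0} to a point of the face {x : x₁ = 1}, and γ₂ joins a point of {x : x₂ = 0} to a point of {x : x₂ = 1}. Then γ₁ and γ₂ intersect, i.e., γ₁([0,1]) ∩ γ₂([0,1]) ≠ ∅. -/
set_option maxHeartbeats 1000000

open Complex Set Real

noncomputable section



private lemma intValuedConst {v : ℝ → ℝ} (hv : Continuous v) {A B : ℝ}
    (h : ∀ x ∈ Icc A B, ∃ n : ℤ, v x = n) :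
    ∀ x ∈ Icc A B, ∀ y ∈ Icc A B, v x = v y := by
  intro x hx y hy
  by_contra hne
  obtain ⟨nx, hnx⟩ := h x hx
  obtain ⟨ny, hny⟩ := h y hy
  have hsub : uIcc x y ⊆ Icc A B := uIcc_subset_Icc hx hy
  have key : ∀ m k : ℤ, m < k → ((m : ℝ) + 1/2) ∈ uIcc (v x) (v y) → False := by
    intro m k hmk hmem
    obtain ⟨t, ht, hvt⟩ := intermediate_value_uIcc (hv.continuousOn (s := uIcc x y)) hmem
    obtain ⟨n, hn⟩ := h t (hsub ht)
    rw [hn] at hvt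
    have : (2*n : ℝ) = 2*m + 1 := by rw [hvt]; ring
    have : (2*n : ℤ) = 2*m + 1 := by exact_mod_cast this
    omega
  rcases lt_trichotomy nx ny with hlt | heq | hgt
  · have hle : (nx:ℝ) + 1 ≤ (ny:ℝ) := by exact_mod_cast hlt
    exact key nx ny hlt (by
      rw [hnx, hny]; constructor
      · simp only [inf_le_iff]; left; linarith
      · simp only [le_sup_iff]; right; linarith)
  · exact hne (by rw [hnx, hny, heq])
  · have hle : (ny:ℝ) + 1 ≤ (nx:ℝ) := by exact_mod_cast hgt
    exact key ny nx hgt (by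
      rw [hnx, hny]; constructor
      · simp only [inf_le_iff]; right; linarith
      · simp only [le_sup_iff]; left; linarith)

private lemma expOneConst {q : ℝ → ℂ} (hq : Continuous q) {A B : ℝ}
    (h : ∀ x ∈ Icc A B, Complex.exp (q x) = 1) :
    ∀ x ∈ Icc A B, ∀ y ∈ Icc A B, q x = q y := by
  have hrep : ∀ x ∈ Icc A B, ∃ n : ℤ, q x = (n : ℂ) * (2 * π * I) := by
    intro x hx; exact Complex.exp_eq_one_iff.mp (h x hx)
  have him : ∀ (n : ℤ), ((n : ℂ) * (2 * π * I)).im = n * (2*π) := by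
    intro n; simp [Complex.mul_im]
  have hint : ∀ x ∈ Icc A B, ∃ n : ℤ, (q x).im / (2 * π) = n := by
    intro x hx
    obtain ⟨n, hn⟩ := hrep x hx
    refine ⟨n, ?_⟩
    rw [hn, him]
    field_simp
  have hv : Continuous fun x => (q x).im / (2 * π) :=
    (Complex.continuous_im.comp hq).div_const _
  have hc := intValuedConst hv hint
  intro x hx y hy
  obtain ⟨nx, hnx⟩ := hrep x hx
  obtain ⟨ny, hny⟩ := hrep y hy
  have h2 := hc x hx y hy
  rw [hnx, hny, him, him] at h2
  have hpi : (2*π : ℝ) ≠ 0 := by positivity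
  have : nx = ny := by field_simp at h2; exact_mod_cast h2
  rw [hnx, hny, this]



private lemma clampMem {a b : ℝ} (hab : a ≤ b) (x : ℝ) : max a (min b x) ∈ Icc a b :=
  ⟨le_max_left _ _, max_le hab (min_le_left _ _)⟩

private lemma clampEq {a b x : ℝ} (hx : x ∈ Icc a b) : max a (min b x) = x := by
  rw [min_eq_right hx.2, max_eq_right hx.1]

private lemma clampCont (a b : ℝ) : Continuous fun x : ℝ => max a (min b x) :=
  continuous_const.max (continuous_const.min continuous_id)

private lemma locLift {g : ℝ × ℝ → ℂ} (hg : Continuous g) {a b c d : ℝ}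
    (hab : a ≤ b) (hcd : c ≤ d)
    (hball : ∀ p ∈ Icc a b ×ˢ Icc c d, ‖g p - g (a, c)‖ < ‖g (a, c)‖) :
    ∃ h : ℝ × ℝ → ℂ, Continuous h ∧ ∀ p ∈ Icc a b ×ˢ Icc c d, Complex.exp (h p) = g p := by
  set z₀ := g (a, c) with hz₀def
  have hmem0 : (a, c) ∈ Icc a b ×ˢ Icc c d := ⟨⟨le_refl a, hab⟩, ⟨le_refl c, hcd⟩⟩
  have hz₀ : z₀ ≠ 0 := by
    intro h0
    have := hball (a, c) hmem0
    rw [← hz₀def, h0] at this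
    simp at this
  have habs : 0 < ‖z₀‖ := by simpa using hz₀
  set cl : ℝ × ℝ → ℝ × ℝ := fun p => (max a (min b p.1), max c (min d p.2)) with hcldef
  have hclcont : Continuous cl :=
    ((clampCont a b).comp continuous_fst).prodMk ((clampCont c d).comp continuous_snd)
  have hclmem : ∀ p, cl p ∈ Icc a b ×ˢ Icc c d := fun p => ⟨clampMem hab _, clampMem hcd _⟩
  have hne : ∀ p ∈ Icc a b ×ˢ Icc c d, g p ≠ 0 := by
    intro p hp h0
    have := hball p hp
    rw [h0, zero_sub, norm_neg] at this
    exact lt_irrefl _ this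
  have hslit : ∀ p, g (cl p) / z₀ ∈ Complex.slitPlane := by
    intro p
    rw [Complex.mem_slitPlane_iff]
    left
    have h1 : ‖g (cl p) / z₀ - 1‖ < 1 := by
      rw [div_sub_one hz₀, norm_div, div_lt_one habs]
      exact hball (cl p) (hclmem p)
    have h2 : |(g (cl p) / z₀ - 1).re| < 1 :=
      lt_of_le_of_lt (Complex.abs_re_le_norm _) h1
    have h3 : (g (cl p) / z₀).re = 1 + (g (cl p) / z₀ - 1).re := by
      simp [Complex.sub_re]
    rw [h3]
    linarith [(abs_lt.mp h2).1]
  refine ⟨fun p => Complex.log z₀ + Complex.log (g (cl p) / z₀), ?_, ?_⟩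
  · exact continuous_const.add (((hg.comp hclcont).div_const z₀).clog hslit)
  · intro p hp
    have hclp : cl p = p := by
      rw [hcldef]
      simp only
      rw [clampEq hp.1, clampEq hp.2]
    rw [Complex.exp_add, Complex.exp_log hz₀, hclp,
      Complex.exp_log (div_ne_zero (hne p hp) hz₀), mul_div_cancel₀ _ hz₀]
private lemma glueV {g : ℝ × ℝ → ℂ} {a m b c d : ℝ} (ham : a ≤ m) (hmb : m ≤ b) (hcd : c ≤ d)
    {h₁ h₂ : ℝ × ℝ → ℂ}
    (H₁ : Continuous h₁) (e₁ : ∀ p ∈ Icc a m ×ˢ Icc c d, Complex.exp (h₁ p) = g p)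
    (H₂ : Continuous h₂) (e₂ : ∀ p ∈ Icc m b ×ˢ Icc c d, Complex.exp (h₂ p) = g p) :
    ∃ h : ℝ × ℝ → ℂ, Continuous h ∧ ∀ p ∈ Icc a b ×ˢ Icc c d, Complex.exp (h p) = g p := by
  have hqcont : Continuous (fun y : ℝ => h₁ (m, y) - h₂ (m, y)) :=
    (H₁.comp (continuous_const.prodMk continuous_id)).sub
      (H₂.comp (continuous_const.prodMk continuous_id))
  have hq1 : ∀ y ∈ Icc c d, Complex.exp (h₁ (m, y) - h₂ (m, y)) = 1 := by
    intro y hy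
    have m₁ : (m, y) ∈ Icc a m ×ˢ Icc c d := ⟨⟨ham, le_refl m⟩, hy⟩
    have m₂ : (m, y) ∈ Icc m b ×ˢ Icc c d := ⟨⟨le_refl m, hmb⟩, hy⟩
    rw [Complex.exp_sub, e₁ _ m₁, e₂ _ m₂, div_self]
    rw [← e₁ _ m₁]
    exact Complex.exp_ne_zero _
  have hqc := expOneConst hqcont hq1
  set δ : ℂ := h₁ (m, c) - h₂ (m, c) with hδdef
  have hcmem : c ∈ Icc c d := ⟨le_refl c, hcd⟩
  have hδ1 : Complex.exp δ = 1 := hq1 c hcmem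
  have hqy : ∀ y ∈ Icc c d, h₁ (m, y) = h₂ (m, y) + δ := by
    intro y hy
    have h' := hqc y hy c hcmem
    rw [← hδdef] at h'
    linear_combination h'
  refine ⟨fun p => if p.1 ≤ m then h₁ (p.1, max c (min d p.2))
      else h₂ (p.1, max c (min d p.2)) + δ, ?_, ?_⟩
  · have hmap : Continuous (fun p : ℝ × ℝ => (p.1, max c (min d p.2))) :=
      continuous_fst.prodMk ((clampCont c d).comp continuous_snd)
    refine Continuous.if_le (H₁.comp hmap) ((H₂.comp hmap).add continuous_const)
      continuous_fst continuous_const ?_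
    intro p hp
    have := hqy (max c (min d p.2)) (clampMem hcd _)
    rw [hp]
    exact this
  · intro p hp
    have hcl : max c (min d p.2) = p.2 := clampEq hp.2
    dsimp only
    rw [hcl]
    by_cases hle : p.1 ≤ m
    · rw [if_pos hle]
      exact e₁ (p.1, p.2) ⟨⟨hp.1.1, hle⟩, hp.2⟩
    · rw [if_neg hle]
      rw [Complex.exp_add, hδ1, mul_one]
      exact e₂ (p.1, p.2) ⟨⟨le_of_not_ge hle, hp.1.2⟩, hp.2⟩
private lemma glueH {g : ℝ × ℝ → ℂ} {a b c m d : ℝ} (hab : a ≤ b) (hcm : c ≤ m) (hmd : m ≤ d)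
    {h₁ h₂ : ℝ × ℝ → ℂ}
    (H₁ : Continuous h₁) (e₁ : ∀ p ∈ Icc a b ×ˢ Icc c m, Complex.exp (h₁ p) = g p)
    (H₂ : Continuous h₂) (e₂ : ∀ p ∈ Icc a b ×ˢ Icc m d, Complex.exp (h₂ p) = g p) :
    ∃ h : ℝ × ℝ → ℂ, Continuous h ∧ ∀ p ∈ Icc a b ×ˢ Icc c d, Complex.exp (h p) = g p := by
  have hqcont : Continuous (fun x : ℝ => h₁ (x, m) - h₂ (x, m)) :=
    (H₁.comp (continuous_id.prodMk continuous_const)).sub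
      (H₂.comp (continuous_id.prodMk continuous_const))
  have hq1 : ∀ x ∈ Icc a b, Complex.exp (h₁ (x, m) - h₂ (x, m)) = 1 := by
    intro x hx
    have m₁ : (x, m) ∈ Icc a b ×ˢ Icc c m := ⟨hx, ⟨hcm, le_refl m⟩⟩
    have m₂ : (x, m) ∈ Icc a b ×ˢ Icc m d := ⟨hx, ⟨le_refl m, hmd⟩⟩
    rw [Complex.exp_sub, e₁ _ m₁, e₂ _ m₂, div_self]
    rw [← e₁ _ m₁]
    exact Complex.exp_ne_zero _
  have hqc := expOneConst hqcont hq1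
  set δ : ℂ := h₁ (a, m) - h₂ (a, m) with hδdef
  have hamem : a ∈ Icc a b := ⟨le_refl a, hab⟩
  have hδ1 : Complex.exp δ = 1 := hq1 a hamem
  have hqy : ∀ x ∈ Icc a b, h₁ (x, m) = h₂ (x, m) + δ := by
    intro x hx
    have h' := hqc x hx a hamem
    rw [← hδdef] at h'
    linear_combination h'
  refine ⟨fun p => if p.2 ≤ m then h₁ (max a (min b p.1), p.2)
      else h₂ (max a (min b p.1), p.2) + δ, ?_, ?_⟩
  · have hmap : Continuous (fun p : ℝ × ℝ => (max a (min b p.1), p.2)) :=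
      ((clampCont a b).comp continuous_fst).prodMk continuous_snd
    refine Continuous.if_le (H₁.comp hmap) ((H₂.comp hmap).add continuous_const)
      continuous_snd continuous_const ?_
    intro p hp
    have := hqy (max a (min b p.1)) (clampMem hab _)
    rw [hp]
    exact this
  · intro p hp
    have hcl : max a (min b p.1) = p.1 := clampEq hp.1
    dsimp only
    rw [hcl]
    by_cases hle : p.2 ≤ m
    · rw [if_pos hle]
      exact e₁ (p.1, p.2) ⟨hp.1, ⟨hp.2.1, hle⟩⟩
    · rw [if_neg hle]
      rw [Complex.exp_add, hδ1, mul_one]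
      exact e₂ (p.1, p.2) ⟨hp.1, ⟨le_of_not_ge hle, hp.2.2⟩⟩
private lemma rectLift {g : ℝ × ℝ → ℂ} (hg : Continuous g) (hgne : ∀ p, g p ≠ 0)
    (a b c d : ℝ) :
    ∃ h : ℝ × ℝ → ℂ, Continuous h ∧ ∀ p ∈ Icc a b ×ˢ Icc c d, Complex.exp (h p) = g p := by
  by_cases hab : a ≤ b
  swap
  · exact ⟨0, continuous_const, fun p hp => by
      rw [Set.Icc_eq_empty hab] at hp; exact absurd hp.1 (Set.notMem_empty _)⟩
  by_cases hcd : c ≤ d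
  swap
  · exact ⟨0, continuous_const, fun p hp => by
      rw [Set.Icc_eq_empty hcd] at hp; exact absurd hp.2 (Set.notMem_empty _)⟩
  set R : Set (ℝ × ℝ) := Icc a b ×ˢ Icc c d with hRdef
  have hK : IsCompact R := isCompact_Icc.prod isCompact_Icc
  have hRne : R.Nonempty := ⟨(a, c), ⟨⟨le_refl a, hab⟩, ⟨le_refl c, hcd⟩⟩⟩
  obtain ⟨p₀, hp₀, hmin'⟩ := hK.exists_isMinOn hRne ((continuous_norm.comp hg).continuousOn)
  have hmin : ∀ q ∈ R, ‖g p₀‖ ≤ ‖g q‖ := fun q hq => hmin' hq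
  set ε : ℝ := ‖g p₀‖ with hεdef
  have hε : 0 < ε := by
    rw [hεdef]; simpa using hgne p₀
  have huc := hK.uniformContinuousOn_of_continuous hg.continuousOn
  rw [Metric.uniformContinuousOn_iff] at huc
  obtain ⟨δ, hδ, hucd⟩ := huc ε hε
  obtain ⟨n, hn⟩ := exists_nat_gt (max (b - a) (d - c) / δ)
  have hmaxnn : 0 ≤ max (b - a) (d - c) := le_max_of_le_left (by linarith)
  have hnpos : 0 < (n : ℝ) := lt_of_le_of_lt (by positivity) hn
  have hn0 : (n : ℝ) ≠ 0 := ne_of_gt hnpos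
  have hbn : (b - a) / n < δ := by
    rw [div_lt_iff₀ hnpos]
    have h1 : (b - a) ≤ max (b - a) (d - c) := le_max_left _ _
    have h2 : max (b - a) (d - c) < n * δ := by
      rw [div_lt_iff₀ hδ] at hn; linarith
    linarith
  have hdn : (d - c) / n < δ := by
    rw [div_lt_iff₀ hnpos]
    have h1 : (d - c) ≤ max (b - a) (d - c) := le_max_right _ _
    have h2 : max (b - a) (d - c) < n * δ := by
      rw [div_lt_iff₀ hδ] at hn; linarith
    linarith
  set x : ℕ → ℝ := fun i => a + i * ((b - a) / n) with hxdef
  set y : ℕ → ℝ := fun j => c + j * ((d - c) / n) with hydef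
  have hbasn : 0 ≤ (b - a) / n := by
    apply div_nonneg <;> linarith
  have hdcsn : 0 ≤ (d - c) / n := by
    apply div_nonneg <;> linarith
  have hxmono : ∀ i j : ℕ, i ≤ j → x i ≤ x j := by
    intro i j hij
    have : (i : ℝ) ≤ j := by exact_mod_cast hij
    simp only [hxdef]
    nlinarith
  have hymono : ∀ i j : ℕ, i ≤ j → y i ≤ y j := by
    intro i j hij
    have : (i : ℝ) ≤ j := by exact_mod_cast hij
    simp only [hydef]
    nlinarith
  have hxle : ∀ i : ℕ, x i ≤ x (i + 1) := fun i => hxmono i (i + 1) (Nat.le_succ i)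
  have hyle : ∀ j : ℕ, y j ≤ y (j + 1) := fun j => hymono j (j + 1) (Nat.le_succ j)
  have hx0 : x 0 = a := by simp [hxdef]
  have hy0 : y 0 = c := by simp [hydef]
  have hxn : x n = b := by
    simp only [hxdef]; field_simp; ring
  have hyn : y n = d := by
    simp only [hydef]; field_simp; ring
  have hxmem : ∀ i : ℕ, i ≤ n → x i ∈ Icc a b := by
    intro i hi
    constructor
    · rw [← hx0]; exact hxmono 0 i (Nat.zero_le i)
    · rw [← hxn]; exact hxmono i n hi
  have hymem : ∀ j : ℕ, j ≤ n → y j ∈ Icc c d := by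
    intro j hj
    constructor
    · rw [← hy0]; exact hymono 0 j (Nat.zero_le j)
    · rw [← hyn]; exact hymono j n hj
  have hxstep : ∀ i : ℕ, x (i + 1) - x i = (b - a) / n := by
    intro i; simp only [hxdef]; push_cast; ring
  have hystep : ∀ j : ℕ, y (j + 1) - y j = (d - c) / n := by
    intro j; simp only [hydef]; push_cast; ring
  -- local piece lemma
  have locOn : ∀ a' b' c' d' : ℝ, a ≤ a' → a' ≤ b' → b' ≤ b → c ≤ c' → c' ≤ d' → d' ≤ d →
      b' - a' < δ → d' - c' < δ →
      ∃ h : ℝ × ℝ → ℂ, Continuous h ∧ ∀ p ∈ Icc a' b' ×ˢ Icc c' d', Complex.exp (h p) = g p := by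
    intro a' b' c' d' h1 h2 h3 h4 h5 h6 h7 h8
    apply locLift hg h2 h5
    intro p hp
    have hpR : p ∈ R := ⟨⟨le_trans h1 hp.1.1, le_trans hp.1.2 h3⟩,
      ⟨le_trans h4 hp.2.1, le_trans hp.2.2 h6⟩⟩
    have hqR : ((a' : ℝ), (c' : ℝ)) ∈ R := ⟨⟨h1, le_trans h2 h3⟩, ⟨h4, le_trans h5 h6⟩⟩
    have hdist : dist p ((a' : ℝ), (c' : ℝ)) < δ := by
      rw [Prod.dist_eq]
      apply max_lt
      · rw [Real.dist_eq, abs_lt]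
        constructor <;> [linarith [hp.1.1, hp.1.2]; linarith [hp.1.1, hp.1.2]]
      · rw [Real.dist_eq, abs_lt]
        constructor <;> [linarith [hp.2.1, hp.2.2]; linarith [hp.2.1, hp.2.2]]
    have := hucd p hpR ((a' : ℝ), (c' : ℝ)) hqR hdist
    rw [Complex.dist_eq] at this
    exact lt_of_lt_of_le this (hmin _ hqR)
  -- column lemma
  have column : ∀ i : ℕ, i < n → ∀ j : ℕ, j ≤ n →
      ∃ h : ℝ × ℝ → ℂ, Continuous h ∧
        ∀ p ∈ Icc (x i) (x (i + 1)) ×ˢ Icc c (y j), Complex.exp (h p) = g p := by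
    intro i hi
    intro j
    induction j with
    | zero =>
      intro _
      rw [hy0]
      exact locOn (x i) (x (i+1)) c c (hxmem i (le_of_lt hi)).1
        (hxle i) (hxmem (i+1) hi).2 (le_refl c) (le_refl c) hcd
        (by rw [hxstep i]; exact hbn) (by linarith)
    | succ j ih =>
      intro hj1
      have hj : j ≤ n := le_of_lt (Nat.lt_of_succ_le hj1)
      obtain ⟨h₁, H₁, e₁⟩ := ih hj
      obtain ⟨h₂, H₂, e₂⟩ := locOn (x i) (x (i+1)) (y j) (y (j+1))
        (hxmem i (le_of_lt hi)).1 (hxle i) (hxmem (i+1) hi).2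
        (hymem j hj).1 (hyle j) (hymem (j+1) hj1).2
        (by rw [hxstep i]; exact hbn) (by rw [hystep j]; exact hdn)
      exact glueH (hxle i) (hymem j hj).1 (hyle j) H₁ e₁ H₂ e₂
  -- row assembly
  have rows : ∀ k : ℕ, k < n →
      ∃ h : ℝ × ℝ → ℂ, Continuous h ∧
        ∀ p ∈ Icc a (x (k + 1)) ×ˢ Icc c d, Complex.exp (h p) = g p := by
    intro k
    induction k with
    | zero =>
      intro hk
      obtain ⟨h, H, e⟩ := column 0 hk n (le_refl n)
      rw [hx0, hyn] at e
      exact ⟨h, H, e⟩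
    | succ k ih =>
      intro hk1
      have hk : k < n := Nat.lt_of_succ_lt hk1
      obtain ⟨h₁, H₁, e₁⟩ := ih hk
      obtain ⟨h₂, H₂, e₂⟩ := column (k + 1) hk1 n (le_refl n)
      rw [hyn] at e₂
      have ham : a ≤ x (k + 1) := (hxmem (k+1) (le_of_lt hk1)).1
      exact glueV ham (hxle (k+1)) hcd H₁ e₁ H₂ e₂
  -- conclude
  have hnn : 0 < n := by exact_mod_cast hnpos
  obtain ⟨m, rfl⟩ : ∃ m, n = m + 1 := ⟨n - 1, (Nat.succ_pred_eq_of_pos hnn).symm⟩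
  obtain ⟨h, H, e⟩ := rows m (Nat.lt_succ_self m)
  rw [hxn] at e
  exact ⟨h, H, e⟩

end

theorem stmt13 (γ₁ γ₂ : unitInterval → (Fin 2 → ℝ))
    (hc₁ : Continuous γ₁) (hc₂ : Continuous γ₂)
    (hi₁ : Function.Injective γ₁) (hi₂ : Function.Injective γ₂)
    (hr₁ : Set.range γ₁ ⊆ unitCube 2) (hr₂ : Set.range γ₂ ⊆ unitCube 2)
    (h₁0 : γ₁ 0 ∈ face 2 0 0) (h₁1 : γ₁ 1 ∈ face 2 0 1)
    (h₂0 : γ₂ 0 ∈ face 2 1 0) (h₂1 : γ₂ 1 ∈ face 2 1 1) :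
    (Set.range γ₁ ∩ Set.range γ₂).Nonempty := by
  by_contra hcon
  rw [Set.not_nonempty_iff_eq_empty] at hcon
  have hdisj : ∀ τ σ : unitInterval, γ₁ τ ≠ γ₂ σ := by
    intro τ σ he
    have : γ₁ τ ∈ (Set.range γ₁ ∩ Set.range γ₂) := ⟨⟨τ, rfl⟩, ⟨σ, he.symm⟩⟩
    rw [hcon] at this
    exact this
  set pr : ℝ → unitInterval := fun t => Set.projIcc 0 1 zero_le_one t with hprdef
  have hprc : Continuous pr := continuous_projIcc
  have hpr0 : pr 0 = 0 := by rw [hprdef]; simp only; rw [Set.projIcc_left]; rfl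
  have hpr1 : pr 1 = 1 := by rw [hprdef]; simp only; rw [Set.projIcc_right]; rfl
  set x₁ : ℝ → ℝ := fun t => γ₁ (pr t) 0 with hx₁def
  set y₁ : ℝ → ℝ := fun t => γ₁ (pr t) 1 with hy₁def
  set x₂ : ℝ → ℝ := fun s => γ₂ (pr s) 0 with hx₂def
  set y₂ : ℝ → ℝ := fun s => γ₂ (pr s) 1 with hy₂def
  have hcx₁ : Continuous x₁ := (continuous_apply (0 : Fin 2)).comp (hc₁.comp hprc)
  have hcy₁ : Continuous y₁ := (continuous_apply (1 : Fin 2)).comp (hc₁.comp hprc)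
  have hcx₂ : Continuous x₂ := (continuous_apply (0 : Fin 2)).comp (hc₂.comp hprc)
  have hcy₂ : Continuous y₂ := (continuous_apply (1 : Fin 2)).comp (hc₂.comp hprc)
  have hbd : ∀ (γ : unitInterval → Fin 2 → ℝ), Set.range γ ⊆ unitCube 2 →
      ∀ (τ : unitInterval) (i : Fin 2), γ τ i ∈ Icc (0:ℝ) 1 := by
    intro γ hr τ i
    have h' := hr ⟨τ, rfl⟩
    simp only [unitCube, Set.mem_Icc] at h'
    exact ⟨h'.1 i, h'.2 i⟩
  have hx₁b : ∀ t : ℝ, x₁ t ∈ Icc (0:ℝ) 1 := fun t => hbd γ₁ hr₁ (pr t) 0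
  have hy₁b : ∀ t : ℝ, y₁ t ∈ Icc (0:ℝ) 1 := fun t => hbd γ₁ hr₁ (pr t) 1
  have hx₂b : ∀ s : ℝ, x₂ s ∈ Icc (0:ℝ) 1 := fun s => hbd γ₂ hr₂ (pr s) 0
  have hy₂b : ∀ s : ℝ, y₂ s ∈ Icc (0:ℝ) 1 := fun s => hbd γ₂ hr₂ (pr s) 1
  have hx₁0 : x₁ 0 = 0 := by rw [hx₁def]; simp only; rw [hpr0]; exact h₁0.2
  have hx₁1 : x₁ 1 = 1 := by rw [hx₁def]; simp only; rw [hpr1]; exact h₁1.2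
  have hy₂0 : y₂ 0 = 0 := by rw [hy₂def]; simp only; rw [hpr0]; exact h₂0.2
  have hy₂1 : y₂ 1 = 1 := by rw [hy₂def]; simp only; rw [hpr1]; exact h₂1.2
  -- the never-vanishing difference map
  set G : ℝ × ℝ → ℂ := fun p =>
    ((x₂ p.2 - x₁ p.1 : ℝ) : ℂ) + ((y₁ p.1 - y₂ p.2 : ℝ) : ℂ) * Complex.I with hGdef
  have hGre : ∀ p, (G p).re = x₂ p.2 - x₁ p.1 := by
    intro p; rw [hGdef]; simp
  have hGim : ∀ p, (G p).im = y₁ p.1 - y₂ p.2 := by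
    intro p; rw [hGdef]; simp
  have hGc : Continuous G := by
    rw [hGdef]
    exact (Complex.continuous_ofReal.comp ((hcx₂.comp continuous_snd).sub
        (hcx₁.comp continuous_fst))).add
      ((Complex.continuous_ofReal.comp ((hcy₁.comp continuous_fst).sub
        (hcy₂.comp continuous_snd))).mul continuous_const)
  have hGne : ∀ p, G p ≠ 0 := by
    intro p h0
    apply hdisj (pr p.1) (pr p.2)
    have hre := congrArg Complex.re h0
    have him := congrArg Complex.im h0
    rw [hGre] at hre
    rw [hGim] at him
    simp only [Complex.zero_re, Complex.zero_im] at hre him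
    funext i
    fin_cases i
    · show x₁ p.1 = x₂ p.2
      linarith
    · show y₁ p.1 = y₂ p.2
      linarith
  -- the boundary loop of the parameter square
  set tφ : ℝ → ℝ := fun u => max 0 (min 1 (min (4*u) (3 - 4*u))) with htφdef
  set sφ : ℝ → ℝ := fun u => max 0 (min 1 (min (4*u - 1) (4 - 4*u))) with hsφdef
  have htφc : Continuous tφ := by
    rw [htφdef]; fun_prop
  have hsφc : Continuous sφ := by
    rw [hsφdef]; fun_prop
  have htφ01 : ∀ u, tφ u ∈ Icc (0:ℝ) 1 := fun u => clampMem zero_le_one _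
  have hsφ01 : ∀ u, sφ u ∈ Icc (0:ℝ) 1 := fun u => clampMem zero_le_one _
  have htφ0 : ∀ u : ℝ, u ≤ 0 ∨ 3/4 ≤ u → tφ u = 0 := by
    intro u hu
    rw [htφdef]
    simp only
    have hm : min (4*u) (3 - 4*u) ≤ 0 := by
      rcases hu with h | h
      · exact le_trans (min_le_left _ _) (by linarith)
      · exact le_trans (min_le_right _ _) (by linarith)
    rw [max_eq_left (le_trans (min_le_right _ _) hm)]
  have htφ1 : ∀ u : ℝ, 1/4 ≤ u → u ≤ 1/2 → tφ u = 1 := by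
    intro u h1 h2
    rw [htφdef]
    simp only
    rw [min_eq_left (le_min (by linarith) (by linarith)), max_eq_right zero_le_one]
  have hsφ0 : ∀ u : ℝ, u ≤ 1/4 ∨ 1 ≤ u → sφ u = 0 := by
    intro u hu
    rw [hsφdef]
    simp only
    have hm : min (4*u - 1) (4 - 4*u) ≤ 0 := by
      rcases hu with h | h
      · exact le_trans (min_le_left _ _) (by linarith)
      · exact le_trans (min_le_right _ _) (by linarith)
    rw [max_eq_left (le_trans (min_le_right _ _) hm)]
  have hsφ1 : ∀ u : ℝ, 1/2 ≤ u → u ≤ 3/4 → sφ u = 1 := by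
    intro u h1 h2
    rw [hsφdef]
    simp only
    rw [min_eq_left (le_min (by linarith) (by linarith)), max_eq_right zero_le_one]
  set P : ℝ → ℝ × ℝ := fun u => (tφ u, sφ u) with hPdef
  have hPc : Continuous P := htφc.prodMk hsφc
  have hPmem : ∀ u, P u ∈ Icc (0:ℝ) 1 ×ˢ Icc (0:ℝ) 1 := fun u => ⟨htφ01 u, hsφ01 u⟩
  have hP0 : P 0 = (0, 0) := by
    rw [hPdef]; simp only
    rw [htφ0 0 (Or.inl le_rfl), hsφ0 0 (Or.inl (by norm_num))]
  have hP1 : P 1 = (0, 0) := by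
    rw [hPdef]; simp only
    rw [htφ0 1 (Or.inr (by norm_num)), hsφ0 1 (Or.inr le_rfl)]
  -- the circle loop
  set e : ℝ → ℂ := fun u => Complex.exp (((2*π*u : ℝ) : ℂ) * Complex.I) with hedef
  have hec : Continuous e := by
    rw [hedef]
    exact Complex.continuous_exp.comp
      ((Complex.continuous_ofReal.comp (by fun_prop)).mul continuous_const)
  have here : ∀ u, (e u).re = Real.cos (2*π*u) := by
    intro u; rw [hedef]; exact Complex.exp_ofReal_mul_I_re _
  have heim : ∀ u, (e u).im = Real.sin (2*π*u) := by
    intro u; rw [hedef]; exact Complex.exp_ofReal_mul_I_im _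
  have he0 : e 0 = 1 := by rw [hedef]; norm_num
  have he1 : e 1 = 1 := by
    rw [hedef]
    simp only
    rw [show (((2*π*1 : ℝ) : ℂ) * Complex.I) = 2*(π:ℂ)*Complex.I by push_cast; ring]
    exact Complex.exp_two_pi_mul_I
  have hene : ∀ u, e u ≠ 0 := fun u => Complex.exp_ne_zero _
  -- the key nonvanishing property
  have key : ∀ c ∈ Icc (0:ℝ) 1, ∀ u ∈ Icc (0:ℝ) 1,
      ((1 - c : ℝ) : ℂ) * G (P u) + ((c : ℝ) : ℂ) * e u ≠ 0 := by
    intro c hc u hu h0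
    have hre : (1-c) * (G (P u)).re + c * (e u).re = 0 := by
      have := congrArg Complex.re h0
      simpa [Complex.add_re, Complex.mul_re] using this
    have him : (1-c) * (G (P u)).im + c * (e u).im = 0 := by
      have := congrArg Complex.im h0
      simpa [Complex.add_im, Complex.mul_im] using this
    rcases eq_or_lt_of_le hc.1 with hc0 | hc0
    · rw [← hc0] at h0
      push_cast at h0
      simp only [sub_zero, one_mul, zero_mul, add_zero] at h0
      exact hGne (P u) h0
    have hc1 : 1 - c ≥ 0 := by linarith [hc.2]
    have hGreP : (G (P u)).re = x₂ (sφ u) - x₁ (tφ u) := hGre (P u)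
    have hGimP : (G (P u)).im = y₁ (tφ u) - y₂ (sφ u) := hGim (P u)
    have hpi := Real.pi_pos
    rcases le_or_gt u (1/4 : ℝ) with h14 | h14
    · rcases eq_or_lt_of_le hu.1 with hu0 | hu0
      · -- u = 0
        have hu0' : u ≤ 0 := le_of_eq hu0.symm
        rw [htφ0 u (Or.inl hu0'), hx₁0] at hGreP
        have hcos : Real.cos (2*π*u) = 1 := by rw [← hu0]; norm_num
        rw [here, hcos] at hre
        nlinarith [mul_nonneg hc1 (by rw [hGreP]; linarith [(hx₂b (sφ u)).1] :
          (0:ℝ) ≤ (G (P u)).re), hc0]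
      · -- 0 < u ≤ 1/4
        rw [hsφ0 u (Or.inl h14), hy₂0] at hGimP
        have hsin : 0 < Real.sin (2*π*u) := by
          apply Real.sin_pos_of_pos_of_lt_pi
          · have := mul_pos hpi (show (0:ℝ) < 2*u by linarith)
            linarith
          · have := mul_lt_mul_of_pos_left (show 2*u < 1 by linarith) hpi
            linarith
        rw [heim] at him
        nlinarith [mul_nonneg hc1 (by rw [hGimP]; linarith [(hy₁b (tφ u)).1] : (0:ℝ) ≤ (G (P u)).im),
          mul_pos hc0 hsin]
    · rcases le_or_gt u (1/2 : ℝ) with h12 | h12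
      · -- 1/4 < u ≤ 1/2
        rw [htφ1 u (le_of_lt h14) h12, hx₁1] at hGreP
        have hcos : Real.cos (2*π*u) < 0 := by
          apply Real.cos_neg_of_pi_div_two_lt_of_lt
          · have := mul_lt_mul_of_pos_left (show (1/2:ℝ) < 2*u by linarith) hpi
            linarith
          · have := mul_lt_mul_of_pos_left (show 2*u < 3/2 by linarith) hpi
            linarith
        rw [here] at hre
        nlinarith [mul_nonneg hc1 (by rw [hGreP]; linarith [(hx₂b (sφ u)).2] : (0:ℝ) ≤ -(G (P u)).re),
          mul_pos hc0 (neg_pos.mpr hcos)]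
      · rcases le_or_gt u (3/4 : ℝ) with h34 | h34
        · -- 1/2 < u ≤ 3/4
          rw [hsφ1 u (le_of_lt h12) h34, hy₂1] at hGimP
          have hsin : Real.sin (2*π*u) < 0 := by
            have h' : Real.sin (2*π*u - π + π) = -Real.sin (2*π*u - π) := Real.sin_add_pi _
            rw [show 2*π*u - π + π = 2*π*u by ring] at h'
            rw [h']
            have : 0 < Real.sin (2*π*u - π) := by
              apply Real.sin_pos_of_pos_of_lt_pi
              · have := mul_pos hpi (show (0:ℝ) < 2*u - 1 by linarith)
                nlinarith
              · have := mul_lt_mul_of_pos_left (show 2*u - 1 < 1 by linarith) hpi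
                nlinarith
            linarith
          rw [heim] at him
          nlinarith [mul_nonneg hc1 (by rw [hGimP]; linarith [(hy₁b (tφ u)).2] : (0:ℝ) ≤ -(G (P u)).im),
            mul_pos hc0 (neg_pos.mpr hsin)]
        · -- 3/4 < u ≤ 1
          rw [htφ0 u (Or.inr (le_of_lt h34)), hx₁0] at hGreP
          have hcos : 0 < Real.cos (2*π*u) := by
            rw [← Real.cos_sub_two_pi]
            apply Real.cos_pos_of_mem_Ioo
            constructor
            · have := mul_lt_mul_of_pos_left (show (3/2:ℝ) < 2*u by linarith) hpi
              linarith
            · have := mul_le_mul_of_nonneg_left (show 2*u ≤ 2 by linarith [hu.2]) (le_of_lt hpi)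
              linarith
          rw [here] at hre
          nlinarith [mul_nonneg hc1 (by rw [hGreP]; linarith [(hx₂b (sφ u)).1] : (0:ℝ) ≤ (G (P u)).re),
            mul_pos hc0 hcos]
    -- algebraic simplifications
  have hsimp0 : ∀ z z' : ℂ, ((1 - (0:ℝ) : ℝ) : ℂ) * z + (((0:ℝ) : ℝ) : ℂ) * z' = z := by
    intro z z'; norm_num
  have hsimp1 : ∀ z z' : ℂ, ((1 - (1:ℝ) : ℝ) : ℂ) * z + (((1:ℝ) : ℝ) : ℂ) * z' = z' := by
    intro z z'; norm_num
  -- the homotopy map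
  set L : ℝ × ℝ → ℂ := fun q =>
    ((1 - max 0 (min 1 q.1) : ℝ) : ℂ) * G (P (max 0 (min 1 q.2))) +
      ((max 0 (min 1 q.1) : ℝ) : ℂ) * e (max 0 (min 1 q.2)) with hLdef
  have hLc : Continuous L := by
    rw [hLdef]
    apply Continuous.add
    · exact (Complex.continuous_ofReal.comp
        (continuous_const.sub ((clampCont 0 1).comp continuous_fst))).mul
        (hGc.comp (hPc.comp ((clampCont 0 1).comp continuous_snd)))
    · exact (Complex.continuous_ofReal.comp ((clampCont 0 1).comp continuous_fst)).mul
        (hec.comp ((clampCont 0 1).comp continuous_snd))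
  have hLne : ∀ q, L q ≠ 0 := by
    intro q
    rw [hLdef]
    exact key _ (clampMem zero_le_one _) _ (clampMem zero_le_one _)
  have hLeq : ∀ c ∈ Icc (0:ℝ) 1, ∀ u ∈ Icc (0:ℝ) 1,
      L (c, u) = ((1 - c : ℝ) : ℂ) * G (P u) + ((c : ℝ) : ℂ) * e u := by
    intro c hc u hu
    rw [hLdef]
    simp only
    rw [clampEq hc, clampEq hu]
  obtain ⟨hL, HL, eL⟩ := rectLift hLc hLne 0 1 0 1
  obtain ⟨hG2, HG2, eG2⟩ := rectLift hGc hGne 0 1 0 1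
  have h0m : (0:ℝ) ∈ Icc (0:ℝ) 1 := ⟨le_refl 0, zero_le_one⟩
  have h1m : (1:ℝ) ∈ Icc (0:ℝ) 1 := ⟨zero_le_one, le_refl 1⟩
  -- the winding difference
  set w : ℝ → ℂ := fun c => hL (c, 1) - hL (c, 0) with hwdef
  have hwc : Continuous w := by
    rw [hwdef]
    exact (HL.comp (continuous_id.prodMk continuous_const)).sub
      (HL.comp (continuous_id.prodMk continuous_const))
  have hLval10 : ∀ c ∈ Icc (0:ℝ) 1, L (c, 1) = L (c, 0) := by
    intro c hc
    rw [hLeq c hc 1 h1m, hLeq c hc 0 h0m, hP1, hP0, he1, he0]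
  have hw1lem : ∀ c ∈ Icc (0:ℝ) 1, Complex.exp (w c) = 1 := by
    intro c hc
    rw [hwdef]
    simp only
    rw [Complex.exp_sub, eL (c,1) ⟨hc, h1m⟩, eL (c,0) ⟨hc, h0m⟩, hLval10 c hc,
      div_self (hLne _)]
  have hwconst := expOneConst hwc hw1lem 0 h0m 1 h1m
  -- w 0 = 0
  have hq0c : Continuous fun u : ℝ => hL (0, u) - hG2 (P (max 0 (min 1 u))) :=
    (HL.comp (continuous_const.prodMk continuous_id)).sub
      (HG2.comp (hPc.comp (clampCont 0 1)))
  have hq0 : ∀ u ∈ Icc (0:ℝ) 1,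
      Complex.exp (hL (0, u) - hG2 (P (max 0 (min 1 u)))) = 1 := by
    intro u hu
    rw [clampEq hu, Complex.exp_sub, eL (0,u) ⟨h0m, hu⟩, eG2 (P u) (hPmem u),
      hLeq 0 h0m u hu, hsimp0, div_self (hGne _)]
  have hq0const := expOneConst hq0c hq0 0 h0m 1 h1m
  have hw0 : w 0 = 0 := by
    rw [clampEq h0m, clampEq h1m, hP0, hP1] at hq0const
    rw [hwdef]
    simp only
    linear_combination -hq0const
  -- w 1 = 2 π I
  have hq1c : Continuous fun u : ℝ =>
      hL (1, u) - (((2*π*(max 0 (min 1 u)) : ℝ) : ℂ) * Complex.I) :=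
    (HL.comp (continuous_const.prodMk continuous_id)).sub
      ((Complex.continuous_ofReal.comp (continuous_const.mul (clampCont 0 1))).mul
        continuous_const)
  have hq1 : ∀ u ∈ Icc (0:ℝ) 1,
      Complex.exp (hL (1, u) - (((2*π*(max 0 (min 1 u)) : ℝ) : ℂ) * Complex.I)) = 1 := by
    intro u hu
    rw [clampEq hu, Complex.exp_sub, eL (1,u) ⟨h1m, hu⟩, hLeq 1 h1m u hu, hsimp1, hedef]
    simp only
    rw [div_self (Complex.exp_ne_zero _)]
  have hq1const := expOneConst hq1c hq1 0 h0m 1 h1m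
  have hw1 : w 1 = ((2*π : ℝ) : ℂ) * Complex.I := by
    rw [clampEq h0m, clampEq h1m] at hq1const
    rw [hwdef]
    simp only
    have h2 : ((2*π*(0:ℝ) : ℝ) : ℂ) = 0 := by push_cast; ring
    have h3 : ((2*π*(1:ℝ) : ℝ) : ℂ) = ((2*π : ℝ) : ℂ) := by push_cast; ring
    rw [h2, h3] at hq1const
    linear_combination -hq1const
  -- contradiction
  rw [hw0, hw1] at hwconst
  have him := congrArg Complex.im hwconst
  simp only [Complex.zero_im, Complex.mul_im, Complex.ofReal_re, Complex.ofReal_im,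
    Complex.I_re, Complex.I_im] at him
  have : (2*π : ℝ) = 0 := by linarith
  have := Real.pi_pos
  linarith
end
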